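/- arXiv:1503.01207 — 5 statements merged into one kernel-verified Lean document; each statement's English description precedes it below -/
import Mathlib

section
/- Let G be a finite abelian group with dual group Ĝ. Then the convex hull (in ℂ^{Ĝ} viewed as a real vector space) of the set {(χ(x))_{χ∈Ĝ} : x ∈ G} equals the set {ℓ ∈ ℂ^{Ĝ} : ℓ_{1_Ĝ} = 1 and the matrix M(ℓ) = [ℓ_{χ⁻¹χ'}]_{χ,χ'∈Ĝ} is Hermitian positive semidefinite}. -/
open scoped Classical ComplexOrder
open Matrix

/-- The dual group of a finite abelian group is finite. -/
noncomputable instance dualFintype (G : Type*) [CommGroup G] [Fintype G] :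
    Fintype (G →* ℂˣ) := by
  haveI : NeZero ((Monoid.exponent G : ℂ)) :=
    ⟨by exact_mod_cast Monoid.exponent_ne_zero_of_finite⟩
  exact Fintype.ofEquiv G
    (CommGroup.monoidHom_mulEquiv_of_hasEnoughRootsOfUnity G ℂ).some.symm.toEquiv

section Aux

variable {G : Type*} [CommGroup G] [Fintype G]

lemma char_norm_one (χ : G →* ℂˣ) (x : G) : ‖((χ x : ℂˣ) : ℂ)‖ = 1 := by
  refine Complex.norm_eq_one_of_pow_eq_one (n := Fintype.card G) ?_ Fintype.card_ne_zero
  have : χ (x ^ Fintype.card G) = 1 := by rw [pow_card_eq_one, _root_.map_one]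
  have := congrArg (Units.val) this
  push_cast [_root_.map_pow] at this
  simpa using this

lemma char_conj (χ : G →* ℂˣ) (x : G) :
    (starRingEnd ℂ) ((χ x : ℂˣ) : ℂ) = ((χ⁻¹ x : ℂˣ) : ℂ) := by
  have h : ((χ⁻¹ x : ℂˣ) : ℂ) = (((χ x : ℂˣ) : ℂ))⁻¹ := by
    simp [MonoidHom.inv_apply]
  rw [h, Complex.inv_eq_conj (char_norm_one χ x)]

lemma char_conj' (χ : G →* ℂˣ) (x : G) :
    (starRingEnd ℂ) ((χ⁻¹ x : ℂˣ) : ℂ) = ((χ x : ℂˣ) : ℂ) := by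
  rw [char_conj]
  exact congrArg (fun (ψ : G →* ℂˣ) => ((ψ x : ℂˣ) : ℂ)) (inv_inv χ)

lemma char_sum_eq_zero {χ : G →* ℂˣ} (h : χ ≠ 1) :
    ∑ x : G, ((χ x : ℂˣ) : ℂ) = 0 := by
  obtain ⟨y, hy⟩ : ∃ y : G, χ y ≠ 1 := by
    by_contra hc
    push_neg at hc
    exact h (MonoidHom.ext fun g => hc g)
  have key : ((χ y : ℂˣ) : ℂ) * ∑ x : G, ((χ x : ℂˣ) : ℂ) = ∑ x : G, ((χ x : ℂˣ) : ℂ) := by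
    rw [Finset.mul_sum]
    exact Fintype.sum_equiv (Equiv.mulLeft y) _ _ (fun x => by
      simp [_root_.map_mul])
  have hne : ((χ y : ℂˣ) : ℂ) ≠ 1 := by
    simpa using fun hh => hy (Units.ext hh)
  have := sub_eq_zero.mpr key
  have h2 : (((χ y : ℂˣ) : ℂ) - 1) * ∑ x : G, ((χ x : ℂˣ) : ℂ) = 0 := by ring_nf; linear_combination this
  rcases mul_eq_zero.mp h2 with h3 | h3
  · exact absurd (sub_eq_zero.mp h3) hne
  · exact h3

end Aux

/-- **Bochner-type description of the full moment polytope.** The convex hull (in `ℂ^Ĝ`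
viewed as a real vector space) of the vectors `(χ(x))_{χ ∈ Ĝ}`, for `x ∈ G`, equals the
set of `ℓ ∈ ℂ^Ĝ` with `ℓ(1) = 1` whose moment matrix `[ℓ(χ⁻¹χ')]_{χ,χ'}` is Hermitian
positive semidefinite. -/
theorem moment_polytope_full
    (G : Type*) [CommGroup G] [Fintype G] :
    convexHull ℝ {ℓ : (G →* ℂˣ) → ℂ | ∃ x : G, ℓ = fun χ => ((χ x : ℂˣ) : ℂ)} =
    {ℓ : (G →* ℂˣ) → ℂ | ℓ 1 = 1 ∧
      (Matrix.of fun χ χ' : G →* ℂˣ => ℓ (χ⁻¹ * χ')).PosSemidef} := by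
  apply le_antisymm
  · -- convex hull ⊆ Bochner set
    apply convexHull_min
    · rintro ℓ ⟨x, rfl⟩
      refine ⟨by simp, ?_⟩
      set A : Matrix Unit (G →* ℂˣ) ℂ :=
        Matrix.of fun (_ : Unit) (χ : G →* ℂˣ) => ((χ x : ℂˣ) : ℂ) with hA
      have hM : (Matrix.of fun χ χ' : G →* ℂˣ => (((χ⁻¹ * χ') x : ℂˣ) : ℂ)) =
          A.conjTranspose * A := by
        ext χ χ'
        simp only [Matrix.mul_apply, Matrix.conjTranspose_apply, Matrix.of_apply,
          Finset.univ_unique, Finset.sum_singleton]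
        rw [hA]
        simp only [Matrix.of_apply]
        rw [Complex.star_def, char_conj]
        simp [MonoidHom.mul_apply]
      rw [hM]
      exact Matrix.posSemidef_conjTranspose_mul_self _
    · -- convexity
      rintro ℓ₁ ⟨h₁, hM₁⟩ ℓ₂ ⟨h₂, hM₂⟩ a b ha hb hab
      constructor
      · simp only [Pi.add_apply, Pi.smul_apply, h₁, h₂, smul_eq_mul]
        push_cast
        simp only [Complex.real_smul, h₁, h₂, mul_one]
        exact_mod_cast congrArg (Complex.ofReal) hab
      · have hEq : (Matrix.of fun χ χ' : G →* ℂˣ => (a • ℓ₁ + b • ℓ₂) (χ⁻¹ * χ')) =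
            (a : ℂ) • (Matrix.of fun χ χ' : G →* ℂˣ => ℓ₁ (χ⁻¹ * χ')) +
            (b : ℂ) • (Matrix.of fun χ χ' : G →* ℂˣ => ℓ₂ (χ⁻¹ * χ')) := by
          ext χ χ'
          simp [Complex.real_smul]
        rw [hEq]
        have smulPSD : ∀ (c : ℝ), 0 ≤ c → ∀ (M : Matrix (G →* ℂˣ) (G →* ℂˣ) ℂ),
            M.PosSemidef → ((c : ℂ) • M).PosSemidef := by
          intro c hc M hMp
          refine Matrix.PosSemidef.of_dotProduct_mulVec_nonneg ?_ ?_
          · unfold Matrix.IsHermitian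
            rw [Matrix.conjTranspose_smul, hMp.1.eq]
            congr 1
            simp
          · intro v
            rw [Matrix.smul_mulVec, dotProduct_smul]
            have h0 : (0:ℂ) ≤ (c:ℂ) := by exact_mod_cast Complex.zero_le_real.mpr hc
            simpa [smul_eq_mul] using mul_nonneg h0 (hMp.dotProduct_mulVec_nonneg v)
        exact ((smulPSD a ha _ hM₁).add (smulPSD b hb _ hM₂))
  · -- Bochner set ⊆ convex hull
    rintro ℓ ⟨h1, hM⟩
    set S : G → ℂ := fun x => ∑ ψ : G →* ℂˣ, ℓ ψ * ((ψ⁻¹ x : ℂˣ) : ℂ) with hS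
    -- quadratic form computation
    have hQ : ∀ x : G, (0:ℂ) ≤ S x := by
      intro x
      set v : (G →* ℂˣ) → ℂ := fun χ => ((χ⁻¹ x : ℂˣ) : ℂ) with hv
      have hq := hM.dotProduct_mulVec_nonneg v
      have hcomp : dotProduct (star v)
          ((Matrix.of fun χ χ' : G →* ℂˣ => ℓ (χ⁻¹ * χ')) *ᵥ v) = (Fintype.card (G →* ℂˣ) : ℂ) * S x := by
        unfold dotProduct Matrix.mulVec
        simp only [Pi.star_apply, hv]
        calc ∑ χ : G →* ℂˣ, star ((χ⁻¹ x : ℂˣ) : ℂ) *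
              ∑ χ' : G →* ℂˣ, (Matrix.of fun χ χ' : G →* ℂˣ => ℓ (χ⁻¹ * χ')) χ χ' * ((χ'⁻¹ x : ℂˣ) : ℂ)
            = ∑ χ : G →* ℂˣ, S x := by
              refine Finset.sum_congr rfl fun χ _ => ?_
              rw [Complex.star_def, char_conj']
              rw [show (∑ χ' : G →* ℂˣ, (Matrix.of fun χ χ' : G →* ℂˣ => ℓ (χ⁻¹ * χ')) χ χ' *
                  ((χ'⁻¹ x : ℂˣ) : ℂ)) =
                  ∑ ψ : G →* ℂˣ, ℓ ψ * (((ψ⁻¹ x : ℂˣ) : ℂ) * ((χ⁻¹ x : ℂˣ) : ℂ)) from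
                (Fintype.sum_equiv (Equiv.mulLeft χ) _ _ (fun ψ => by
                  simp only [Equiv.coe_mulLeft, Matrix.of_apply]
                  rw [inv_mul_cancel_left χ ψ, mul_inv_rev χ ψ]
                  rw [MonoidHom.mul_apply, Units.val_mul])).symm]
              rw [Finset.mul_sum]
              simp only [hS]
              refine Finset.sum_congr rfl fun ψ _ => ?_
              have : ((χ x : ℂˣ) : ℂ) * ((χ⁻¹ x : ℂˣ) : ℂ) = 1 := by
                have : ((χ * χ⁻¹) x : ℂˣ) = 1 := by simp
                have := congrArg Units.val this
                push_cast [MonoidHom.mul_apply] at this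
                simpa using this
              calc ((χ x : ℂˣ) : ℂ) * (ℓ ψ * (((ψ⁻¹ x : ℂˣ) : ℂ) * ((χ⁻¹ x : ℂˣ) : ℂ)))
                  = (((χ x : ℂˣ) : ℂ) * ((χ⁻¹ x : ℂˣ) : ℂ)) * (ℓ ψ * ((ψ⁻¹ x : ℂˣ) : ℂ)) := by
                    ring
                _ = ℓ ψ * ((ψ⁻¹ x : ℂˣ) : ℂ) := by rw [this, one_mul]
          _ = (Fintype.card (G →* ℂˣ) : ℂ) * S x := by
              rw [Finset.sum_const, Finset.card_univ, nsmul_eq_mul]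
      rw [hcomp] at hq
      have hNinv : (0:ℂ) ≤ Complex.ofReal ((Fintype.card (G →* ℂˣ) : ℝ)⁻¹) := by
        rw [Complex.zero_le_real]
        positivity
      have hNe : ((Fintype.card (G →* ℂˣ) : ℝ)) ≠ 0 := by
        exact_mod_cast Fintype.card_ne_zero
      have hfin : S x = Complex.ofReal ((Fintype.card (G →* ℂˣ) : ℝ)⁻¹) *
          ((Fintype.card (G →* ℂˣ) : ℂ) * S x) := by
        push_cast
        rw [← mul_assoc, inv_mul_cancel₀ (by exact_mod_cast hNe), one_mul]
      rw [hfin]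
      exact mul_nonneg hNinv hq
    -- S x is a nonnegative real
    have hSre : ∀ x : G, S x = ((S x).re : ℂ) := fun x => by
      have := (Complex.le_def.mp (hQ x)).2
      exact Complex.ext rfl (by simpa using this.symm)
    have hSnonneg : ∀ x : G, 0 ≤ (S x).re := fun x => by
      simpa using (Complex.le_def.mp (hQ x)).1
    -- reconstruction: ∑_x S x * χ₀ x = card G * ℓ χ₀
    have hrec : ∀ χ₀ : G →* ℂˣ, ∑ x : G, S x * ((χ₀ x : ℂˣ) : ℂ) = (Fintype.card G : ℂ) * ℓ χ₀ := by
      intro χ₀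
      have step : ∑ x : G, S x * ((χ₀ x : ℂˣ) : ℂ)
          = ∑ ψ : G →* ℂˣ, ℓ ψ * ∑ x : G, (((ψ⁻¹ * χ₀) x : ℂˣ) : ℂ) := by
        simp only [hS, Finset.sum_mul, Finset.mul_sum]
        rw [Finset.sum_comm]
        refine Finset.sum_congr rfl fun ψ _ => Finset.sum_congr rfl fun x _ => ?_
        push_cast [MonoidHom.mul_apply]
        ring
      rw [step, Finset.sum_eq_single χ₀]
      · rw [show ∑ x : G, (((χ₀⁻¹ * χ₀) x : ℂˣ) : ℂ) = (Fintype.card G : ℂ) by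
          simp [inv_mul_cancel]]
        ring
      · intro ψ _ hne
        rw [char_sum_eq_zero (χ := ψ⁻¹ * χ₀) (fun hc => hne (inv_mul_eq_one.mp hc))]
        ring
      · intro h; exact absurd (Finset.mem_univ _) h
    -- assemble the convex combination
    set w : G → ℝ := fun x => (S x).re / Fintype.card G with hw
    have hw0 : ∀ x, 0 ≤ w x := fun x => div_nonneg (hSnonneg x) (Nat.cast_nonneg _)
    have heval : ∀ χ₀ : G →* ℂˣ, ∑ x : G, w x • ((χ₀ x : ℂˣ) : ℂ) = ℓ χ₀ := by
      intro χ₀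
      have hcard : ((Fintype.card G : ℝ) : ℂ) ≠ 0 := by
        exact_mod_cast Nat.cast_ne_zero.mpr Fintype.card_ne_zero
      calc ∑ x : G, w x • ((χ₀ x : ℂˣ) : ℂ)
          = (Fintype.card G : ℂ)⁻¹ * ∑ x : G, S x * ((χ₀ x : ℂˣ) : ℂ) := by
            rw [Finset.mul_sum]
            refine Finset.sum_congr rfl fun x _ => ?_
            rw [Complex.real_smul, hw]
            rw [show S x = ((S x).re : ℂ) from hSre x]
            push_cast
            field_simp
        _ = ℓ χ₀ := by
            rw [hrec χ₀]
            field_simp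
    have hwsum : ∑ x : G, w x = 1 := by
      have := heval 1
      simp only [MonoidHom.one_apply, Units.val_one, Complex.real_smul, mul_one, h1] at this
      have h2 : ((∑ x : G, w x : ℝ) : ℂ) = 1 := by push_cast; exact this
      exact_mod_cast h2
    have hcm : ℓ = Finset.univ.centerMass w (fun (x : G) (χ : G →* ℂˣ) => ((χ x : ℂˣ) : ℂ)) := by
      rw [Finset.centerMass_eq_of_sum_1 _ _ hwsum]
      funext χ
      rw [show (∑ x : G, w x • fun (χ : G →* ℂˣ) => ((χ x : ℂˣ) : ℂ)) χ
          = ∑ x : G, w x • ((χ x : ℂˣ) : ℂ) by simp]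
      exact (heval χ).symm
    rw [hcm]
    exact Finset.centerMass_mem_convexHull _ (fun x _ => hw0 x)
      (by rw [hwsum]; norm_num) (fun x _ => ⟨x, rfl⟩)
end

section
/- Let 𝓛 be a real-linear subspace of the d×d complex Hermitian matrices, and let J be a d×d real orthogonal matrix with J² = I such that J L Jᵀ = conj(L) (entrywise complex conjugation) for every L ∈ 𝓛. Then {L ∈ 𝓛 : L is positive semidefinite} = {L ∈ 𝓛 : Re(L) − J·Im(L) is a real symmetric positive semidefinite matrix}; in particular, for L ∈ 𝓛, L is Hermitian positive semidefinite if and only if the real matrix Re(L) − J·Im(L) is symmetric positive semidefinite. -/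
open scoped ComplexOrder Matrix

namespace HermAux

variable {d : ℕ}


lemma dp_swap (P : Matrix (Fin d) (Fin d) ℝ) (u w : Fin d → ℝ) :
    u ⬝ᵥ (P *ᵥ w) = w ⬝ᵥ (Pᵀ *ᵥ u) := by
  rw [Matrix.dotProduct_mulVec, ← Matrix.mulVec_transpose, dotProduct_comm]

lemma mulVec_dp (P : Matrix (Fin d) (Fin d) ℝ) (u w : Fin d → ℝ) :
    (P *ᵥ u) ⬝ᵥ w = u ⬝ᵥ (Pᵀ *ᵥ w) := by
  rw [dotProduct_comm, Matrix.dotProduct_mulVec, ← Matrix.mulVec_transpose,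
    dotProduct_comm]

lemma cdp (P : Matrix (Fin d) (Fin d) ℝ) (u w : Fin d → ℝ) :
    (fun i => (u i : ℂ)) ⬝ᵥ ((P.map Complex.ofReal) *ᵥ (fun i => (w i : ℂ)))
      = ((u ⬝ᵥ (P *ᵥ w) : ℝ) : ℂ) := by
  have h1 : (P.map Complex.ofReal) *ᵥ (fun i => (w i : ℂ)) = fun i => ((P *ᵥ w) i : ℂ) := by
    funext i
    exact (RingHom.map_mulVec Complex.ofRealHom P w i).symm
  rw [h1]
  exact (RingHom.map_dotProduct Complex.ofRealHom u (P *ᵥ w)).symm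

lemma map_re_mul_left (P : Matrix (Fin d) (Fin d) ℝ) (M : Matrix (Fin d) (Fin d) ℂ) :
    ((P.map Complex.ofReal) * M).map Complex.re = P * (M.map Complex.re) := by
  ext i j
  simp only [Matrix.mul_apply, Matrix.map_apply, Complex.re_sum]
  exact Finset.sum_congr rfl fun k _ => by simp [Complex.re_ofReal_mul]

lemma map_re_mul_right (P : Matrix (Fin d) (Fin d) ℝ) (M : Matrix (Fin d) (Fin d) ℂ) :
    (M * (P.map Complex.ofReal)).map Complex.re = (M.map Complex.re) * P := by
  ext i j
  simp only [Matrix.mul_apply, Matrix.map_apply, Complex.re_sum]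
  exact Finset.sum_congr rfl fun k _ => by simp [Complex.mul_re]

lemma map_im_mul_left (P : Matrix (Fin d) (Fin d) ℝ) (M : Matrix (Fin d) (Fin d) ℂ) :
    ((P.map Complex.ofReal) * M).map Complex.im = P * (M.map Complex.im) := by
  ext i j
  simp only [Matrix.mul_apply, Matrix.map_apply, Complex.im_sum]
  exact Finset.sum_congr rfl fun k _ => by simp [Complex.im_ofReal_mul]

lemma map_im_mul_right (P : Matrix (Fin d) (Fin d) ℝ) (M : Matrix (Fin d) (Fin d) ℂ) :
    (M * (P.map Complex.ofReal)).map Complex.im = (M.map Complex.im) * P := by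
  ext i j
  simp only [Matrix.mul_apply, Matrix.map_apply, Complex.im_sum]
  exact Finset.sum_congr rfl fun k _ => by simp [Complex.mul_im]

lemma quad_complex (A B : Matrix (Fin d) (Fin d) ℝ)
    (hA : Aᵀ = A) (hB : Bᵀ = -B) (x y : Fin d → ℝ) :
    star ((fun i => (x i : ℂ)) + Complex.I • fun i => (y i : ℂ)) ⬝ᵥ
      ((A.map Complex.ofReal + Complex.I • B.map Complex.ofReal) *ᵥ
        ((fun i => (x i : ℂ)) + Complex.I • fun i => (y i : ℂ)))
    = ((x ⬝ᵥ (A *ᵥ x) + y ⬝ᵥ (A *ᵥ y) - 2 * (x ⬝ᵥ (B *ᵥ y)) : ℝ) : ℂ) := by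
  have hstar : star ((fun i => (x i : ℂ)) + Complex.I • fun i => (y i : ℂ))
      = (fun i => (x i : ℂ)) - Complex.I • fun i => (y i : ℂ) := by
    funext i
    simp [Complex.ext_iff]
  rw [hstar]
  have hyx : y ⬝ᵥ (A *ᵥ x) = x ⬝ᵥ (A *ᵥ y) := by rw [dp_swap, hA]
  have hxx : x ⬝ᵥ (B *ᵥ x) = 0 := by
    have h := dp_swap B x x
    rw [hB, Matrix.neg_mulVec, dotProduct_neg] at h
    linarith
  have hyy : y ⬝ᵥ (B *ᵥ y) = 0 := by
    have h := dp_swap B y y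
    rw [hB, Matrix.neg_mulVec, dotProduct_neg] at h
    linarith
  have hyBx : y ⬝ᵥ (B *ᵥ x) = -(x ⬝ᵥ (B *ᵥ y)) := by
    have h := dp_swap B y x
    rw [hB, Matrix.neg_mulVec, dotProduct_neg] at h
    linarith
  simp only [Matrix.add_mulVec, Matrix.smul_mulVec, Matrix.mulVec_add,
    Matrix.mulVec_smul, dotProduct_add, sub_dotProduct,
    dotProduct_smul, smul_dotProduct, smul_eq_mul, smul_smul]
  rw [cdp A x x, cdp A x y, cdp A y x, cdp A y y, cdp B x x, cdp B x y, cdp B y x, cdp B y y]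
  rw [hyx, hxx, hyy, hyBx]
  push_cast
  ring_nf
  simp [Complex.I_sq]
  ring
lemma Jdp (J : Matrix (Fin d) (Fin d) ℝ) (hJt : Jᵀ = J) (W : Matrix (Fin d) (Fin d) ℝ)
    (u w : Fin d → ℝ) : (J *ᵥ u) ⬝ᵥ (W *ᵥ w) = u ⬝ᵥ ((J * W) *ᵥ w) := by
  rw [mulVec_dp, hJt, Matrix.mulVec_mulVec]

lemma quad_real_forward (A B J : Matrix (Fin d) (Fin d) ℝ)
    (hJt : Jᵀ = J) (hJA' : J * A * J = A) (hBJ : B * J = -(J * B))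
    (x : Fin d → ℝ) :
    x ⬝ᵥ (A *ᵥ x) + (-(J *ᵥ x)) ⬝ᵥ (A *ᵥ (-(J *ᵥ x))) - 2 * (x ⬝ᵥ (B *ᵥ (-(J *ᵥ x))))
      = 2 * (x ⬝ᵥ ((A - J * B) *ᵥ x)) := by
  simp only [Matrix.mulVec_neg, dotProduct_neg, neg_dotProduct, neg_neg,
    Matrix.mulVec_mulVec, Matrix.sub_mulVec, dotProduct_sub]
  rw [Jdp J hJt, ← Matrix.mul_assoc, hJA', hBJ, Matrix.neg_mulVec, dotProduct_neg]
  ring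

lemma quad_real_backward (A B J : Matrix (Fin d) (Fin d) ℝ)
    (hJt : Jᵀ = J) (hJsq : J * J = 1) (hJA' : J * A * J = A) (hJB' : J * B * J = -B)
    (hBJ : B * J = -(J * B)) (hA : Aᵀ = A) (hB : Bᵀ = -B)
    (x y : Fin d → ℝ) :
    (x - J *ᵥ y) ⬝ᵥ ((A - J * B) *ᵥ (x - J *ᵥ y))
      + (J *ᵥ x + y) ⬝ᵥ ((A - J * B) *ᵥ (J *ᵥ x + y))
    = 2 * (x ⬝ᵥ (A *ᵥ x) + y ⬝ᵥ (A *ᵥ y) - 2 * (x ⬝ᵥ (B *ᵥ y))) := by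
  have hJA2 : J * A = A * J := by
    have h : J * A * J * J = A * J := by rw [hJA']
    rwa [Matrix.mul_assoc (J * A) J J, hJsq, Matrix.mul_one] at h
  have h1 : (J *ᵥ y) ⬝ᵥ (A *ᵥ x) = x ⬝ᵥ ((A * J) *ᵥ y) := by
    rw [Jdp J hJt, dp_swap, Matrix.transpose_mul, hJt, hA]
  have h2 : (J *ᵥ y) ⬝ᵥ ((J * B) *ᵥ x) = -(x ⬝ᵥ (B *ᵥ y)) := by
    rw [Jdp J hJt, ← Matrix.mul_assoc, hJsq, Matrix.one_mul, dp_swap, hB, Matrix.neg_mulVec,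
      dotProduct_neg]
  have h3 : (J *ᵥ y) ⬝ᵥ ((A * J) *ᵥ y) = y ⬝ᵥ (A *ᵥ y) := by
    rw [Jdp J hJt, ← Matrix.mul_assoc, hJA']
  have h4 : (J *ᵥ y) ⬝ᵥ ((J * B * J) *ᵥ y) = -(y ⬝ᵥ ((J * B) *ᵥ y)) := by
    rw [Jdp J hJt, ← Matrix.mul_assoc, ← Matrix.mul_assoc, hJsq, Matrix.one_mul, hBJ,
      Matrix.neg_mulVec, dotProduct_neg]
  have h5 : (J *ᵥ x) ⬝ᵥ ((A * J) *ᵥ x) = x ⬝ᵥ (A *ᵥ x) := by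
    rw [Jdp J hJt, ← Matrix.mul_assoc, hJA']
  have h6 : (J *ᵥ x) ⬝ᵥ ((J * B * J) *ᵥ x) = -(x ⬝ᵥ ((J * B) *ᵥ x)) := by
    rw [Jdp J hJt, ← Matrix.mul_assoc, ← Matrix.mul_assoc, hJsq, Matrix.one_mul, hBJ,
      Matrix.neg_mulVec, dotProduct_neg]
  have h7 : (J *ᵥ x) ⬝ᵥ (A *ᵥ y) = x ⬝ᵥ ((A * J) *ᵥ y) := by
    rw [Jdp J hJt, hJA2]
  have h8 : (J *ᵥ x) ⬝ᵥ ((J * B) *ᵥ y) = x ⬝ᵥ (B *ᵥ y) := by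
    rw [Jdp J hJt, ← Matrix.mul_assoc, hJsq, Matrix.one_mul]
  have h9 : y ⬝ᵥ ((A * J) *ᵥ x) = x ⬝ᵥ ((A * J) *ᵥ y) := by
    rw [dp_swap, Matrix.transpose_mul, hJt, hA, hJA2]
  have h10 : y ⬝ᵥ (B *ᵥ x) = -(x ⬝ᵥ (B *ᵥ y)) := by
    rw [dp_swap, hB, Matrix.neg_mulVec, dotProduct_neg]
  have h11 : y ⬝ᵥ ((J * B * J) *ᵥ x) = x ⬝ᵥ (B *ᵥ y) := by
    rw [hJB', Matrix.neg_mulVec, dotProduct_neg, h10, neg_neg]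
  have h12 : x ⬝ᵥ ((J * B * J) *ᵥ y) = -(x ⬝ᵥ (B *ᵥ y)) := by
    rw [hJB', Matrix.neg_mulVec, dotProduct_neg]
  have h13 : x ⬝ᵥ ((J * B) *ᵥ y) = x ⬝ᵥ ((J * B) *ᵥ y) := rfl
  simp only [Matrix.mulVec_sub, Matrix.mulVec_add, Matrix.sub_mulVec, Matrix.add_mulVec,
    dotProduct_sub, dotProduct_add, sub_dotProduct, add_dotProduct,
    Matrix.mulVec_mulVec, Matrix.sub_mul]
  rw [h1, h2, h3, h4, h5, h6, h7, h8, h9, h11, h12]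
  ring

end HermAux

/-- **Complex Hermitian LMIs as real symmetric LMIs of the same size.** Let `𝓛` be a
real-linear subspace of `d × d` complex Hermitian matrices and `J` a real orthogonal
matrix with `J² = I` such that congruence by `J` acts as entrywise complex conjugation
on `𝓛`. Then an element `L ∈ 𝓛` is (Hermitian) positive semidefinite iff the real
matrix `Re(L) − J·Im(L)` is (symmetric) positive semidefinite. -/

theorem hermitian_psd_iff_real_psd
    {d : ℕ}
    (𝓛 : Submodule ℝ (Matrix (Fin d) (Fin d) ℂ))
    (hherm : ∀ L ∈ 𝓛, L.IsHermitian)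
    (J : Matrix (Fin d) (Fin d) ℝ)
    (hJorth : Jᵀ * J = 1)
    (hJsq : J * J = 1)
    (hconj : ∀ L ∈ 𝓛,
      (J.map (Complex.ofReal)) * L * (J.map (Complex.ofReal))ᵀ =
        L.map (starRingEnd ℂ)) :
    ({L : Matrix (Fin d) (Fin d) ℂ | L ∈ 𝓛 ∧ L.PosSemidef} =
      {L : Matrix (Fin d) (Fin d) ℂ | L ∈ 𝓛 ∧
        (L.map Complex.re - J * L.map Complex.im).PosSemidef}) ∧
    ∀ L ∈ 𝓛, (L.PosSemidef ↔ (L.map Complex.re - J * L.map Complex.im).PosSemidef) := by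
  have hJt : Jᵀ = J := by
    have h : Jᵀ * (J * J) = Jᵀ := by rw [hJsq, mul_one]
    rw [← Matrix.mul_assoc, hJorth, Matrix.one_mul] at h
    exact h.symm
  have main : ∀ L ∈ 𝓛,
      (L.PosSemidef ↔ (L.map Complex.re - J * L.map Complex.im).PosSemidef) := by
    intro L hL
    have hH := hherm L hL
    set A : Matrix (Fin d) (Fin d) ℝ := L.map Complex.re with hAdef
    set B : Matrix (Fin d) (Fin d) ℝ := L.map Complex.im with hBdef
    have hA : Aᵀ = A := by
      ext i j
      have := hH.apply i j
      simp only [Matrix.transpose_apply, hAdef, Matrix.map_apply]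
      rw [← this]
      simp
    have hB : Bᵀ = -B := by
      ext i j
      have := hH.apply i j
      simp only [Matrix.transpose_apply, hBdef, Matrix.map_apply, Matrix.neg_apply]
      rw [← this]
      simp
    have hL_decomp : L = A.map Complex.ofReal + Complex.I • B.map Complex.ofReal := by
      ext i j
      simp only [Matrix.add_apply, Matrix.smul_apply, Matrix.map_apply, hAdef, hBdef,
        smul_eq_mul]
      rw [mul_comm]
      exact (Complex.re_add_im (L i j)).symm
    -- congruence relations
    have hcongr := hconj L hL
    have hJAJ : J * A * Jᵀ = A := by
      have h1 : ((J.map Complex.ofReal) * L * (J.map Complex.ofReal)ᵀ).map Complex.re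
          = J * A * Jᵀ := by
        rw [← Matrix.transpose_map, HermAux.map_re_mul_right, HermAux.map_re_mul_left]
      have h2 : (L.map (starRingEnd ℂ)).map Complex.re = A := by
        ext i j
        simp [hAdef, Matrix.map_apply]
      rw [hcongr, h2] at h1
      exact h1.symm
    have hJBJ : J * B * Jᵀ = -B := by
      have h1 : ((J.map Complex.ofReal) * L * (J.map Complex.ofReal)ᵀ).map Complex.im
          = J * B * Jᵀ := by
        rw [← Matrix.transpose_map, HermAux.map_im_mul_right, HermAux.map_im_mul_left]
      have h2 : (L.map (starRingEnd ℂ)).map Complex.im = -B := by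
        ext i j
        simp [hBdef, Matrix.map_apply]
      rw [hcongr, h2] at h1
      exact h1.symm
    have hJA' : J * A * J = A := by rwa [hJt] at hJAJ
    have hJB' : J * B * J = -B := by rwa [hJt] at hJBJ
    have hBJ : B * J = -(J * B) := by
      have h : J * B * J * J = (-B) * J := by rw [hJB']
      rw [Matrix.mul_assoc (J * B) J J, hJsq, Matrix.mul_one, Matrix.neg_mul] at h
      rw [h, neg_neg]
    have hMsym : (A - J * B)ᵀ = A - J * B := by
      rw [Matrix.transpose_sub, Matrix.transpose_mul, hA, hB, hJt, Matrix.neg_mul, hBJ, neg_neg]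
    have hMherm : (A - J * B).IsHermitian := by
      have h : (A - J * B)ᴴ = (A - J * B)ᵀ :=
        Matrix.conjTranspose_eq_transpose_of_trivial _
      exact h.trans hMsym
    constructor
    · intro hpsd
      refine .of_dotProduct_mulVec_nonneg hMherm fun xq => ?_
      have h0 := hpsd.dotProduct_mulVec_nonneg ((fun i => ((xq i : ℝ) : ℂ)) +
        Complex.I • fun i => (((-(J *ᵥ xq)) i : ℝ) : ℂ))
      rw [hL_decomp] at h0
      rw [HermAux.quad_complex A B hA hB xq (-(J *ᵥ xq))] at h0
      rw [Complex.zero_le_real] at h0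
      rw [HermAux.quad_real_forward A B J hJt hJA' hBJ xq] at h0
      have : star xq ⬝ᵥ ((A - J * B) *ᵥ xq) = xq ⬝ᵥ ((A - J * B) *ᵥ xq) := by
        simp [star_trivial]
      rw [this]
      linarith
    · intro hpsd
      refine .of_dotProduct_mulVec_nonneg hH fun v => ?_
      have hv : v = (fun i => ((fun k => (v k).re) i : ℂ))
          + Complex.I • fun i => ((fun k => (v k).im) i : ℂ) := by
        funext i
        simp only [Pi.add_apply, Pi.smul_apply, smul_eq_mul]
        rw [mul_comm]
        exact (Complex.re_add_im (v i)).symm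
      rw [hv, hL_decomp,
        HermAux.quad_complex A B hA hB (fun k => (v k).re) (fun k => (v k).im),
        Complex.zero_le_real]
      set x : Fin d → ℝ := fun k => (v k).re
      set y : Fin d → ℝ := fun k => (v k).im
      have hq1 := hpsd.dotProduct_mulVec_nonneg (x - J *ᵥ y)
      have hq2 := hpsd.dotProduct_mulVec_nonneg (J *ᵥ x + y)
      rw [star_trivial] at hq1 hq2
      have hkey := HermAux.quad_real_backward A B J hJt hJsq hJA' hJB' hBJ hA hB x y
      linarith
  refine ⟨?_, main⟩
  ext L
  simp only [Set.mem_setOf_eq]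
  exact and_congr_right fun hL => main L hL
end

section
/- Let n ≥ 1. The half-cube graph is the simple graph with vertex set 2^{[n]} (all subsets of [n] = {1,…,n}) in which distinct S, T' are adjacent iff |S Δ T'| = 2, where Δ denotes symmetric difference. Let T = {S ⊆ [n] : |S| ∈ {0,2,4,…,⌈n/2⌉}} if ⌈n/2⌉ is even, and T = {S ⊆ [n] : |S| ∈ {1,3,5,…,⌈n/2⌉}} if ⌈n/2⌉ is odd. Then the half-cube graph admits a chordal cover Γ (a chordal graph on the same vertex set whose edge set contains that of the half-cube graph) such that for every maximal clique C of Γ there exists S₀ ⊆ [n] with S₀ Δ C := {S₀ Δ S : S ∈ C} ⊆ T. -/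
open scoped Classical symmDiff

/-- A simple graph is chordal if every cycle of length at least 4 has a chord. -/
def IsChordal {V : Type*} (Γ : SimpleGraph V) : Prop :=
  ∀ ⦃u : V⦄ (c : Γ.Walk u u), c.IsCycle → 4 ≤ c.length →
    ∃ v w, v ∈ c.support ∧ w ∈ c.support ∧ Γ.Adj v w ∧ s(v, w) ∉ c.edges

namespace HalfcubeAux

open SimpleGraph Finset

/-! ### Binary valuation of subsets of `Fin n` -/

variable {n : ℕ}

def val (s : Finset (Fin n)) : ℕ := ∑ i ∈ s, 2 ^ (i : ℕ)

lemma sum_range_pow_two (M : ℕ) : (∑ j ∈ Finset.range M, 2 ^ j) + 1 = 2 ^ M := by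
  induction M with
  | zero => simp
  | succ M ih => rw [Finset.sum_range_succ, pow_succ]; omega

lemma val_lt_pow {s : Finset (Fin n)} {M : ℕ} (h : ∀ i ∈ s, (i : ℕ) < M) :
    val s < 2 ^ M := by
  have h1 : val s = ∑ j ∈ s.image (fun i : Fin n => (i : ℕ)), 2 ^ j :=
    (Finset.sum_image (fun x _ y _ hxy => Fin.val_injective hxy)).symm
  have h2 : s.image (fun i : Fin n => (i : ℕ)) ⊆ Finset.range M := by
    intro j hj
    simp only [Finset.mem_image] at hj
    obtain ⟨i, hi, rfl⟩ := hj
    exact Finset.mem_range.mpr (h i hi)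
  have h3 : val s ≤ ∑ j ∈ Finset.range M, 2 ^ j := by
    rw [h1]; exact Finset.sum_le_sum_of_subset h2
  have := sum_range_pow_two M
  omega

lemma val_lt_pow_n (s : Finset (Fin n)) : val s < 2 ^ n :=
  val_lt_pow fun i _ => i.isLt

lemma pow_le_val {s : Finset (Fin n)} {i : Fin n} (h : i ∈ s) : 2 ^ (i : ℕ) ≤ val s :=
  Finset.single_le_sum (f := fun i : Fin n => 2 ^ (i : ℕ)) (fun _ _ => Nat.zero_le _) h

lemma val_lt_val {s t : Finset (Fin n)} {M : Fin n} (hMt : M ∈ t) (hMs : M ∉ s)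
    (hup : ∀ i : Fin n, M < i → (i ∈ s ↔ i ∈ t)) : val s < val t := by
  have hsplit : ∀ u : Finset (Fin n),
      val u = (∑ i ∈ u.filter (fun i => M < i), 2 ^ (i : ℕ)) +
        (∑ i ∈ u.filter (fun i => ¬ M < i), 2 ^ (i : ℕ)) :=
    fun u => (Finset.sum_filter_add_sum_filter_not u _ _).symm
  have heq : s.filter (fun i => M < i) = t.filter (fun i => M < i) := by
    ext i
    simp only [Finset.mem_filter]
    constructor
    · rintro ⟨his, hMi⟩; exact ⟨(hup i hMi).1 his, hMi⟩
    · rintro ⟨hit, hMi⟩; exact ⟨(hup i hMi).2 hit, hMi⟩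
  have hlow : (∑ i ∈ s.filter (fun i => ¬ M < i), 2 ^ (i : ℕ)) < 2 ^ (M : ℕ) := by
    apply val_lt_pow (s := s.filter (fun i => ¬ M < i))
    intro i hi
    simp only [Finset.mem_filter, not_lt] at hi
    have hne : i ≠ M := by rintro rfl; exact hMs hi.1
    have : i < M := lt_of_le_of_ne hi.2 hne
    exact this
  have hMlow : 2 ^ (M : ℕ) ≤ ∑ i ∈ t.filter (fun i => ¬ M < i), 2 ^ (i : ℕ) := by
    apply Finset.single_le_sum (f := fun i : Fin n => 2 ^ (i : ℕ))
      (fun _ _ => Nat.zero_le _)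
    simp [Finset.mem_filter, hMt]
  rw [hsplit s, hsplit t, heq]
  omega

lemma val_ne {s t : Finset (Fin n)} (h : s ≠ t) : val s ≠ val t := by
  have hne : (s ∆ t).Nonempty := by
    rw [Finset.nonempty_iff_ne_empty]
    intro hc
    exact h (by simpa [symmDiff_eq_bot] using hc)
  set M := (s ∆ t).max' hne with hM
  have hMmem : M ∈ s ∆ t := (s ∆ t).max'_mem hne
  have hup : ∀ i : Fin n, M < i → (i ∈ s ↔ i ∈ t) := by
    intro i hi
    have : i ∉ s ∆ t := fun hmem => absurd ((s ∆ t).le_max' i hmem) (not_le.mpr hi)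
    rw [Finset.mem_symmDiff] at this
    tauto
  rw [Finset.mem_symmDiff] at hMmem
  rcases hMmem with ⟨hs, ht⟩ | ⟨ht, hs⟩
  · have : val t < val s := val_lt_val hs ht (fun i hi => (hup i hi).symm)
    omega
  · have : val s < val t := val_lt_val ht hs hup
    omega

/-! ### The chordal cover graph -/

def HG (n : ℕ) : SimpleGraph (Finset (Fin n)) where
  Adj u w := u ≠ w ∧ (u.card = w.card ∨ (u.card + 2 = w.card ∧ val u < val w) ∨
      (w.card + 2 = u.card ∧ val w < val u))
  symm := by
    constructor
    rintro u w ⟨h1, h2⟩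
    refine ⟨h1.symm, ?_⟩
    rcases h2 with h | h | h
    · exact Or.inl h.symm
    · exact Or.inr (Or.inr h)
    · exact Or.inr (Or.inl h)
  loopless := ⟨fun u h => h.1 rfl⟩

lemma card_le_n (s : Finset (Fin n)) : s.card ≤ n := by
  have := Finset.card_le_univ s
  simpa using this

def kap (s : Finset (Fin n)) : ℕ := 2 ^ n * (n - s.card) + val s

lemma kap_inj : Function.Injective (kap (n := n)) := by
  intro s t h
  by_contra hne
  have hs := val_lt_pow_n s
  have ht := val_lt_pow_n t
  have h1 : kap s % 2 ^ n = val s := by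
    unfold kap
    rw [Nat.mul_add_mod]
    exact Nat.mod_eq_of_lt hs
  have h2 : kap t % 2 ^ n = val t := by
    unfold kap
    rw [Nat.mul_add_mod]
    exact Nat.mod_eq_of_lt ht
  exact val_ne hne (by rw [← h1, ← h2, h])

lemma adj_cases {v x : Finset (Fin n)} (hadj : (HG n).Adj v x) (hk : kap v < kap x) :
    (v.card = x.card ∧ val v < val x) ∨ (x.card + 2 = v.card ∧ val x < val v) := by
  obtain ⟨hne, h | h | h⟩ := hadj
  · left
    refine ⟨h, ?_⟩
    unfold kap at hk
    rw [h] at hk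
    omega
  · exfalso
    have hxn := card_le_n x
    have hvalx := val_lt_pow_n x
    have hvx : n - x.card + 1 ≤ n - v.card := by omega
    have hlt : kap x < kap v := by
      unfold kap
      have c1 : 2 ^ n * (n - x.card) + val x < 2 ^ n * (n - x.card + 1) := by
        rw [mul_add, mul_one]; omega
      have c2 : 2 ^ n * (n - x.card + 1) ≤ 2 ^ n * (n - v.card) :=
        Nat.mul_le_mul_left _ hvx
      have c3 : 2 ^ n * (n - v.card) ≤ 2 ^ n * (n - v.card) + val v := Nat.le_add_right _ _
      omega
    omega
  · exact Or.inr h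

lemma adj_of_adj_adj {v u w : Finset (Fin n)} (h1 : (HG n).Adj v u) (h2 : (HG n).Adj v w)
    (hne : u ≠ w) (k1 : kap u > kap v) (k2 : kap w > kap v) : (HG n).Adj u w := by
  rcases adj_cases h1 k1 with ⟨hc, hv⟩ | ⟨hc, hv⟩ <;>
    rcases adj_cases h2 k2 with ⟨hc', hv'⟩ | ⟨hc', hv'⟩
  · exact ⟨hne, Or.inl (by omega)⟩
  · exact ⟨hne, Or.inr (Or.inr ⟨by omega, hv'.trans hv⟩)⟩
  · exact ⟨hne, Or.inr (Or.inl ⟨by omega, hv.trans hv'⟩)⟩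
  · exact ⟨hne, Or.inl (by omega)⟩

end HalfcubeAux

/-! ### Chordality via perfect elimination orderings -/

section Chordal

variable {V : Type*} {G : SimpleGraph V}

open SimpleGraph

lemma getVert_eq_support_getElem {u v : V} (p : G.Walk u v) (i : ℕ)
    (hi : i < p.support.length) : p.getVert i = p.support[i] := by
  induction p generalizing i with
  | nil =>
    simp only [Walk.support_nil, List.length_singleton] at hi
    interval_cases i
    simp [Walk.getVert]
  | cons h q ih =>
    cases i with
    | zero => simp [Walk.getVert]
    | succ i =>
      simp only [Walk.support_cons, List.length_cons] at hi
      have := ih i (by omega)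
      simpa [Walk.getVert_cons_succ, Walk.support_cons] using this

lemma mem_edges_position {a b : V} :
    ∀ {u v : V} (p : G.Walk u v), s(a, b) ∈ p.edges →
      ∃ i, i < p.length ∧ ((p.getVert i = a ∧ p.getVert (i + 1) = b) ∨
        (p.getVert i = b ∧ p.getVert (i + 1) = a)) := by
  intro u v p
  induction p with
  | nil => simp
  | @cons u x v h q ih =>
    intro hmem
    rw [Walk.edges_cons, List.mem_cons] at hmem
    rcases hmem with heq | hmem
    · refine ⟨0, by simp, ?_⟩
      rw [Sym2.eq_iff] at heq
      rcases heq with ⟨rfl, rfl⟩ | ⟨rfl, rfl⟩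
      · left
        constructor
        · simp [Walk.getVert]
        · rw [Walk.getVert_cons_succ, Walk.getVert_zero]
      · right
        constructor
        · simp [Walk.getVert]
        · rw [Walk.getVert_cons_succ, Walk.getVert_zero]
    · obtain ⟨i, hil, hcase⟩ := ih hmem
      refine ⟨i + 1, by simp [Walk.length_cons]; omega, ?_⟩
      rw [Walk.getVert_cons_succ, Walk.getVert_cons_succ]
      exact hcase

lemma cycle_getVert_inj {v : V} {c : G.Walk v v} (hc : c.IsCycle)
    {i j : ℕ} (hi1 : 1 ≤ i) (hi2 : i ≤ c.length) (hj1 : 1 ≤ j) (hj2 : j ≤ c.length)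
    (heq : c.getVert i = c.getVert j) : i = j := by
  have hnd := hc.support_nodup
  have hlen : c.support.length = c.length + 1 := Walk.length_support c
  have htl : c.support.tail.length = c.length := by
    rw [List.length_tail, hlen]; omega
  have hget : ∀ k, 1 ≤ k → k ≤ c.length →
      ∀ (hk : k - 1 < c.support.tail.length), c.getVert k = c.support.tail[k - 1] := by
    intro k hk1 hk2 hk
    have h1 : c.getVert k = c.support[k]'(by omega) :=
      getVert_eq_support_getElem c k (by omega)
    have h2 : c.support.tail[k - 1]'hk = c.support[k - 1 + 1]'(by omega) :=
      List.getElem_tail ..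
    rw [h1, h2]
    congr 1
    omega
  have e1 := hget i hi1 hi2 (by omega)
  have e2 := hget j hj1 hj2 (by omega)
  rw [e1, e2] at heq
  have := (List.Nodup.getElem_inj_iff hnd).mp heq
  omega

lemma mem_support_tail_of_closed {w : V} (p : G.Walk w w) (hlen : 1 ≤ p.length) {x : V}
    (hx : x ∈ p.support) : x ∈ p.support.tail := by
  by_cases hxw : x = w
  · subst hxw
    have hlen2 : p.support.length = p.length + 1 := Walk.length_support p
    have htl : p.support.tail.length = p.length := by rw [List.length_tail, hlen2]; omega
    have htne : p.support.tail ≠ [] := by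
      intro h
      rw [h] at htl
      simp at htl
      omega
    cases htail : p.support.tail with
    | nil => exact absurd htail htne
    | cons b l' =>
      have h1 : p.support.getLast? = some x := by
        rw [List.getLast?_eq_getLast_of_ne_nil (Walk.support_ne_nil p), Walk.getLast_support]
      have h2 : p.support = x :: b :: l' := by rw [Walk.support_eq_cons p, htail]
      rw [h2, List.getLast?_cons_cons] at h1
      obtain ⟨hne2, hlast⟩ := List.mem_getLast?_eq_getLast h1
      have h3 := List.getLast_mem hne2
      rwa [← hlast] at h3
  · rw [Walk.support_eq_cons, List.mem_cons] at hx
    tauto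

lemma isChordal_of_elim (G : SimpleGraph V) (κ : V → ℕ) (hinj : Function.Injective κ)
    (hpeo : ∀ v u w, G.Adj v u → G.Adj v w → u ≠ w → κ v < κ u → κ v < κ w → G.Adj u w) :
    IsChordal G := by
  intro u c hc hlen
  obtain ⟨z, hz⟩ := List.exists_mem_of_ne_nil _ (Walk.support_ne_nil c)
  obtain ⟨v, hvF, hmin⟩ := Finset.exists_min_image c.support.toFinset κ
    ⟨z, List.mem_toFinset.mpr hz⟩
  have hv : v ∈ c.support := List.mem_toFinset.mp hvF
  set c' : G.Walk v v := c.rotate v hv with hc'def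
  have hc' : c'.IsCycle := hc.rotate hv
  have hedg : c'.edges ~r c.edges := Walk.rotate_edges c v hv
  have hL : c'.length = c.length := by
    have h1 : c'.edges.length = c.edges.length := hedg.perm.length_eq
    rwa [Walk.length_edges, Walk.length_edges] at h1
  have hlen4 : 4 ≤ c'.length := by omega
  set x := c'.getVert 1 with hx
  set y := c'.getVert (c'.length - 1) with hy
  have hgvlen : c'.getVert c'.length = v := Walk.getVert_length c'
  have hadjvx : G.Adj v x := by
    have := c'.adj_getVert_succ (i := 0) (by omega)
    rwa [Walk.getVert_zero] at this
  have hadjyv : G.Adj y v := by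
    have := c'.adj_getVert_succ (i := c'.length - 1) (by omega)
    rw [show c'.length - 1 + 1 = c'.length by omega, hgvlen] at this
    exact this
  have hxs' : x ∈ c'.support :=
    Walk.mem_support_iff_exists_getVert.mpr ⟨1, rfl, by omega⟩
  have hys' : y ∈ c'.support :=
    Walk.mem_support_iff_exists_getVert.mpr ⟨c'.length - 1, rfl, by omega⟩
  have hsupp_trans : ∀ {a : V}, a ∈ c'.support → a ∈ c.support := by
    intro a ha
    have h1 : a ∈ c'.support.tail := mem_support_tail_of_closed c' (by omega) ha
    have h2 : c'.support.tail ~r c.support.tail := Walk.support_rotate c v hv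
    have h3 : a ∈ c.support.tail := h2.perm.mem_iff.mp h1
    rw [Walk.support_eq_cons, List.mem_cons]
    exact Or.inr h3
  have hxs : x ∈ c.support := hsupp_trans hxs'
  have hys : y ∈ c.support := hsupp_trans hys'
  have hxnev : x ≠ v := by
    intro h
    have : (1 : ℕ) = c'.length := cycle_getVert_inj hc' le_rfl (by omega) (by omega) le_rfl
      (hx.symm.trans (h.trans hgvlen.symm))
    omega
  have hynev : y ≠ v := by
    intro h
    have : c'.length - 1 = c'.length := cycle_getVert_inj hc' (by omega) (by omega)
      (by omega) le_rfl (hy.symm.trans (h.trans hgvlen.symm))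
    omega
  have hxney : x ≠ y := by
    intro h
    have : (1 : ℕ) = c'.length - 1 := cycle_getVert_inj hc' le_rfl (by omega) (by omega)
      (by omega) h
    omega
  have hk1 : κ v < κ x := by
    have h1 : κ v ≤ κ x := hmin x (List.mem_toFinset.mpr hxs)
    exact lt_of_le_of_ne h1 (fun h => hxnev (hinj h.symm))
  have hk2 : κ v < κ y := by
    have h1 : κ v ≤ κ y := hmin y (List.mem_toFinset.mpr hys)
    exact lt_of_le_of_ne h1 (fun h => hynev (hinj h.symm))
  have hadjxy : G.Adj x y := hpeo v x y hadjvx hadjyv.symm hxney hk1 hk2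
  refine ⟨x, y, hxs, hys, hadjxy, ?_⟩
  intro hmem
  have hmem' : s(x, y) ∈ c'.edges := hedg.perm.mem_iff.mpr hmem
  obtain ⟨i, hil, hcase⟩ := mem_edges_position c' hmem'
  rcases Nat.eq_zero_or_pos i with rfl | hipos
  · rw [Walk.getVert_zero] at hcase
    rcases hcase with ⟨h1, _⟩ | ⟨h1, _⟩
    · exact hxnev h1.symm
    · exact hynev h1.symm
  rcases hcase with ⟨h1, h2⟩ | ⟨h1, h2⟩
  · have hi1 : i = 1 := cycle_getVert_inj hc' (by omega) (by omega) le_rfl (by omega) h1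
    subst hi1
    have : (2 : ℕ) = c'.length - 1 := cycle_getVert_inj hc' (by omega) (by omega)
      (by omega) (by omega) h2
    omega
  · have hi1 : i = c'.length - 1 := cycle_getVert_inj hc' (by omega) (by omega)
      (by omega) (by omega) h1
    subst hi1
    rw [show c'.length - 1 + 1 = c'.length by omega, hgvlen] at h2
    exact hxnev h2.symm

end Chordal

namespace HalfcubeAux

/-! ### Symmetric difference distance computations -/

lemma dist_empty (s : Finset (Fin n)) : ((∅ : Finset (Fin n)) ∆ s).card = s.card := by
  rw [show (∅ : Finset (Fin n)) = ⊥ from rfl, bot_symmDiff]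

lemma dist_single (i : Fin n) (s : Finset (Fin n)) :
    (({i} : Finset (Fin n)) ∆ s).card = if i ∈ s then s.card - 1 else s.card + 1 := by
  by_cases h : i ∈ s
  · have he : ({i} : Finset (Fin n)) ∆ s = s.erase i := by
      ext j
      by_cases hj : j = i
      · subst hj
        simp [Finset.mem_symmDiff, h]
      · simp [Finset.mem_symmDiff, Finset.mem_erase, hj]
    rw [he, if_pos h, Finset.card_erase_of_mem h]
  · have he : ({i} : Finset (Fin n)) ∆ s = insert i s := by
      ext j
      by_cases hj : j = i
      · subst hj
        simp [Finset.mem_symmDiff, h]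
      · simp [Finset.mem_symmDiff, Finset.mem_insert, hj]
    rw [he, if_neg h, Finset.card_insert_of_notMem h]

lemma dist_compl (x s : Finset (Fin n)) : (xᶜ ∆ s).card = n - (x ∆ s).card := by
  have he : xᶜ ∆ s = (x ∆ s)ᶜ := by
    ext j
    simp only [Finset.mem_symmDiff, Finset.mem_compl]
    tauto
  rw [he, Finset.card_compl, Fintype.card_fin]

lemma val_lt_of_ssub {s t : Finset (Fin n)} (hsub : s ⊆ t) {i : Fin n} (hit : i ∈ t)
    (his : i ∉ s) : val s < val t :=
  Finset.sum_lt_sum_of_subset hsub hit his (by positivity) (fun _ _ _ => Nat.zero_le _)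

end HalfcubeAux

/-- **Chordal cover of the half-cube graph (Proposition 6).** The half-cube graph (the
graph on all subsets of `[n]` in which two subsets are adjacent iff their symmetric
difference has two elements) admits a chordal cover `Γ` such that every maximal clique
`C` of `Γ` has a translate `S₀ Δ C` contained in the family `T` of subsets `S ⊆ [n]`
with `|S| ≤ ⌈n/2⌉` and `|S| ≡ ⌈n/2⌉ (mod 2)`. -/
theorem halfcube_chordal_cover (n : ℕ) (hn : 1 ≤ n) :
    ∃ Γ : SimpleGraph (Finset (Fin n)),
      IsChordal Γ ∧
      (SimpleGraph.fromRel fun s t : Finset (Fin n) => (s ∆ t).card = 2) ≤ Γ ∧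
      ∀ C : Set (Finset (Fin n)), Γ.IsClique C →
        (∀ C', Γ.IsClique C' → C ⊆ C' → C' = C) →
        ∃ s₀ : Finset (Fin n), (fun s => s₀ ∆ s) '' C ⊆
          {s : Finset (Fin n) | s.card % 2 = ((n + 1) / 2) % 2 ∧ s.card ≤ (n + 1) / 2} := by
  classical
  refine ⟨HalfcubeAux.HG n, ?_, ?_, ?_⟩
  · exact isChordal_of_elim _ HalfcubeAux.kap HalfcubeAux.kap_inj
      (fun v u w h1 h2 hne k1 k2 => HalfcubeAux.adj_of_adj_adj h1 h2 hne k1 k2)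
  · intro s t h
    rw [SimpleGraph.fromRel_adj] at h
    obtain ⟨hne, hcard⟩ := h
    have hc2 : (s ∆ t).card = 2 := by
      rcases hcard with h | h
      · exact h
      · rwa [symmDiff_comm] at h
    have hsplit : (s ∆ t).card = (s \ t).card + (t \ s).card := by
      rw [symmDiff_def, Finset.sup_eq_union]
      exact Finset.card_union_of_disjoint disjoint_sdiff_sdiff
    have h1 : (s \ t).card + (s ∩ t).card = s.card := Finset.card_sdiff_add_card_inter s t
    have h2 : (t \ s).card + (t ∩ s).card = t.card := Finset.card_sdiff_add_card_inter t s
    have hint : (s ∩ t).card = (t ∩ s).card := by rw [Finset.inter_comm]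
    refine ⟨hne, ?_⟩
    rcases Nat.lt_or_ge (s \ t).card 1 with ha | ha
    · have hsub : s ⊆ t := by
        rw [← Finset.sdiff_eq_empty_iff_subset]
        exact Finset.card_eq_zero.mp (by omega)
      obtain ⟨i, hi⟩ := Finset.card_pos.mp (show 0 < (t \ s).card by omega)
      have hval : HalfcubeAux.val s < HalfcubeAux.val t :=
        HalfcubeAux.val_lt_of_ssub hsub (Finset.mem_sdiff.mp hi).1 (Finset.mem_sdiff.mp hi).2
      exact Or.inr (Or.inl ⟨by omega, hval⟩)
    rcases Nat.lt_or_ge (s \ t).card 2 with hb | hb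
    · exact Or.inl (by omega)
    · have hsub : t ⊆ s := by
        rw [← Finset.sdiff_eq_empty_iff_subset]
        exact Finset.card_eq_zero.mp (by omega)
      obtain ⟨i, hi⟩ := Finset.card_pos.mp (show 0 < (s \ t).card by omega)
      have hval : HalfcubeAux.val t < HalfcubeAux.val s :=
        HalfcubeAux.val_lt_of_ssub hsub (Finset.mem_sdiff.mp hi).1 (Finset.mem_sdiff.mp hi).2
      exact Or.inr (Or.inr ⟨by omega, hval⟩)
  · intro C hclique _hmax
    have hpair := (SimpleGraph.isClique_iff _).mp hclique
    set m := (n + 1) / 2 with hm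
    by_cases hCne : C.Nonempty
    swap
    · refine ⟨∅, ?_⟩
      rintro _ ⟨s, hs, rfl⟩
      exact absurd ⟨s, hs⟩ hCne
    obtain ⟨z, hz⟩ := hCne
    have hgoal : ∀ s₀ : Finset (Fin n),
        (∀ s ∈ C, (s₀ ∆ s).card % 2 = m % 2 ∧ (s₀ ∆ s).card ≤ m) →
        (fun s => s₀ ∆ s) '' C ⊆
          {s : Finset (Fin n) | s.card % 2 = ((n + 1) / 2) % 2 ∧ s.card ≤ (n + 1) / 2} := by
      intro s₀ h
      rintro _ ⟨s, hs, rfl⟩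
      exact h s hs
    set F := (Set.toFinite C).toFinset with hF
    have hmemF : ∀ {s}, s ∈ F ↔ s ∈ C := fun {s} => Set.Finite.mem_toFinset _
    obtain ⟨a, haF, hamin⟩ := Finset.exists_min_image F Finset.card ⟨z, hmemF.mpr hz⟩
    have haC : a ∈ C := hmemF.mp haF
    set k := a.card with hk
    have hcards : ∀ s ∈ C, s.card = k ∨ s.card = k + 2 := by
      intro s hs
      by_cases hsa : s = a
      · subst hsa; exact Or.inl rfl
      · have hadj := hpair hs haC hsa
        have hmin := hamin s (hmemF.mpr hs)
        obtain ⟨-, h | ⟨h, -⟩ | ⟨h, -⟩⟩ := hadj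
        · exact Or.inl (by omega)
        · exact Or.inl (by omega)
        · exact Or.inr (by omega)
    have hklen : k ≤ n := HalfcubeAux.card_le_n a
    rcases le_or_gt (k + 2) m with h1 | h1
    · by_cases hp : k % 2 = m % 2
      · refine ⟨∅, hgoal _ ?_⟩
        intro s hs
        rw [HalfcubeAux.dist_empty]
        rcases hcards s hs with h | h <;> omega
      · refine ⟨{⟨0, hn⟩}, hgoal _ ?_⟩
        intro s hs
        rw [HalfcubeAux.dist_single]
        have hc := hcards s hs
        by_cases hmem : (⟨0, hn⟩ : Fin n) ∈ s
        · rw [if_pos hmem]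
          have : 1 ≤ s.card := Finset.card_pos.mpr ⟨_, hmem⟩
          omega
        · rw [if_neg hmem]
          omega
    · rcases le_or_gt n (m + k) with h2 | h2
      · by_cases hp : (n - k) % 2 = m % 2
        · refine ⟨(∅ : Finset (Fin n))ᶜ, hgoal _ ?_⟩
          intro s hs
          rw [HalfcubeAux.dist_compl, HalfcubeAux.dist_empty]
          have := HalfcubeAux.card_le_n s
          rcases hcards s hs with h | h <;> omega
        · refine ⟨({⟨0, hn⟩} : Finset (Fin n))ᶜ, hgoal _ ?_⟩
          intro s hs
          rw [HalfcubeAux.dist_compl, HalfcubeAux.dist_single]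
          have hsn := HalfcubeAux.card_le_n s
          have hc := hcards s hs
          by_cases hmem : (⟨0, hn⟩ : Fin n) ∈ s
          · rw [if_pos hmem]
            have : 1 ≤ s.card := Finset.card_pos.mpr ⟨_, hmem⟩
            omega
          · rw [if_neg hmem]
            have hsd : (({⟨0, hn⟩} : Finset (Fin n)) ∆ s).card ≤ n := HalfcubeAux.card_le_n _
            rw [HalfcubeAux.dist_single, if_neg hmem] at hsd
            omega
      · -- critical case : n = 2m, k = m - 1
        have hne2 : n = 2 * m := by omega
        have hkm : k + 1 = m := by omega
        set top : Fin n := ⟨n - 1, by omega⟩ with htop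
        by_cases hA : ∀ s ∈ C, s.card = k → top ∉ s
        · refine ⟨({top} : Finset (Fin n))ᶜ, hgoal _ ?_⟩
          intro s hs
          rw [HalfcubeAux.dist_compl, HalfcubeAux.dist_single]
          have hsn := HalfcubeAux.card_le_n s
          rcases hcards s hs with h | h
          · rw [if_neg (hA s hs h)]
            omega
          · by_cases hmem : top ∈ s
            · rw [if_pos hmem]
              have : 1 ≤ s.card := Finset.card_pos.mpr ⟨_, hmem⟩
              omega
            · rw [if_neg hmem]
              have hsd : (({top} : Finset (Fin n)) ∆ s).card ≤ n := HalfcubeAux.card_le_n _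
              rw [HalfcubeAux.dist_single, if_neg hmem] at hsd
              omega
        · push_neg at hA
          obtain ⟨a', ha'C, ha'k, ha'top⟩ := hA
          refine ⟨{top}, hgoal _ ?_⟩
          intro s hs
          rw [HalfcubeAux.dist_single]
          rcases hcards s hs with h | h
          · by_cases hmem : top ∈ s
            · rw [if_pos hmem]
              have : 1 ≤ s.card := Finset.card_pos.mpr ⟨_, hmem⟩
              omega
            · rw [if_neg hmem]
              omega
          · have hnes : a' ≠ s := by
              intro hh
              rw [hh] at ha'k
              omega
            have hadj := hpair ha'C hs hnes
            have hval : HalfcubeAux.val a' < HalfcubeAux.val s := by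
              obtain ⟨-, hh | ⟨hh, hv⟩ | ⟨hh, hv⟩⟩ := hadj
              · exfalso; omega
              · exact hv
              · exfalso; omega
            have hmem : top ∈ s := by
              by_contra hmem
              have hlt : HalfcubeAux.val s < 2 ^ (n - 1) := by
                apply HalfcubeAux.val_lt_pow
                intro i hi
                have hineq : (i : ℕ) < n := i.isLt
                have hni : i ≠ top := fun hh => hmem (hh ▸ hi)
                have : (i : ℕ) ≠ n - 1 := fun hh => hni (Fin.ext hh)
                omega
              have hge : 2 ^ (n - 1) ≤ HalfcubeAux.val a' := HalfcubeAux.pow_le_val ha'top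
              omega
            rw [if_pos hmem]
            omega
end

section
/- Let n ≥ 2 and let T = {S ⊆ [n] : |S| ∈ {0,2,4,…,⌈n/2⌉}} if ⌈n/2⌉ is even, and T = {S ⊆ [n] : |S| ∈ {1,3,5,…,⌈n/2⌉}} if ⌈n/2⌉ is odd. Let CUT_n = conv{(x_i x_j)_{1≤i<j≤n} ∈ ℝ^{n(n−1)/2} : x ∈ {−1,1}^n} be the cut polytope. Then CUT_n equals the set of all ℓ = (ℓ_{ij})_{1≤i<j≤n} ∈ ℝ^{n(n−1)/2} for which there exists a real-valued family y = (y_A) indexed by A ∈ TΔT := {S Δ S' : S, S' ∈ T} such that y_∅ = 1, y_{{i,j}} = ℓ_{ij} for all 1 ≤ i < j ≤ n, and the real symmetric matrix [y_{S Δ S'}]_{S,S'∈T} is positive semidefinite. In particular CUT_n has a real positive semidefinite lift of size |T|. -/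
open scoped Classical symmDiff


section CutLiftAux
open Finset Matrix

namespace CutLift

/-- bilinear form attached to a kernel -/
def Sf {ι : Type*} [Fintype ι] (f : ι → ι → ℝ) (u v : ι → ℝ) : ℝ :=
  ∑ i, ∑ j, u i * v j * f i j

variable {ι κ : Type*} [Fintype ι] [Fintype κ]

lemma Sf_symm (f : ι → ι → ℝ) (hsym : ∀ i j, f i j = f j i) (u v : ι → ℝ) :
    Sf f u v = Sf f v u := by
  rw [Sf, Sf, Finset.sum_comm]
  refine Finset.sum_congr rfl fun j _ => Finset.sum_congr rfl fun i _ => ?_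
  rw [hsym i j]; ring

lemma Sf_kernel_congr (N f : ι → ι → ℝ) (u v : ι → ℝ)
    (h : ∀ i j, u i ≠ 0 → v j ≠ 0 → N i j = f i j) : Sf N u v = Sf f u v := by
  refine Finset.sum_congr rfl fun i _ => Finset.sum_congr rfl fun j _ => ?_
  by_cases hu : u i = 0
  · simp [hu]
  by_cases hv : v j = 0
  · simp [hv]
  rw [h i j hu hv]

lemma dot_eq (M : Matrix κ κ ℝ) (φ : κ → ℝ) :
    dotProduct (star φ) (M *ᵥ φ) = ∑ s, ∑ t, φ s * φ t * M s t := by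
  simp only [dotProduct, Matrix.mulVec, Pi.star_apply, star_trivial]
  refine Finset.sum_congr rfl fun s _ => ?_
  rw [Finset.mul_sum]
  exact Finset.sum_congr rfl fun t _ => by ring

lemma Sf_expand3 (f : ι → ι → ℝ) (u v w : ι → ℝ) :
    Sf f (fun i => u i + v i + w i) (fun i => u i + v i + w i) =
      Sf f u u + Sf f u v + Sf f u w + Sf f v u + Sf f v v + Sf f v w +
      Sf f w u + Sf f w v + Sf f w w := by
  simp only [Sf]
  have key : ∀ i j, (u i + v i + w i) * (u j + v j + w j) * f i j
      = u i * u j * f i j + u i * v j * f i j + u i * w j * f i j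
      + v i * u j * f i j + v i * v j * f i j + v i * w j * f i j
      + w i * u j * f i j + w i * v j * f i j + w i * w j * f i j := fun i j => by ring
  simp_rw [key]
  simp only [Finset.sum_add_distrib]

lemma Sf_expand_sub (f : ι → ι → ℝ) (u v : ι → ℝ) :
    Sf f (fun i => u i - v i) (fun i => u i - v i) =
      Sf f u u - Sf f u v - Sf f v u + Sf f v v := by
  simp only [Sf]
  have key : ∀ i j, (u i - v i) * (u j - v j) * f i j
      = u i * u j * f i j - u i * v j * f i j - (v i * u j * f i j - v i * v j * f i j) :=
    fun i j => by ring
  simp_rw [key]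
  simp only [Finset.sum_sub_distrib]
  ring

lemma sum_collapse (p : ι → Prop) [Fintype {i // p i}] (g : ι → ℝ)
    (h : ∀ i, ¬ p i → g i = 0) :
    ∑ i, g i = ∑ k : {i // p i}, g k.val := by
  have h1 : ∑ i ∈ univ.filter p, g i = ∑ i, g i :=
    Finset.sum_filter_of_ne (fun i _ hne => by by_contra hp; exact hne (h i hp))
  rw [← h1]
  exact Finset.sum_subtype _ (fun i => by simp) g

/-- The two-block positive semidefinite completion lemma. -/
theorem glue (f : ι → ι → ℝ) (P₁ P₂ : ι → Prop)
    (hsym : ∀ i j, f i j = f j i)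
    (hcov : ∀ i, P₁ i ∨ P₂ i)
    (h₁ : ∀ φ : ι → ℝ, (∀ i, ¬ P₁ i → φ i = 0) → φ ≠ 0 → 0 < Sf f φ φ)
    (h₂ : ∀ φ : ι → ℝ, (∀ i, ¬ P₂ i → φ i = 0) → φ ≠ 0 → 0 < Sf f φ φ) :
    ∃ N : ι → ι → ℝ, (∀ φ : ι → ℝ, 0 ≤ Sf N φ φ) ∧
      ∀ i j, (P₁ i ∧ P₁ j) ∨ (P₂ i ∧ P₂ j) → N i j = f i j := by
  have h₁w : ∀ φ : ι → ℝ, (∀ i, ¬ P₁ i → φ i = 0) → 0 ≤ Sf f φ φ := by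
    intro φ hs
    by_cases hφ : φ = 0
    · simp [hφ, Sf]
    · exact le_of_lt (h₁ φ hs hφ)
  have h₂w : ∀ φ : ι → ℝ, (∀ i, ¬ P₂ i → φ i = 0) → 0 ≤ Sf f φ φ := by
    intro φ hs
    by_cases hφ : φ = 0
    · simp [hφ, Sf]
    · exact le_of_lt (h₂ φ hs hφ)
  set O : ι → Prop := fun i => P₁ i ∧ P₂ i with hO
  -- the overlap matrix
  set C : Matrix {i // O i} {i // O i} ℝ := Matrix.of (fun k l => f k.val l.val) with hC
  have hCpd : C.PosDef := by
    refine Matrix.posDef_iff_dotProduct_mulVec.mpr ⟨?_, ?_⟩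
    · ext k l
      simp only [hC, Matrix.conjTranspose_apply, Matrix.of_apply, star_trivial]
      exact hsym l.val k.val
    · intro x hx
      rw [dot_eq]
      set xb : ι → ℝ := fun i => if h : O i then x ⟨i, h⟩ else 0 with hxb
      have hxbs : ∀ i, ¬ O i → xb i = 0 := fun i hi => dif_neg hi
      have hcoll : Sf f xb xb = ∑ k : {i // O i}, ∑ l : {i // O i}, x k * x l * C k l := by
        rw [Sf, sum_collapse O _ (fun i hi => by
          rw [Finset.sum_eq_zero]; intro j _; rw [hxbs i hi]; ring)]
        refine Finset.sum_congr rfl fun k _ => ?_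
        rw [sum_collapse O _ (fun j hj => by rw [hxbs j hj]; ring)]
        refine Finset.sum_congr rfl fun l _ => ?_
        simp only [hxb, hC, Matrix.of_apply, dif_pos k.prop, dif_pos l.prop, Subtype.coe_eta]
      rw [← hcoll]
      refine h₁ xb (fun i hi => hxbs i (fun ho => hi ho.1)) ?_
      obtain ⟨k, hk⟩ := Function.ne_iff.1 hx
      intro hcon
      apply hk
      have hxbk : xb k.val = x k := by simp only [hxb, dif_pos k.prop, Subtype.coe_eta]
      rw [hcon] at hxbk
      simpa using hxbk.symm
  have hdet : IsUnit C.det := hCpd.det_pos.ne'.isUnit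
  -- the solution vectors
  set w : ι → ι → ℝ := fun j l =>
    if h : O l then (C⁻¹ *ᵥ (fun k : {i // O i} => f k.val j)) ⟨l, h⟩ else 0 with hw
  have hwsupp : ∀ j l, ¬ O l → w j l = 0 := fun j l h => dif_neg h
  have hwprop : ∀ (j : ι) (k : {i // O i}), ∑ l, f k.val l * w j l = f k.val j := by
    intro j k
    rw [sum_collapse O (fun l => f k.val l * w j l) (fun l hl => by simp [hwsupp j l hl])]
    have hterm : ∀ l : {i // O i},
        f k.val l.val * w j l.val
          = C k l * (C⁻¹ *ᵥ (fun k : {i // O i} => f k.val j)) l := by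
      intro l
      simp only [hw, dif_pos l.prop, Subtype.coe_eta, hC, Matrix.of_apply]
    rw [Finset.sum_congr rfl (fun l _ => hterm l)]
    have hmv : ∑ l : {i // O i}, C k l * (C⁻¹ *ᵥ (fun k : {i // O i} => f k.val j)) l
        = (C *ᵥ (C⁻¹ *ᵥ (fun k : {i // O i} => f k.val j))) k := by
      simp [Matrix.mulVec, dotProduct]
    rw [hmv, Matrix.mulVec_mulVec, Matrix.mul_nonsing_inv _ hdet, Matrix.one_mulVec]
  -- the completion
  refine ⟨fun i j => if (P₁ i ∧ P₁ j) ∨ (P₂ i ∧ P₂ j) then f i j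
      else if P₁ i then ∑ k, f i k * w j k else ∑ k, w i k * f k j, ?_, ?_⟩
  swap
  · intro i j hij
    exact if_pos hij
  intro φ
  set N : ι → ι → ℝ := fun i j => if (P₁ i ∧ P₁ j) ∨ (P₂ i ∧ P₂ j) then f i j
      else if P₁ i then ∑ k, f i k * w j k else ∑ k, w i k * f k j with hN
  set a : ι → ℝ := fun i => if P₁ i ∧ ¬ P₂ i then φ i else 0 with ha
  set b : ι → ℝ := fun i => if O i then φ i else 0 with hb
  set c : ι → ℝ := fun i => if ¬ P₁ i then φ i else 0 with hc
  set wc : ι → ℝ := fun l => ∑ j, c j * w j l with hwc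
  have hasupp : ∀ i, a i ≠ 0 → P₁ i ∧ ¬ P₂ i := by
    intro i h; by_contra hcon; exact h (if_neg hcon)
  have hbsupp : ∀ i, b i ≠ 0 → O i := by
    intro i h; by_contra hcon; exact h (if_neg hcon)
  have hcsupp : ∀ i, c i ≠ 0 → ¬ P₁ i := by
    intro i h; by_contra hcon; exact h (if_neg (fun hh => hh hcon))
  have hwcsupp : ∀ l, wc l ≠ 0 → O l := by
    intro l h; by_contra hcon
    refine h ?_
    simp only [hwc]
    exact Finset.sum_eq_zero fun j _ => by rw [hwsupp j l hcon]; ring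
  have hφdecomp : φ = fun i => a i + b i + c i := by
    funext i
    simp only [ha, hb, hc, hO]
    by_cases h1 : P₁ i
    · by_cases h2 : P₂ i
      · simp [h1, h2]
      · simp [h1, h2]
    · simp [h1]
  -- row property
  have hrow : ∀ k, O k → ∑ l, f k l * wc l = ∑ j, c j * f k j := by
    intro k hk
    calc ∑ l, f k l * wc l = ∑ l, ∑ j, c j * (f k l * w j l) := by
          refine Finset.sum_congr rfl fun l _ => ?_
          simp only [hwc]
          rw [Finset.mul_sum]
          exact Finset.sum_congr rfl fun j _ => by ring
      _ = ∑ j, ∑ l, c j * (f k l * w j l) := Finset.sum_comm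
      _ = ∑ j, c j * f k j := by
          refine Finset.sum_congr rfl fun j _ => ?_
          rw [← Finset.mul_sum, hwprop j ⟨k, hk⟩]
  -- the Sf substitution identities
  have hsubst : ∀ u : ι → ℝ, (∀ i, u i ≠ 0 → O i) → Sf f u wc = Sf f u c := by
    intro u hu
    rw [Sf, Sf]
    refine Finset.sum_congr rfl fun i _ => ?_
    by_cases hui : u i = 0
    · refine Finset.sum_congr rfl fun j _ => by rw [hui]; ring
    calc ∑ j, u i * wc j * f i j = u i * ∑ j, f i j * wc j := by
          rw [Finset.mul_sum]; exact Finset.sum_congr rfl fun j _ => by ring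
      _ = u i * ∑ j, c j * f i j := by rw [hrow i (hu i hui)]
      _ = ∑ j, u i * c j * f i j := by
          rw [Finset.mul_sum]; exact Finset.sum_congr rfl fun j _ => by ring
  have I1 : Sf f b wc = Sf f b c := hsubst b hbsupp
  have I3 : Sf f wc wc = Sf f wc c := hsubst wc hwcsupp
  -- cross kernels
  have crossAC : Sf N a c = Sf f a wc := by
    have step1 : Sf N a c = Sf (fun i j => ∑ k, f i k * w j k) a c := by
      refine Sf_kernel_congr _ _ _ _ fun i j hai hcj => ?_
      obtain ⟨hP1i, hP2i⟩ := hasupp i hai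
      have hP1j := hcsupp j hcj
      simp only [hN]
      rw [if_neg (by
        intro hor
        rcases hor with h | h
        · exact hP1j h.2
        · exact hP2i h.1), if_pos hP1i]
    rw [step1, Sf, Sf]
    refine Finset.sum_congr rfl fun i _ => ?_
    calc ∑ j, a i * c j * ∑ k, f i k * w j k
        = ∑ j, ∑ k, a i * c j * (f i k * w j k) := by
          refine Finset.sum_congr rfl fun j _ => ?_
          rw [Finset.mul_sum]
      _ = ∑ k, ∑ j, a i * c j * (f i k * w j k) := Finset.sum_comm
      _ = ∑ k, a i * wc k * f i k := by
          refine Finset.sum_congr rfl fun k _ => ?_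
          simp only [hwc]
          rw [Finset.mul_sum, Finset.sum_mul]
          exact Finset.sum_congr rfl fun j _ => by ring
  have crossCA : Sf N c a = Sf f wc a := by
    have step1 : Sf N c a = Sf (fun i j => ∑ k, w i k * f k j) c a := by
      refine Sf_kernel_congr _ _ _ _ fun i j hci haj => ?_
      obtain ⟨hP1j, hP2j⟩ := hasupp j haj
      have hP1i := hcsupp i hci
      simp only [hN]
      rw [if_neg (by
        intro hor
        rcases hor with h | h
        · exact hP1i h.1
        · exact hP2j h.2), if_neg hP1i]
    rw [step1]
    calc Sf (fun i j => ∑ k, w i k * f k j) c a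
        = ∑ i, ∑ j, ∑ k, c i * a j * (w i k * f k j) := by
          refine Finset.sum_congr rfl fun i _ => Finset.sum_congr rfl fun j _ => ?_
          rw [Finset.mul_sum]
      _ = ∑ i, ∑ k, ∑ j, c i * a j * (w i k * f k j) := by
          exact Finset.sum_congr rfl fun i _ => Finset.sum_comm
      _ = ∑ k, ∑ i, ∑ j,  c i * a j * (w i k * f k j) := Finset.sum_comm
      _ = Sf f wc a := by
          rw [Sf]
          refine Finset.sum_congr rfl fun k _ => ?_
          rw [Finset.sum_comm]
          refine Finset.sum_congr rfl fun j _ => ?_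
          simp only [hwc]
          rw [Finset.sum_mul, Finset.sum_mul]
          exact Finset.sum_congr rfl fun i _ => by ring
  -- the plain kernel replacements
  have kern11 : ∀ u v : ι → ℝ, (∀ i, u i ≠ 0 → P₁ i) → (∀ j, v j ≠ 0 → P₁ j) →
      Sf N u v = Sf f u v := fun u v hu hv =>
    Sf_kernel_congr _ _ _ _ fun i j hi hj => if_pos (Or.inl ⟨hu i hi, hv j hj⟩)
  have kern22 : ∀ u v : ι → ℝ, (∀ i, u i ≠ 0 → P₂ i) → (∀ j, v j ≠ 0 → P₂ j) →
      Sf N u v = Sf f u v := fun u v hu hv =>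
    Sf_kernel_congr _ _ _ _ fun i j hi hj => if_pos (Or.inr ⟨hu i hi, hv j hj⟩)
  have haP1 : ∀ i, a i ≠ 0 → P₁ i := fun i h => (hasupp i h).1
  have hbP1 : ∀ i, b i ≠ 0 → P₁ i := fun i h => (hbsupp i h).1
  have hbP2 : ∀ i, b i ≠ 0 → P₂ i := fun i h => (hbsupp i h).2
  have hcP2 : ∀ i, c i ≠ 0 → P₂ i := fun i h => (hcov i).resolve_left (hcsupp i h)
  have hwcP1 : ∀ i, wc i ≠ 0 → P₁ i := fun i h => (hwcsupp i h).1
  have hwcP2 : ∀ i, wc i ≠ 0 → P₂ i := fun i h => (hwcsupp i h).2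
  -- positivity of the two folded vectors
  have hα : 0 ≤ Sf f (fun i => a i + b i + wc i) (fun i => a i + b i + wc i) := by
    refine h₁w _ fun i hi => ?_
    have h1 : a i = 0 := by by_contra hne; exact hi (haP1 i hne)
    have h2 : b i = 0 := by by_contra hne; exact hi (hbP1 i hne)
    have h3 : wc i = 0 := by by_contra hne; exact hi (hwcP1 i hne)
    rw [h1, h2, h3]; ring
  have hβ : 0 ≤ Sf f (fun i => c i - wc i) (fun i => c i - wc i) := by
    refine h₂w _ fun i hi => ?_
    have h1 : c i = 0 := by by_contra hne; exact hi (hcP2 i hne)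
    have h3 : wc i = 0 := by by_contra hne; exact hi (hwcP2 i hne)
    rw [h1, h3]; ring
  have expα := Sf_expand3 f a b wc
  have expβ := Sf_expand_sub f c wc
  -- symmetry facts
  have sym_cb : Sf f c b = Sf f b c := Sf_symm f hsym c b
  have sym_wb : Sf f wc b = Sf f b wc := Sf_symm f hsym wc b
  have sym_cw : Sf f c wc = Sf f wc c := Sf_symm f hsym c wc
  -- expand the target
  rw [hφdecomp, Sf_expand3 N a b c]
  rw [kern11 a a haP1 haP1, kern11 a b haP1 hbP1, kern11 b a hbP1 haP1,
    kern11 b b hbP1 hbP1, kern22 b c hbP2 hcP2, kern22 c b hcP2 hbP2,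
    kern22 c c hcP2 hcP2, crossAC, crossCA]
  linarith [hα, hβ, expα, expβ, I1, I3, sym_cb, sym_wb, sym_cw,
    Sf_symm f hsym wc a, Sf_symm f hsym a wc]


/-- pushing a quadratic form forward along a map -/
lemma Sf_pushforward [DecidableEq κ] (σ : ι → κ) (M : κ → κ → ℝ) (φ : ι → ℝ) :
    ∑ i, ∑ j, φ i * φ j * M (σ i) (σ j) =
      Sf M (fun S => ∑ i ∈ univ.filter (fun i => σ i = S), φ i)
           (fun S => ∑ i ∈ univ.filter (fun i => σ i = S), φ i) := by
  rw [Sf]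
  set ψ : κ → ℝ := fun S => ∑ i ∈ univ.filter (fun i => σ i = S), φ i with hψ
  have inner : ∀ (i : ι), ∑ T, ψ T * M (σ i) T = ∑ j, φ j * M (σ i) (σ j) := by
    intro i
    rw [← Finset.sum_fiberwise_of_maps_to (fun j _ => Finset.mem_univ (σ j))
      (fun j => φ j * M (σ i) (σ j))]
    refine Finset.sum_congr rfl fun T _ => ?_
    rw [hψ, Finset.sum_mul]
    refine Finset.sum_congr rfl fun j hj => ?_
    rw [(Finset.mem_filter.1 hj).2]
  calc ∑ i, ∑ j, φ i * φ j * M (σ i) (σ j)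
      = ∑ i, φ i * ∑ j, φ j * M (σ i) (σ j) := by
        refine Finset.sum_congr rfl fun i _ => ?_
        rw [Finset.mul_sum]
        exact Finset.sum_congr rfl fun j _ => by ring
    _ = ∑ i, φ i * ∑ T, ψ T * M (σ i) T := by
        refine Finset.sum_congr rfl fun i _ => by rw [inner i]
    _ = ∑ S, ∑ T, ψ S * ψ T * M S T := by
        rw [← Finset.sum_fiberwise_of_maps_to (fun i _ => Finset.mem_univ (σ i))
          (fun i => φ i * ∑ T, ψ T * M (σ i) T)]
        refine Finset.sum_congr rfl fun S _ => ?_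
        have : ∑ i ∈ univ.filter (fun i => σ i = S), φ i * ∑ T, ψ T * M (σ i) T
            = ∑ i ∈ univ.filter (fun i => σ i = S), φ i * ∑ T, ψ T * M S T := by
          refine Finset.sum_congr rfl fun i hi => by rw [(Finset.mem_filter.1 hi).2]
        rw [this, ← Finset.sum_mul]
        rw [Finset.mul_sum]
        refine Finset.sum_congr rfl fun T _ => by rw [hψ]; ring
  

lemma sf_nonneg {M : Matrix κ κ ℝ} (h : M.PosSemidef) (φ : κ → ℝ) :
    0 ≤ ∑ s, ∑ t, φ s * φ t * M s t := by
  rw [← dot_eq]; exact (Matrix.posSemidef_iff_dotProduct_mulVec.mp h).2 φ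

lemma posSemidef_of (M : Matrix κ κ ℝ) (hsym : ∀ s t, M s t = M t s)
    (hq : ∀ φ : κ → ℝ, 0 ≤ ∑ s, ∑ t, φ s * φ t * M s t) : M.PosSemidef := by
  refine Matrix.posSemidef_iff_dotProduct_mulVec.mpr ⟨?_, ?_⟩
  · ext s t
    simp [Matrix.conjTranspose_apply, hsym s t]
  · intro φ; rw [dot_eq]; exact hq φ



variable {α : Type*} [DecidableEq α]

lemma prod_symmDiff (x : α → ℝ) (hx : ∀ i, x i * x i = 1) (U V : Finset α) :
    (∏ i ∈ U, x i) * ∏ i ∈ V, x i = ∏ i ∈ U ∆ V, x i := by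
  have hU : U = (U \ V) ∪ (U ∩ V) := (Finset.sdiff_union_inter U V).symm
  have hV : V = (V \ U) ∪ (V ∩ U) := (Finset.sdiff_union_inter V U).symm
  have hUV : U ∆ V = (U \ V) ∪ (V \ U) := by
    rw [symmDiff_def]; rfl
  have pU : (∏ i ∈ U, x i) = (∏ i ∈ U \ V, x i) * ∏ i ∈ U ∩ V, x i := by
    rw [← Finset.prod_union (Finset.disjoint_sdiff_inter U V), Finset.sdiff_union_inter]
  have pV : (∏ i ∈ V, x i) = (∏ i ∈ V \ U, x i) * ∏ i ∈ V ∩ U, x i := by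
    rw [← Finset.prod_union (Finset.disjoint_sdiff_inter V U), Finset.sdiff_union_inter]
  rw [hUV, Finset.prod_union disjoint_sdiff_sdiff, pU, pV]
  have : (∏ i ∈ U ∩ V, x i) * ∏ i ∈ V ∩ U, x i = 1 := by
    rw [Finset.inter_comm V U, ← Finset.prod_mul_distrib]
    rw [Finset.prod_congr rfl fun i _ => hx i, Finset.prod_const_one]
  calc (∏ i ∈ U \ V, x i) * (∏ i ∈ U ∩ V, x i) *
        ((∏ i ∈ V \ U, x i) * (∏ i ∈ V ∩ U, x i))
      = ((∏ i ∈ U \ V, x i) * (∏ i ∈ V \ U, x i)) *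
        ((∏ i ∈ U ∩ V, x i) * (∏ i ∈ V ∩ U, x i)) := by ring
    _ = (∏ i ∈ U \ V, x i) * (∏ i ∈ V \ U, x i) := by rw [this, mul_one]

variable {n : ℕ}

/-- the ±1 vector attached to a sign set -/
def sgn (σ : Finset (Fin n)) : Fin n → ℝ := fun i => if i ∈ σ then -1 else 1

lemma sgn_sq (σ : Finset (Fin n)) (i : Fin n) : sgn σ i * sgn σ i = 1 := by
  unfold sgn; by_cases h : i ∈ σ <;> simp [h]

/-- character attached to a sign set -/
def chi (σ U : Finset (Fin n)) : ℝ := ∏ i ∈ U, sgn σ i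

lemma chi_mul (σ U V : Finset (Fin n)) : chi σ U * chi σ V = chi σ (U ∆ V) :=
  prod_symmDiff (sgn σ) (sgn_sq σ) U V

lemma chi_empty (σ : Finset (Fin n)) : chi σ ∅ = 1 := by simp [chi]

lemma sum_chi (W : Finset (Fin n)) :
    ∑ σ : Finset (Fin n), chi σ W = if W = ∅ then (2:ℝ)^n else 0 := by
  have key : ∀ σ : Finset (Fin n), chi σ W
      = (∏ i ∈ σ, (if i ∈ W then (-1:ℝ) else 1)) * ∏ i ∈ univ \ σ, (1:ℝ) := by
    intro σ
    rw [Finset.prod_const_one, mul_one]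
    rw [Finset.prod_ite_mem σ W (fun _ => (-1:ℝ))]
    unfold chi sgn
    rw [Finset.prod_ite_mem W σ (fun _ => (-1:ℝ))]
    rw [Finset.inter_comm]
  calc ∑ σ : Finset (Fin n), chi σ W
      = ∑ σ ∈ (univ : Finset (Fin n)).powerset,
          (∏ i ∈ σ, (if i ∈ W then (-1:ℝ) else 1)) * ∏ i ∈ univ \ σ, (1:ℝ) := by
        rw [Finset.powerset_univ]
        exact Finset.sum_congr rfl fun σ _ => key σ
    _ = ∏ i ∈ (univ : Finset (Fin n)), ((if i ∈ W then (-1:ℝ) else 1) + 1) :=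
        (Finset.prod_add _ _ _).symm
    _ = if W = ∅ then (2:ℝ)^n else 0 := by
        by_cases hW : W = ∅
        · simp only [hW, if_pos rfl, Finset.notMem_empty, if_neg (fun h => h)]
          norm_num [Finset.card_univ]
        · rw [if_neg hW]
          obtain ⟨i, hi⟩ := Finset.nonempty_iff_ne_empty.2 hW
          exact Finset.prod_eq_zero (Finset.mem_univ i) (by simp [hi])


lemma card_symmDiff_aux (A B : Finset α) :
    (A ∆ B).card + 2 * (A ∩ B).card = A.card + B.card := by
  have h1 : A ∆ B = (A \ B) ∪ (B \ A) := by rw [symmDiff_def]; rfl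
  have h2 : (A ∆ B).card = (A \ B).card + (B \ A).card := by
    rw [h1, Finset.card_union_of_disjoint disjoint_sdiff_sdiff]
  have h3 := Finset.card_sdiff_add_card_inter A B
  have h4 := Finset.card_sdiff_add_card_inter B A
  rw [Finset.inter_comm B A] at h4
  omega

lemma card_symmDiff_le (A B : Finset α) : (A ∆ B).card ≤ A.card + B.card := by
  have := card_symmDiff_aux A B; omega

lemma symmDiff_cancel_mid (a b c : Finset α) : (a ∆ b) ∆ (a ∆ c) = b ∆ c := by
  rw [symmDiff_comm a b, symmDiff_assoc, ← symmDiff_assoc a a c, symmDiff_self,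
    bot_symmDiff]

variable {n : ℕ}

/-- first bag center -/
def gone (n : ℕ) (x₀ : Fin n) : Finset (Fin n) :=
  if (n+1)/2 % 2 = 0 then ∅ else {x₀}

/-- near-full even set -/
def ccc (n : ℕ) (x₀ : Fin n) : Finset (Fin n) :=
  if n % 2 = 0 then univ else univ.erase x₀

/-- second bag center -/
def gtwo (n : ℕ) (x₀ : Fin n) : Finset (Fin n) := gone n x₀ ∆ ccc n x₀

lemma gone_card (x₀ : Fin n) :
    (gone n x₀).card % 2 = ((n+1)/2) % 2 ∧ (gone n x₀).card ≤ 1 := by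
  unfold gone
  by_cases h : (n+1)/2 % 2 = 0 <;> simp [h] <;> omega

lemma ccc_facts (x₀ : Fin n) :
    (ccc n x₀).card % 2 = 0 ∧ n ≤ (ccc n x₀).card + 1 ∧ (ccc n x₀).card ≤ n := by
  unfold ccc
  by_cases h : n % 2 = 0 <;>
    simp [h, Finset.card_univ, Finset.card_erase_of_mem (Finset.mem_univ x₀)] <;> omega

lemma univ_sdiff_ccc_card (x₀ : Fin n) (W : Finset (Fin n)) :
    (W \ ccc n x₀).card + (ccc n x₀).card ≤ n := by
  have h1 : (W \ ccc n x₀).card ≤ ((univ : Finset (Fin n)) \ ccc n x₀).card :=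
    Finset.card_le_card (Finset.sdiff_subset_sdiff (Finset.subset_univ W) le_rfl)
  have h2 : ((univ : Finset (Fin n)) \ ccc n x₀).card
      = n - (ccc n x₀).card := by
    rw [Finset.card_sdiff_of_subset (Finset.subset_univ _), Finset.card_univ, Fintype.card_fin]
  have h3 := (ccc_facts x₀).2.2
  omega

/-- the key distance-sum bound -/
lemma dist_sum (x₀ : Fin n) (P : Finset (Fin n)) :
    (gone n x₀ ∆ P).card + (gtwo n x₀ ∆ P).card ≤ n + 1 := by
  set W := gone n x₀ ∆ P with hW
  have hg2 : gtwo n x₀ ∆ P = W ∆ ccc n x₀ := by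
    rw [hW, gtwo, symmDiff_right_comm]
  rw [hg2]
  have e1 := card_symmDiff_aux W (ccc n x₀)
  have e2 := Finset.card_sdiff_add_card_inter W (ccc n x₀)
  have e3 := univ_sdiff_ccc_card x₀ W
  have e4 := (ccc_facts x₀).2.1
  omega

lemma dist_parity (x₀ : Fin n) (P : Finset (Fin n)) (hP : P.card % 2 = 0) :
    (gone n x₀ ∆ P).card % 2 = ((n+1)/2) % 2 ∧
    (gtwo n x₀ ∆ P).card % 2 = ((n+1)/2) % 2 := by
  have a1 := card_symmDiff_aux (gone n x₀) P
  have a2 := card_symmDiff_aux (gtwo n x₀) P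
  have a3 := card_symmDiff_aux (gone n x₀) (ccc n x₀)
  have hg1 := (gone_card x₀).1
  have hcc := (ccc_facts x₀).1
  have hg2 : gtwo n x₀ = gone n x₀ ∆ ccc n x₀ := rfl
  rw [← hg2] at a3
  omega

/-- Vertex cover: every even set is in one of the two bags. -/
lemma bag_cover (x₀ : Fin n) (P : Finset (Fin n)) (hP : P.card % 2 = 0) :
    (gone n x₀ ∆ P).card ≤ (n+1)/2 ∨ (gtwo n x₀ ∆ P).card ≤ (n+1)/2 := by
  have h1 := dist_sum x₀ P
  have h2 := dist_parity x₀ P hP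
  omega

/-- Edge cover: every pair-edge of even sets lies in a common bag. -/
lemma bag_edge (x₀ : Fin n) (P A : Finset (Fin n)) (hP : P.card % 2 = 0)
    (hA : A.card = 2) :
    ((gone n x₀ ∆ P).card ≤ (n+1)/2 ∧ (gone n x₀ ∆ (P ∆ A)).card ≤ (n+1)/2) ∨
    ((gtwo n x₀ ∆ P).card ≤ (n+1)/2 ∧ (gtwo n x₀ ∆ (P ∆ A)).card ≤ (n+1)/2) := by
  have hQ : (P ∆ A).card % 2 = 0 := by
    have := card_symmDiff_aux P A; omega
  have h1 := dist_sum x₀ P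
  have h2 := dist_sum x₀ (P ∆ A)
  have h3 := dist_parity x₀ P hP
  have h4 := dist_parity x₀ (P ∆ A) hQ
  -- the two first-bag distances differ by at most 2
  have key : gone n x₀ ∆ (P ∆ A) = (gone n x₀ ∆ P) ∆ A := (symmDiff_assoc _ _ _).symm
  have k1 : (gone n x₀ ∆ (P ∆ A)).card ≤ (gone n x₀ ∆ P).card + 2 := by
    rw [key]
    have := card_symmDiff_le (gone n x₀ ∆ P) A
    omega
  have key2 : gone n x₀ ∆ P = (gone n x₀ ∆ (P ∆ A)) ∆ A := by
    rw [key, symmDiff_assoc, symmDiff_self, symmDiff_bot]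
  have k2 : (gone n x₀ ∆ P).card ≤ (gone n x₀ ∆ (P ∆ A)).card + 2 := by
    rw [key2]
    have := card_symmDiff_le (gone n x₀ ∆ (P ∆ A)) A
    omega
  omega


end CutLift

namespace CutLift

lemma gtwo_parity {n : ℕ} (x₀ : Fin n) :
    (gtwo n x₀).card % 2 = ((n+1)/2) % 2 := by
  have h1 := card_symmDiff_aux (gone n x₀) (ccc n x₀)
  have h2 := (gone_card x₀).1
  have h3 := (ccc_facts x₀).1
  rw [show gtwo n x₀ = gone n x₀ ∆ ccc n x₀ from rfl]
  omega

end CutLift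


namespace CutLift

lemma main_eps (n : ℕ) (hn : 2 ≤ n) (y : Finset (Fin n) → ℝ)
    (ℓ : {p : Fin n × Fin n // p.1 < p.2} → ℝ)
    (hy0 : y ∅ = 1)
    (hyp : ∀ p : {p : Fin n × Fin n // p.1 < p.2}, y {p.1.1, p.1.2} = ℓ p)
    (hM : (Matrix.of fun s t : {s : Finset (Fin n) //
        s.card % 2 = ((n + 1) / 2) % 2 ∧ s.card ≤ (n + 1) / 2} =>
        y ((s : Finset (Fin n)) ∆ (t : Finset (Fin n)))).PosSemidef)
    (ε : ℝ) (hε : 0 < ε) :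
    (1+ε)⁻¹ • ℓ ∈ convexHull ℝ {ℓ : {p : Fin n × Fin n // p.1 < p.2} → ℝ |
        ∃ x : Fin n → ℝ, (∀ i, x i = 1 ∨ x i = -1) ∧
          ℓ = fun p => x p.1.1 * x p.1.2} := by
  classical
  set x₀ : Fin n := ⟨0, by omega⟩ with hx₀
  set MM : Matrix {s : Finset (Fin n) //
      s.card % 2 = ((n + 1) / 2) % 2 ∧ s.card ≤ (n + 1) / 2}
      {s : Finset (Fin n) //
      s.card % 2 = ((n + 1) / 2) % 2 ∧ s.card ≤ (n + 1) / 2} ℝ :=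
    Matrix.of (fun s t => y ((s : Finset (Fin n)) ∆ (t : Finset (Fin n)))) with hMM
  set P₁ : {P : Finset (Fin n) // P.card % 2 = 0} → Prop :=
    fun P => (gone n x₀ ∆ (P : Finset (Fin n))).card ≤ (n+1)/2 with hP₁
  set P₂ : {P : Finset (Fin n) // P.card % 2 = 0} → Prop :=
    fun P => (gtwo n x₀ ∆ (P : Finset (Fin n))).card ≤ (n+1)/2 with hP₂
  set f : {P : Finset (Fin n) // P.card % 2 = 0} →
      {P : Finset (Fin n) // P.card % 2 = 0} → ℝ :=
    fun P Q => y ((P : Finset (Fin n)) ∆ (Q : Finset (Fin n))) +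
      if P = Q then ε else 0 with hf
  have hsym : ∀ P Q, f P Q = f Q P := by
    intro P Q
    simp only [hf]
    rw [symmDiff_comm]
    congr 1
    by_cases h : P = Q
    · rw [if_pos h, if_pos h.symm]
    · rw [if_neg h, if_neg (fun hc => h hc.symm)]
  have hcov : ∀ P, P₁ P ∨ P₂ P := fun P => bag_cover x₀ P.val P.prop
  -- positivity on the bags
  have bagpos : ∀ g : Finset (Fin n), g.card % 2 = ((n+1)/2) % 2 →
      ∀ φ : {P : Finset (Fin n) // P.card % 2 = 0} → ℝ,
      (∀ P : {P : Finset (Fin n) // P.card % 2 = 0},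
        ¬ ((g ∆ (P : Finset (Fin n))).card ≤ (n+1)/2) → φ P = 0) →
      φ ≠ 0 → 0 < Sf f φ φ := by
    intro g hg φ hsupp hφ
    have hdefault : (gone n x₀).card % 2 = ((n+1)/2) % 2 ∧
        (gone n x₀).card ≤ (n+1)/2 :=
      ⟨(gone_card x₀).1, le_trans (gone_card x₀).2 (by omega)⟩
    set σ : {P : Finset (Fin n) // P.card % 2 = 0} →
        {s : Finset (Fin n) // s.card % 2 = ((n + 1) / 2) % 2 ∧ s.card ≤ (n + 1) / 2} :=
      fun P => if h : (g ∆ (P : Finset (Fin n))).card ≤ (n+1)/2 then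
          ⟨g ∆ (P : Finset (Fin n)), ⟨by
            have h1 := card_symmDiff_aux g (P : Finset (Fin n))
            have h2 := P.prop
            omega, h⟩⟩
        else ⟨gone n x₀, hdefault⟩ with hσ
    have key : ∀ P Q, φ P ≠ 0 → φ Q ≠ 0 →
        y ((P : Finset (Fin n)) ∆ (Q : Finset (Fin n))) = MM (σ P) (σ Q) := by
      intro P Q hP hQ
      have hPb : (g ∆ (P : Finset (Fin n))).card ≤ (n+1)/2 := by
        by_contra hcon; exact hP (hsupp P hcon)
      have hQb : (g ∆ (Q : Finset (Fin n))).card ≤ (n+1)/2 := by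
        by_contra hcon; exact hQ (hsupp Q hcon)
      simp only [hσ, dif_pos hPb, dif_pos hQb, hMM, Matrix.of_apply]
      rw [symmDiff_cancel_mid]
    have split : Sf f φ φ =
        (∑ P, ∑ Q, φ P * φ Q * MM (σ P) (σ Q)) + ε * ∑ P, φ P * φ P := by
      rw [Sf]
      have hterm : ∀ P Q, φ P * φ Q * f P Q
          = φ P * φ Q * MM (σ P) (σ Q) + φ P * φ Q * (if P = Q then ε else 0) := by
        intro P Q
        by_cases hP : φ P = 0
        · simp [hP]
        by_cases hQ : φ Q = 0
        · simp [hQ]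
        simp only [hf]
        rw [← key P Q hP hQ]
        ring
      simp_rw [hterm]
      simp only [Finset.sum_add_distrib]
      congr 1
      calc ∑ P, ∑ Q, φ P * φ Q * (if P = Q then ε else 0)
          = ∑ P : {P : Finset (Fin n) // P.card % 2 = 0}, φ P * φ P * ε := by
            refine Finset.sum_congr rfl fun P _ => ?_
            have hterm2 : ∀ Q, φ P * φ Q * (if P = Q then ε else 0)
                = if P = Q then φ P * φ Q * ε else 0 := by
              intro Q; by_cases h : P = Q
              · rw [if_pos h, if_pos h]
              · rw [if_neg h, if_neg h]; ring
            rw [Finset.sum_congr rfl fun Q _ => hterm2 Q]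
            rw [Finset.sum_ite_eq]
            simp
        _ = ε * ∑ P, φ P * φ P := by
            rw [Finset.mul_sum]
            exact Finset.sum_congr rfl fun P _ => by ring
    have hApos : 0 ≤ ∑ P, ∑ Q, φ P * φ Q * MM (σ P) (σ Q) := by
      rw [Sf_pushforward σ (fun S T => MM S T) φ]
      have := sf_nonneg hM (fun S => ∑ i ∈ Finset.univ.filter (fun i => σ i = S), φ i)
      simpa [Sf] using this
    have hBpos : 0 < ∑ P, φ P * φ P := by
      obtain ⟨P, hP⟩ := Function.ne_iff.1 hφ
      exact Finset.sum_pos' (fun Q _ => mul_self_nonneg _)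
        ⟨P, Finset.mem_univ P, mul_self_pos.2 hP⟩
    rw [split]
    have := mul_pos hε hBpos
    linarith
  obtain ⟨N, hNq, hNspec⟩ := glue f P₁ P₂ hsym hcov
    (fun φ hs hne => bagpos (gone n x₀) (gone_card x₀).1 φ hs hne)
    (fun φ hs hne => bagpos (gtwo n x₀) (gtwo_parity x₀) φ hs hne)
  -- the folding map into even sets
  have hρaux : ∀ U : Finset (Fin n), ¬ (U.card % 2 = 0) → (U ∆ {x₀}).card % 2 = 0 := by
    intro U h
    have h1 := card_symmDiff_aux U ({x₀} : Finset (Fin n))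
    have h2 : ({x₀} : Finset (Fin n)).card = 1 := Finset.card_singleton x₀
    omega
  set ρ : Finset (Fin n) → {P : Finset (Fin n) // P.card % 2 = 0} := fun U =>
    if h : U.card % 2 = 0 then ⟨U, h⟩ else ⟨U ∆ {x₀}, hρaux U h⟩ with hρ
  have hρpair : ∀ (U A : Finset (Fin n)), A.card = 2 →
      (ρ (U ∆ A) : Finset (Fin n)) = (ρ U : Finset (Fin n)) ∆ A := by
    intro U A hA
    have hpar : (U ∆ A).card % 2 = U.card % 2 := by
      have := card_symmDiff_aux U A; omega
    by_cases h : U.card % 2 = 0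
    · have h' : (U ∆ A).card % 2 = 0 := by omega
      simp only [hρ, dif_pos h, dif_pos h']
    · have h' : ¬ ((U ∆ A).card % 2 = 0) := by omega
      simp only [hρ, dif_neg h, dif_neg h']
      exact symmDiff_right_comm U A {x₀}
  -- the weights
  set μ : Finset (Fin n) → ℝ := fun s =>
    ∑ U : Finset (Fin n), ∑ V : Finset (Fin n), chi s U * chi s V * N (ρ U) (ρ V) with hμ
  have hμpos : ∀ s, 0 ≤ μ s := by
    intro s
    simp only [hμ]
    rw [Sf_pushforward ρ N (chi s)]
    exact hNq _
  -- the key Fourier computation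
  have key : ∀ A : Finset (Fin n),
      ∑ s : Finset (Fin n), μ s * chi s A
        = (2:ℝ)^n * ∑ U : Finset (Fin n), N (ρ U) (ρ (U ∆ A)) := by
    intro A
    calc ∑ s : Finset (Fin n), μ s * chi s A
        = ∑ s : Finset (Fin n), ∑ U : Finset (Fin n), ∑ V : Finset (Fin n),
            chi s U * chi s V * N (ρ U) (ρ V) * chi s A := by
          refine Finset.sum_congr rfl fun s _ => ?_
          simp only [hμ]
          rw [Finset.sum_mul]
          exact Finset.sum_congr rfl fun U _ => by rw [Finset.sum_mul]
      _ = ∑ U : Finset (Fin n), ∑ V : Finset (Fin n), ∑ s : Finset (Fin n),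
            chi s U * chi s V * N (ρ U) (ρ V) * chi s A := by
          rw [Finset.sum_comm]
          exact Finset.sum_congr rfl fun U _ => Finset.sum_comm
      _ = ∑ U : Finset (Fin n), ∑ V : Finset (Fin n),
            N (ρ U) (ρ V) * ∑ s : Finset (Fin n), chi s (U ∆ V ∆ A) := by
          refine Finset.sum_congr rfl fun U _ => Finset.sum_congr rfl fun V _ => ?_
          rw [Finset.mul_sum]
          refine Finset.sum_congr rfl fun s _ => ?_
          rw [← chi_mul, ← chi_mul]
          ring
      _ = ∑ U : Finset (Fin n), ∑ V : Finset (Fin n),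
            N (ρ U) (ρ V) * (if U ∆ V ∆ A = ∅ then (2:ℝ)^n else 0) := by
          refine Finset.sum_congr rfl fun U _ => Finset.sum_congr rfl fun V _ => ?_
          rw [sum_chi]
      _ = ∑ U : Finset (Fin n), (2:ℝ)^n * N (ρ U) (ρ (U ∆ A)) := by
          refine Finset.sum_congr rfl fun U _ => ?_
          have hiff : ∀ V : Finset (Fin n), (U ∆ V ∆ A = ∅) ↔ V = U ∆ A := by
            intro V
            rw [← Finset.bot_eq_empty, symmDiff_eq_bot]
            constructor
            · intro h
              calc V = U ∆ (U ∆ V) := (symmDiff_symmDiff_cancel_left U V).symm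
                _ = U ∆ A := by rw [h]
            · intro h
              rw [h, symmDiff_symmDiff_cancel_left]
          have hterm : ∀ V, N (ρ U) (ρ V) * (if U ∆ V ∆ A = ∅ then (2:ℝ)^n else 0)
              = if V = U ∆ A then (2:ℝ)^n * N (ρ U) (ρ V) else 0 := by
            intro V
            by_cases h : V = U ∆ A
            · rw [if_pos ((hiff V).2 h), if_pos h]; ring
            · rw [if_neg (fun hc => h ((hiff V).1 hc)), if_neg h]; ring
          rw [Finset.sum_congr rfl fun V _ => hterm V]
          rw [Finset.sum_ite_eq' Finset.univ (U ∆ A) (fun V => (2:ℝ)^n * N (ρ U) (ρ V))]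
          simp
      _ = (2:ℝ)^n * ∑ U : Finset (Fin n), N (ρ U) (ρ (U ∆ A)) := by
          rw [Finset.mul_sum]
  -- diagonal entries
  have hNdiag : ∀ U : Finset (Fin n), N (ρ U) (ρ U) = 1 + ε := by
    intro U
    have hval : N (ρ U) (ρ U) = f (ρ U) (ρ U) := by
      rcases hcov (ρ U) with h | h
      · exact hNspec _ _ (Or.inl ⟨h, h⟩)
      · exact hNspec _ _ (Or.inr ⟨h, h⟩)
    rw [hval]
    simp only [hf]
    rw [symmDiff_self, show ((⊥ : Finset (Fin n))) = ∅ from rfl, hy0]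
    simp
  -- pair entries
  have hNpair : ∀ (U : Finset (Fin n)) (p : {p : Fin n × Fin n // p.1 < p.2}),
      N (ρ U) (ρ (U ∆ {p.1.1, p.1.2})) = ℓ p := by
    intro U p
    have hne : (p : Fin n × Fin n).1 ≠ (p : Fin n × Fin n).2 := Fin.ne_of_lt p.prop
    have hA2 : ({p.1.1, p.1.2} : Finset (Fin n)).card = 2 := Finset.card_pair hne
    have hval := hρpair U _ hA2
    have hedge := bag_edge x₀ ((ρ U) : Finset (Fin n)) {p.1.1, p.1.2} (ρ U).prop hA2
    have hspec : N (ρ U) (ρ (U ∆ {p.1.1, p.1.2})) = f (ρ U) (ρ (U ∆ {p.1.1, p.1.2})) := by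
      rcases hedge with ⟨h1, h2⟩ | ⟨h1, h2⟩
      · refine hNspec _ _ (Or.inl ⟨h1, ?_⟩)
        show (gone n x₀ ∆ ((ρ (U ∆ {p.1.1, p.1.2})) : Finset (Fin n))).card ≤ (n+1)/2
        rw [hval]; exact h2
      · refine hNspec _ _ (Or.inr ⟨h1, ?_⟩)
        show (gtwo n x₀ ∆ ((ρ (U ∆ {p.1.1, p.1.2})) : Finset (Fin n))).card ≤ (n+1)/2
        rw [hval]; exact h2
    rw [hspec]
    simp only [hf]
    have hneq : ρ U ≠ ρ (U ∆ {p.1.1, p.1.2}) := by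
      intro hc
      have hv : ((ρ U) : Finset (Fin n)) ∆ {p.1.1, p.1.2} = ((ρ U) : Finset (Fin n)) := by
        rw [← hval, ← hc]
      have hbot := symmDiff_eq_left.1 hv
      rw [show ((⊥ : Finset (Fin n))) = ∅ from rfl] at hbot
      rw [hbot] at hA2
      simp at hA2
    rw [if_neg hneq, add_zero, hval, symmDiff_symmDiff_cancel_left, hyp p]
  -- total mass
  have hcard : (Finset.univ : Finset (Finset (Fin n))).card = 2^n := by
    rw [Finset.card_univ, Fintype.card_finset, Fintype.card_fin]
  have hmass : ∑ s : Finset (Fin n), μ s = (2:ℝ)^n * ((2:ℝ)^n * (1+ε)) := by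
    have h := key ∅
    have hL : ∑ s : Finset (Fin n), μ s * chi s ∅ = ∑ s : Finset (Fin n), μ s := by
      exact Finset.sum_congr rfl fun s _ => by rw [chi_empty, mul_one]
    have hR : ∑ U : Finset (Fin n), N (ρ U) (ρ (U ∆ ∅)) = (2:ℝ)^n * (1+ε) := by
      have : ∀ U : Finset (Fin n), N (ρ U) (ρ (U ∆ ∅)) = 1 + ε := by
        intro U
        rw [show U ∆ ∅ = U by rw [← Finset.bot_eq_empty, symmDiff_bot]]
        exact hNdiag U
      rw [Finset.sum_congr rfl fun U _ => this U, Finset.sum_const, hcard]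
      simp [nsmul_eq_mul]
      ring
    rw [← hL, h, hR]
  -- conclude via center of mass
  have hsum_pos : 0 < ∑ s : Finset (Fin n), μ s := by
    rw [hmass]; positivity
  have hz : ∀ s : Finset (Fin n),
      (fun p : {p : Fin n × Fin n // p.1 < p.2} => sgn s p.1.1 * sgn s p.1.2) ∈
      {ℓ : {p : Fin n × Fin n // p.1 < p.2} → ℝ |
        ∃ x : Fin n → ℝ, (∀ i, x i = 1 ∨ x i = -1) ∧
          ℓ = fun p => x p.1.1 * x p.1.2} := by
    intro s
    refine ⟨sgn s, fun i => ?_, rfl⟩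
    unfold sgn
    by_cases h : i ∈ s
    · exact Or.inr (if_pos h)
    · exact Or.inl (if_neg h)
  have hcm := Finset.centerMass_mem_convexHull (Finset.univ : Finset (Finset (Fin n)))
      (fun s _ => hμpos s) hsum_pos (fun s _ => hz s)
  have heq : (Finset.univ : Finset (Finset (Fin n))).centerMass μ
      (fun s => fun p : {p : Fin n × Fin n // p.1 < p.2} => sgn s p.1.1 * sgn s p.1.2)
      = (1+ε)⁻¹ • ℓ := by
    rw [Finset.centerMass]
    funext p
    have hne : (p : Fin n × Fin n).1 ≠ (p : Fin n × Fin n).2 := Fin.ne_of_lt p.prop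
    have happ : ((∑ s : Finset (Fin n), μ s)⁻¹ •
        ∑ s : Finset (Fin n), μ s • (fun p : {p : Fin n × Fin n // p.1 < p.2} =>
          sgn s p.1.1 * sgn s p.1.2)) p
        = (∑ s : Finset (Fin n), μ s)⁻¹ *
          ∑ s : Finset (Fin n), μ s * (sgn s p.1.1 * sgn s p.1.2) := by
      rw [Pi.smul_apply, smul_eq_mul, Finset.sum_apply]
      congr 1
    rw [happ]
    have hchi : ∀ s : Finset (Fin n),
        μ s * (sgn s p.1.1 * sgn s p.1.2) = μ s * chi s {p.1.1, p.1.2} := by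
      intro s
      congr 1
      rw [chi, Finset.prod_pair hne]
    rw [Finset.sum_congr rfl fun s _ => hchi s, key {p.1.1, p.1.2}]
    have hRR : ∑ U : Finset (Fin n), N (ρ U) (ρ (U ∆ {p.1.1, p.1.2})) = (2:ℝ)^n * ℓ p := by
      rw [Finset.sum_congr rfl fun U _ => hNpair U p, Finset.sum_const, hcard]
      simp [nsmul_eq_mul]
    rw [hRR, hmass, Pi.smul_apply, smul_eq_mul]
    have h2 : (0:ℝ) < (2:ℝ)^n := by positivity
    have h3 : (0:ℝ) < 1 + ε := by linarith
    field_simp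
  rw [← heq]
  exact hcm


end CutLift

end CutLiftAux

open CutLift in
/-- **PSD lift of the cut polytope (Corollary 3).** The cut polytope
`CUT_n = conv{(x_i x_j)_{i<j} : x ∈ {-1,1}^n}` equals the projection of a slice of the
cone of real PSD matrices indexed by `T`, the family of subsets `S ⊆ [n]` with
`|S| ≤ ⌈n/2⌉` and `|S| ≡ ⌈n/2⌉ (mod 2)`: a point `ℓ` lies in `CUT_n` iff there is a
family `y = (y_A)` (indexed by symmetric differences of members of `T`) with `y_∅ = 1`,
`y_{{i,j}} = ℓ_{ij}`, and `[y_{S Δ S'}]_{S,S' ∈ T}` positive semidefinite. -/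
theorem cut_polytope_psd_lift (n : ℕ) (hn : 2 ≤ n) :
    convexHull ℝ {ℓ : {p : Fin n × Fin n // p.1 < p.2} → ℝ |
        ∃ x : Fin n → ℝ, (∀ i, x i = 1 ∨ x i = -1) ∧
          ℓ = fun p => x p.1.1 * x p.1.2} =
    {ℓ : {p : Fin n × Fin n // p.1 < p.2} → ℝ |
      ∃ y : Finset (Fin n) → ℝ,
        y ∅ = 1 ∧
        (∀ p : {p : Fin n × Fin n // p.1 < p.2}, y {p.1.1, p.1.2} = ℓ p) ∧
        (Matrix.of fun s t : {s : Finset (Fin n) //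
              s.card % 2 = ((n + 1) / 2) % 2 ∧ s.card ≤ (n + 1) / 2} =>
            y ((s : Finset (Fin n)) ∆ (t : Finset (Fin n)))).PosSemidef} := by
  
  classical
  apply Set.Subset.antisymm
  · -- easy inclusion
    apply convexHull_min
    · rintro ℓ ⟨x, hx, hℓ⟩
      have hxx : ∀ i, x i * x i = 1 := fun i => by
        rcases hx i with h | h <;> rw [h] <;> norm_num
      refine ⟨fun A => ∏ i ∈ A, x i, Finset.prod_empty, fun p => ?_, ?_⟩
      · rw [hℓ]
        exact Finset.prod_pair (Fin.ne_of_lt p.prop)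
      · refine posSemidef_of _ (fun s t => by
          simp only [Matrix.of_apply]; rw [symmDiff_comm]) ?_
        intro φ
        have hterm : ∀ s t : {s : Finset (Fin n) //
            s.card % 2 = ((n + 1) / 2) % 2 ∧ s.card ≤ (n + 1) / 2},
            φ s * φ t * (∏ i ∈ (s : Finset (Fin n)) ∆ (t : Finset (Fin n)), x i)
              = (φ s * ∏ i ∈ (s : Finset (Fin n)), x i) *
                (φ t * ∏ i ∈ (t : Finset (Fin n)), x i) := by
          intro s t
          rw [← prod_symmDiff x hxx]
          ring
        calc ∑ s, ∑ t, φ s * φ t *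
              (Matrix.of fun s t : {s : Finset (Fin n) //
                s.card % 2 = ((n + 1) / 2) % 2 ∧ s.card ≤ (n + 1) / 2} =>
                (fun A => ∏ i ∈ A, x i) ((s : Finset (Fin n)) ∆ (t : Finset (Fin n)))) s t
            = ∑ s, ∑ t, (φ s * ∏ i ∈ (s : Finset (Fin n)), x i) *
                (φ t * ∏ i ∈ (t : Finset (Fin n)), x i) := by
              refine Finset.sum_congr rfl fun s _ => Finset.sum_congr rfl fun t _ => ?_
              simp only [Matrix.of_apply]
              exact hterm s t
          _ = (∑ s, φ s * ∏ i ∈ (s : Finset (Fin n)), x i) *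
              (∑ t, φ t * ∏ i ∈ (t : Finset (Fin n)), x i) :=
              (Finset.sum_mul_sum _ _ _ _).symm
          _ ≥ 0 := mul_self_nonneg _
    · -- convexity
      rintro u ⟨y₁, hy₁0, hy₁p, hy₁M⟩ v ⟨y₂, hy₂0, hy₂p, hy₂M⟩ a b ha hb hab
      refine ⟨fun A => a * y₁ A + b * y₂ A, by show a * y₁ ∅ + b * y₂ ∅ = 1; rw [hy₁0, hy₂0]; linarith, fun p => ?_, ?_⟩
      · simp only [hy₁p p, hy₂p p]
        simp [Pi.add_apply, Pi.smul_apply, smul_eq_mul]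
      · refine posSemidef_of _ (fun s t => by
          simp only [Matrix.of_apply]; rw [symmDiff_comm]) ?_
        intro φ
        have q1 := sf_nonneg hy₁M φ
        have q2 := sf_nonneg hy₂M φ
        simp only [Matrix.of_apply] at q1 q2 ⊢
        have expand : ∑ s, ∑ t, φ s * φ t *
              (a * y₁ ((s : Finset (Fin n)) ∆ (t : Finset (Fin n)))
                + b * y₂ ((s : Finset (Fin n)) ∆ (t : Finset (Fin n))))
            = a * (∑ s, ∑ t, φ s * φ t * y₁ ((s : Finset (Fin n)) ∆ (t : Finset (Fin n))))
              + b * (∑ s, ∑ t, φ s * φ t * y₂ ((s : Finset (Fin n)) ∆ (t : Finset (Fin n)))) := by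
          rw [Finset.mul_sum, Finset.mul_sum, ← Finset.sum_add_distrib]
          refine Finset.sum_congr rfl fun s _ => ?_
          rw [Finset.mul_sum, Finset.mul_sum, ← Finset.sum_add_distrib]
          refine Finset.sum_congr rfl fun t _ => by ring
        rw [expand]
        have := mul_nonneg ha q1
        have := mul_nonneg hb q2
        linarith
  · -- hard inclusion
    intro ℓ hℓ
    obtain ⟨y, hy0, hyp, hM⟩ := hℓ
    have hfin : ({ℓ : {p : Fin n × Fin n // p.1 < p.2} → ℝ |
        ∃ x : Fin n → ℝ, (∀ i, x i = 1 ∨ x i = -1) ∧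
          ℓ = fun p => x p.1.1 * x p.1.2}).Finite := by
      have himg : {ℓ : {p : Fin n × Fin n // p.1 < p.2} → ℝ |
          ∃ x : Fin n → ℝ, (∀ i, x i = 1 ∨ x i = -1) ∧
            ℓ = fun p => x p.1.1 * x p.1.2} ⊆
          (fun (x : Fin n → ℝ) => fun p : {p : Fin n × Fin n // p.1 < p.2} =>
            x p.1.1 * x p.1.2) ''
            (Set.pi Set.univ fun _ : Fin n => ({1, -1} : Set ℝ)) := by
        rintro ℓ' ⟨x, hx, rfl⟩
        exact ⟨x, fun i _ => by rcases hx i with h | h <;> simp [h], rfl⟩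
      exact Set.Finite.subset (Set.Finite.image _
        (Set.Finite.pi fun _ => (Set.finite_singleton (1:ℝ)).insert (-1) |>.subset
          (by intro z hz; rcases hz with h | h
              · exact Or.inr h
              · exact Or.inl h))) himg
    have hclosed := hfin.isClosed_convexHull ℝ
    have main : ∀ ε : ℝ, 0 < ε → (1+ε)⁻¹ • ℓ ∈ convexHull ℝ
        {ℓ : {p : Fin n × Fin n // p.1 < p.2} → ℝ |
          ∃ x : Fin n → ℝ, (∀ i, x i = 1 ∨ x i = -1) ∧
            ℓ = fun p => x p.1.1 * x p.1.2} :=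
      fun ε hε => CutLift.main_eps n hn y ℓ hy0 hyp hM ε hε
    -- pass to the limit
    have hseq : Filter.Tendsto
        (fun k : ℕ => ((1:ℝ) + ((k:ℝ)+1)⁻¹)⁻¹ • ℓ) Filter.atTop (nhds ℓ) := by
      have h1 : Filter.Tendsto (fun k : ℕ => ((k:ℝ)+1)⁻¹) Filter.atTop (nhds 0) := by
        exact tendsto_one_div_add_atTop_nhds_zero_nat.congr (fun k => one_div _)
      have h2 : Filter.Tendsto (fun k : ℕ => (1:ℝ) + ((k:ℝ)+1)⁻¹)
          Filter.atTop (nhds 1) := by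
        simpa using Filter.Tendsto.const_add 1 h1
      have h3 : Filter.Tendsto (fun k : ℕ => ((1:ℝ) + ((k:ℝ)+1)⁻¹)⁻¹)
          Filter.atTop (nhds 1) := by
        simpa using h2.inv₀ one_ne_zero
      simpa using h3.smul_const ℓ
    refine hclosed.mem_of_tendsto hseq (Filter.Eventually.of_forall fun k => ?_)
    exact main _ (by positivity)
end

section
/- Let N > 2 be an integer. Write N = Σ_{j=1}^l 2^{k_j} where k_1 < k_2 < … < k_l are the positions of the nonzero digits in the binary expansion of N, and let k be the largest integer with 2^k < N (so k = k_1 − 1 if N is a power of two, and k = k_l otherwise). Let T ⊆ ℤ_N be the image modulo N of the set of integers {0} ∪ {−2^i, 2^i : i = 0, …, k−1} ∪ { Σ_{j=1}^i 2^{k_j} : i = 1, …, l−2 }. Then |T| ≤ 3·log₂(N), and the cycle graph C_N admits a chordal cover Γ such that for every maximal clique C of Γ there exists t ∈ ℤ_N with t + C := {t + c : c ∈ C} ⊆ T. -/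
open scoped Classical

open SimpleGraph Walk in
lemma peo_chordal {V : Type*} (Γ : SimpleGraph V) (f : V → ℕ)
    (hdiff : ∀ x y, Γ.Adj x y → f x ≠ f y)
    (hclique : ∀ v w₁ w₂, Γ.Adj v w₁ → Γ.Adj v w₂ → f v < f w₁ → f v < f w₂ →
      w₁ = w₂ ∨ Γ.Adj w₁ w₂) :
    IsChordal Γ := by
  intro u c hc hlen
  obtain ⟨v, hv⟩ : ∃ v, v ∈ c.support.argmin f := by
    cases h : c.support.argmin f with
    | none => exact absurd (List.argmin_eq_none.mp h) c.support_ne_nil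
    | some v => exact ⟨v, by simp [h, Option.mem_def]⟩
  have hvmem : v ∈ c.support := List.argmin_mem hv
  have hmin : ∀ a ∈ c.support, f v ≤ f a := fun a ha => List.le_of_mem_argmin ha hv
  have hc' : (c.rotate v hvmem).IsCycle := hc.rotate hvmem
  have hsupR : (c.rotate v hvmem).support.tail ~r c.support.tail := support_rotate c v hvmem
  have hedgR : (c.rotate v hvmem).edges ~r c.edges := rotate_edges c v hvmem
  have hlen' : 4 ≤ (c.rotate v hvmem).length := by
    have h1 := hedgR.perm.length_eq
    rw [length_edges, length_edges] at h1
    omega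
  have memtail : ∀ (w : V) (p : Γ.Walk w w), ¬ p.Nil →
      ∀ x, x ∈ p.support ↔ x ∈ p.support.tail := by
    intro w p hp x
    obtain ⟨a, h, q, rfl⟩ := not_nil_iff.mp hp
    simp only [support_cons, List.tail_cons, List.mem_cons]
    constructor
    · rintro (rfl | h2)
      · exact q.end_mem_support
      · exact h2
    · intro h2; right; exact h2
  have hsup : ∀ x, x ∈ (c.rotate v hvmem).support ↔ x ∈ c.support := by
    intro x
    rw [memtail _ _ hc'.not_nil, memtail _ _ hc.not_nil, hsupR.mem_iff]
  set c' := c.rotate v hvmem with hc'def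
  clear_value c'
  obtain ⟨x, hvx, q, rfl⟩ := not_nil_iff.mp hc'.not_nil
  have hqpath : q.IsPath := ((cons_isCycle_iff q hvx).mp hc').1
  have hxy : ¬ (q.reverse).Nil := not_nil_of_ne hvx.ne
  obtain ⟨y, hvy, r, hqr⟩ := not_nil_iff.mp hxy
  have hrpath : r.IsPath ∧ v ∉ r.support := by
    have h1 : (q.reverse).IsPath := hqpath.reverse
    rw [hqr, cons_isPath_iff] at h1
    exact ⟨h1.1, h1.2⟩
  have hxmem : x ∈ (Walk.cons hvx q).support := by simp
  have hymem : y ∈ (Walk.cons hvx q).support := by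
    have h1 : y ∈ q.reverse.support := by rw [hqr]; simp
    rw [support_reverse, List.mem_reverse] at h1
    simp [h1]
  have hfx : f v < f x := lt_of_le_of_ne (hmin x ((hsup x).mp hxmem)) (hdiff v x hvx)
  have hfy : f v < f y := lt_of_le_of_ne (hmin y ((hsup y).mp hymem)) (hdiff v y hvy)
  have hlenq : 2 ≤ r.length := by
    have h1 : (Walk.cons hvx q).length = q.length + 1 := by simp
    have h2 : q.length = r.length + 1 := by
      have h3 := congrArg Walk.length hqr
      rwa [length_reverse, length_cons] at h3
    omega
  have hxy2 : x ≠ y := by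
    intro he
    have h2 : (r.copy he.symm rfl).IsPath := (Walk.isPath_copy r he.symm rfl).mpr hrpath.1
    have h3 := congrArg Walk.length (isPath_iff_eq_nil.mp h2)
    simp only [Walk.length_copy, Walk.length_nil] at h3
    omega
  rcases hclique v x y hvx hvy hfx hfy with h | hadj
  · exact absurd h hxy2
  refine ⟨x, y, (hsup x).mp hxmem, (hsup y).mp hymem, hadj, ?_⟩
  rw [← hedgR.mem_iff]
  intro hmem
  simp only [edges_cons, List.mem_cons] at hmem
  rcases hmem with hmem | hmem
  · rw [Sym2.eq_iff] at hmem
    rcases hmem with ⟨h1, h2⟩ | ⟨h1, h2⟩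
    · rw [h1] at hfx; exact lt_irrefl _ hfx
    · rw [h2] at hfy; exact lt_irrefl _ hfy
  have hmem2 : s(x, y) ∈ q.reverse.edges := by rw [edges_reverse, List.mem_reverse]; exact hmem
  rw [hqr] at hmem2
  simp only [edges_cons, List.mem_cons] at hmem2
  rcases hmem2 with hmem2 | hmem2
  · rw [Sym2.eq_iff] at hmem2
    rcases hmem2 with ⟨h1, h2⟩ | ⟨h1, h2⟩
    · rw [h1] at hfx; exact lt_irrefl _ hfx
    · exact hxy2 h1
  obtain ⟨z, hyz, r', rfl⟩ := not_nil_iff.mp (not_nil_of_ne (Ne.symm hxy2) : ¬ r.Nil)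
  have hr'path : r'.IsPath ∧ y ∉ r'.support := by
    have h1 := hrpath.1
    rw [cons_isPath_iff] at h1
    exact h1
  simp only [edges_cons, List.mem_cons] at hmem2
  rcases hmem2 with hmem2 | hmem2
  · rw [Sym2.eq_iff] at hmem2
    rcases hmem2 with ⟨h1, h2⟩ | ⟨h1, h2⟩
    · exact hxy2 h1
    · -- h1 : x = z
      have h4 : (r'.copy h1.symm rfl).IsPath := (Walk.isPath_copy r' h1.symm rfl).mpr hr'path.1
      have h5 := congrArg Walk.length (isPath_iff_eq_nil.mp h4)
      simp only [Walk.length_copy, Walk.length_nil] at h5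
      simp only [Walk.length_cons] at hlenq
      omega
  · exact hr'path.2 (r'.snd_mem_support_of_mem_edges hmem2)


namespace CT

/-- number of arcs -/
def mm (l : ℕ) : ℕ := max l 2

/-- exponent of the length of arc `i`, for `i = 1..mm l` -/
def EE (l k : ℕ) (kk : ℕ → ℕ) (i : ℕ) : ℕ :=
  if l ≤ 1 then k
  else if i ≤ l - 2 then kk (i - 1)
  else if i = l - 1 then kk (l - 1)
  else kk (l - 2)

/-- boundary points: `bnd 0 = 0`, ..., `bnd (mm l) = N` -/
def bnd (l k : ℕ) (kk : ℕ → ℕ) (i : ℕ) : ℕ := ∑ j ∈ Finset.range i, 2 ^ EE l k kk (j + 1)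

structure Hyp (N l k : ℕ) (kk : ℕ → ℕ) : Prop where
  hN : 2 < N
  hmono : ∀ i j, i < j → j < l → kk i < kk j
  hsum : N = ∑ j ∈ Finset.range l, 2 ^ kk j
  hk : 2 ^ k < N
  hkmax : ∀ k', 2 ^ k' < N → k' ≤ k

variable {N l k : ℕ} {kk : ℕ → ℕ}

lemma two_pow_sum (n : ℕ) : ∑ t ∈ Finset.range n, 2 ^ t = 2 ^ n - 1 := by
  induction n with
  | zero => simp
  | succ n ih =>
    rw [Finset.sum_range_succ, ih]
    have : 1 ≤ 2 ^ n := Nat.one_le_two_pow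
    have : 2 ^ (n + 1) = 2 ^ n + 2 ^ n := by ring
    omega

lemma Hyp.l_pos (H : Hyp N l k kk) : 1 ≤ l := by
  rcases Nat.eq_zero_or_pos l with h | h
  · exfalso
    have h1 := H.hsum
    rw [h] at h1
    simp at h1
    have := H.hN
    omega
  · exact h

lemma Hyp.k_pos (H : Hyp N l k kk) : 1 ≤ k := H.hkmax 1 (by have := H.hN; omega)

lemma Hyp.kk_le (H : Hyp N l k kk) {j : ℕ} (hj : j < l) : kk j ≤ kk (l - 1) := by
  rcases Nat.lt_or_ge j (l - 1) with h | h
  · exact le_of_lt (H.hmono j (l - 1) h (by omega))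
  · have : j = l - 1 := by omega
    subst this; exact le_rfl

/-- each term is at most the total -/
lemma Hyp.pow_le_N (H : Hyp N l k kk) {j : ℕ} (hj : j < l) : 2 ^ kk j ≤ N := by
  rw [H.hsum]
  exact Finset.single_le_sum (f := fun j => 2 ^ kk j) (fun _ _ => Nat.zero_le _)
    (Finset.mem_range.mpr hj)

lemma Hyp.N_lt (H : Hyp N l k kk) : N < 2 ^ (kk (l - 1) + 1) := by
  have hinj : Set.InjOn kk (Finset.range l) := by
    intro a ha b hb hab
    simp only [Finset.coe_range, Set.mem_Iio] at ha hb
    by_contra hne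
    rcases Nat.lt_or_ge a b with h | h
    · exact absurd hab (Nat.ne_of_lt (H.hmono a b h hb))
    · have : b < a := by omega
      exact absurd hab.symm (Nat.ne_of_lt (H.hmono b a this ha))
  have h1 : N = ∑ t ∈ (Finset.range l).image kk, 2 ^ t := by
    rw [H.hsum, Finset.sum_image (fun a ha b hb hab => hinj ha hb hab)]
  have h2 : (Finset.range l).image kk ⊆ Finset.range (kk (l - 1) + 1) := by
    intro t ht
    simp only [Finset.mem_image, Finset.mem_range] at ht ⊢
    obtain ⟨j, hj, rfl⟩ := ht
    have := H.kk_le hj; omega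
  have h3 : ∑ t ∈ (Finset.range l).image kk, 2 ^ t
      ≤ ∑ t ∈ Finset.range (kk (l - 1) + 1), 2 ^ t :=
    Finset.sum_le_sum_of_subset h2
  rw [two_pow_sum] at h3
  have : 1 ≤ 2 ^ (kk (l - 1) + 1) := Nat.one_le_two_pow
  omega

lemma Hyp.kk_top (H : Hyp N l k kk) (hl : 2 ≤ l) : kk (l - 1) = k := by
  have h1 : 2 ^ kk (l - 1) < N := by
    have hle : 2 ^ kk (l - 1) ≤ N := H.pow_le_N (by omega)
    rcases Nat.lt_or_ge (2 ^ kk (l - 1)) N with h | h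
    · exact h
    · exfalso
      have heq : 2 ^ kk (l - 1) = N := by omega
      -- but N also contains the term for j = 0
      have h0 : 2 ^ kk 0 + 2 ^ kk (l - 1) ≤ N := by
        rw [H.hsum]
        have : ({0, l - 1} : Finset ℕ) ⊆ Finset.range l := by
          intro x hx; simp at hx; rcases hx with rfl | rfl <;> simp <;> omega
        calc 2 ^ kk 0 + 2 ^ kk (l - 1) = ∑ j ∈ ({0, l - 1} : Finset ℕ), 2 ^ kk j := by
              rw [Finset.sum_pair (by omega)]
          _ ≤ _ := Finset.sum_le_sum_of_subset this
      have : 1 ≤ 2 ^ kk 0 := Nat.one_le_two_pow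
      omega
  have h2 : kk (l - 1) ≤ k := H.hkmax _ h1
  have h3 : k ≤ kk (l - 1) := by
    by_contra h
    have : kk (l - 1) + 1 ≤ k := by omega
    have : 2 ^ (kk (l - 1) + 1) ≤ 2 ^ k := Nat.pow_le_pow_right (by norm_num) this
    have := H.N_lt
    have := H.hk
    omega
  omega

lemma Hyp.pow_l1 (H : Hyp N l k kk) (hl : l = 1) : N = 2 ^ (k + 1) ∧ kk 0 = k + 1 := by
  have h1 : N = 2 ^ kk 0 := by rw [H.hsum, hl]; simp
  have h2 : kk 0 ≤ k + 1 := by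
    by_contra h
    have : k + 2 ≤ kk 0 := by omega
    have h3 : 2 ^ (k + 1) < 2 ^ kk 0 := Nat.pow_lt_pow_right (by norm_num) (by omega)
    have h4 : 2 ^ (k + 1) < N := by omega
    have := H.hkmax _ h4; omega
  have h3 : k < kk 0 := by
    have := H.hk; rw [h1] at this
    exact (Nat.pow_lt_pow_iff_right (by norm_num)).mp this
  have : kk 0 = k + 1 := by omega
  exact ⟨by rw [h1, this], this⟩

lemma Hyp.EE_le (H : Hyp N l k kk) (i : ℕ) : EE l k kk i ≤ k := by
  unfold EE
  split
  · exact le_rfl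
  · rename_i hl
    have hl2 : 2 ≤ l := by omega
    have htop := H.kk_top hl2
    split
    · rename_i h; rw [← htop]; exact H.kk_le (by omega)
    · split
      · rw [htop]
      · rw [← htop]; exact H.kk_le (by omega)

lemma Hyp.EE_last (H : Hyp N l k kk) (hl : 2 ≤ l) :
    EE l k kk (mm l) = kk (l - 2) ∧ kk (l - 2) < k := by
  have hm : mm l = l := by unfold mm; omega
  constructor
  · unfold EE
    rw [hm]
    rw [if_neg (by omega), if_neg (by omega), if_neg (by omega)]
  · rw [← H.kk_top hl]
    exact H.hmono _ _ (by omega) (by omega)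

lemma bnd_succ (i : ℕ) : bnd l k kk (i + 1) = bnd l k kk i + 2 ^ EE l k kk (i + 1) := by
  unfold bnd; rw [Finset.sum_range_succ]

lemma bnd_zero : bnd l k kk 0 = 0 := by unfold bnd; simp

lemma bnd_strictMono : StrictMono (bnd l k kk) := by
  apply strictMono_nat_of_lt_succ
  intro n
  rw [bnd_succ]
  have : 1 ≤ 2 ^ EE l k kk (n + 1) := Nat.one_le_two_pow
  omega

lemma mm_ge2 : 2 ≤ mm l := by unfold mm; omega

lemma Hyp.bnd_m (H : Hyp N l k kk) : bnd l k kk (mm l) = N := by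
  rcases Nat.lt_or_ge l 2 with hl | hl
  · -- l = 1
    have hl1 : l = 1 := by have := H.l_pos; omega
    have hm : mm l = 2 := by unfold mm; omega
    obtain ⟨hN2, -⟩ := H.pow_l1 hl1
    rw [hm]
    unfold bnd EE
    rw [hl1]
    simp only [Finset.sum_range_succ, Finset.range_zero, Finset.sum_empty]
    norm_num
    rw [hN2]; ring
  · have hm : mm l = l := by unfold mm; omega
    rw [hm]
    have key : ∀ i, i ≤ l - 2 → bnd l k kk i = ∑ j ∈ Finset.range i, 2 ^ kk j := by
      intro i hi
      unfold bnd
      apply Finset.sum_congr rfl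
      intro j hj
      simp only [Finset.mem_range] at hj
      congr 1
      unfold EE
      rw [if_neg (by omega), if_pos (by omega)]
      simp
    have h1 : bnd l k kk l = bnd l k kk (l - 2) + 2 ^ EE l k kk (l - 1) + 2 ^ EE l k kk l := by
      have e1 : l = (l - 2) + 1 + 1 := by omega
      have e5 : l - 2 + 1 = l - 1 := by omega
      have e6 : l - 1 + 1 = l := by omega
      conv_lhs => rw [e1]
      rw [bnd_succ, bnd_succ, e5, e6]
    have e2 : EE l k kk (l - 1) = kk (l - 1) := by
      unfold EE; rw [if_neg (by omega), if_neg (by omega), if_pos rfl]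
    have e3 : EE l k kk l = kk (l - 2) := by
      unfold EE; rw [if_neg (by omega), if_neg (by omega), if_neg (by omega)]
    rw [h1, key _ le_rfl, e2, e3, H.hsum]
    have e4 : l = (l - 2) + 1 + 1 := by omega
    rw [e4, Finset.sum_range_succ, Finset.sum_range_succ, ← e4]
    have e5 : l - 2 + 1 = l - 1 := by omega
    rw [e5]
    ring

lemma Hyp.bnd_le_N (H : Hyp N l k kk) {i : ℕ} (hi : i ≤ mm l) : bnd l k kk i ≤ N := by
  rw [← H.bnd_m]
  exact bnd_strictMono.monotone hi

end CT

namespace CT2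
open CT
variable {N l k : ℕ} {kk : ℕ → ℕ}

/-- index of the arc containing `n` -/
def arcIdx (l k : ℕ) (kk : ℕ → ℕ) (n : ℕ) : ℕ :=
  Nat.findGreatest (fun i => bnd l k kk i ≤ n) (mm l - 1)

lemma arc_spec (H : Hyp N l k kk) {n : ℕ} (hn : n < N) :
    arcIdx l k kk n ≤ mm l - 1 ∧ bnd l k kk (arcIdx l k kk n) ≤ n ∧
      n < bnd l k kk (arcIdx l k kk n + 1) := by
  have h0 : bnd l k kk 0 ≤ n := by rw [bnd_zero]; omega
  have hle : arcIdx l k kk n ≤ mm l - 1 := Nat.findGreatest_le _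
  have hsp : bnd l k kk (arcIdx l k kk n) ≤ n :=
    Nat.findGreatest_spec (P := fun i => bnd l k kk i ≤ n) (Nat.zero_le (mm l - 1)) h0
  refine ⟨hle, hsp, ?_⟩
  rcases Nat.lt_or_ge (arcIdx l k kk n) (mm l - 1) with h | h
  · have hg := Nat.findGreatest_is_greatest (P := fun i => bnd l k kk i ≤ n)
      (n := mm l - 1) (k := arcIdx l k kk n + 1) (Nat.lt_succ_self _) (by omega)
    simp only [not_le] at hg
    exact hg
  · have he : arcIdx l k kk n = mm l - 1 := le_antisymm hle h
    rw [he]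
    have h2 : mm l - 1 + 1 = mm l := by have := mm_ge2 (l := l); omega
    rw [h2, H.bnd_m]
    exact hn

lemma arcIdx_eq (H : Hyp N l k kk) {i n : ℕ} (hi : i < mm l)
    (h1 : bnd l k kk i ≤ n) (h2 : n < bnd l k kk (i + 1)) : arcIdx l k kk n = i := by
  have hn : n < N := by
    have : bnd l k kk (i + 1) ≤ N := H.bnd_le_N (by omega)
    omega
  obtain ⟨ha1, ha2, ha3⟩ := arc_spec H hn
  have hle : i ≤ arcIdx l k kk n :=
    Nat.le_findGreatest (by omega) h1
  by_contra hne
  have hlt : i < arcIdx l k kk n := by omega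
  have : bnd l k kk (i + 1) ≤ bnd l k kk (arcIdx l k kk n) :=
    bnd_strictMono.monotone (by omega)
  omega

section Cast
variable (hN : 0 < N)

omit hN in
lemma castval {n : ℕ} (hn : n < N) : (↑n : ZMod N).val = n := by
  haveI : NeZero N := ⟨by omega⟩
  exact ZMod.val_cast_of_lt hn

include hN in
lemma cast_ne_zero {n : ℕ} (h1 : 0 < n) (h2 : n < N) : (↑n : ZMod N) ≠ 0 := by
  haveI : NeZero N := ⟨by omega⟩
  intro h
  have hv := castval (N := N) h2
  rw [h, ZMod.val_zero] at hv
  omega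

omit hN in
include hN in
lemma cast_ne {a b : ℕ} (hab : a < b) (hbN : b - a < N) :
    (↑a : ZMod N) ≠ ↑b := by
  intro h
  have h1 : a ≡ b [MOD N] := (ZMod.natCast_eq_natCast_iff a b N).mp h
  have h2 : N ∣ b - a := (Nat.modEq_iff_dvd' (by omega)).mp h1
  have h3 : 0 < b - a := by omega
  have := Nat.le_of_dvd h3 h2
  omega

omit hN in
lemma cast_inj' {a b : ℕ} (ha : a < N) (hb : b < N) (h : (↑a : ZMod N) = ↑b) : a = b := by
  have h1 := castval (N := N) ha
  have h2 := castval (N := N) hb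
  rw [h] at h1
  omega

omit hN in
lemma cast_val_eq (hN : 0 < N) (x : ZMod N) : (↑x.val : ZMod N) = x := by
  haveI : NeZero N := ⟨by omega⟩
  exact ZMod.natCast_rightInverse x

end Cast

/-- the elimination rank -/
def rnk (N l k : ℕ) (kk : ℕ → ℕ) (x : ZMod N) : ℕ :=
  if x = 0 then k + 1 + mm l
  else if bnd l k kk (arcIdx l k kk x.val) = x.val then k + 1 + arcIdx l k kk x.val
  else padicValNat 2 (x.val - bnd l k kk (arcIdx l k kk x.val))

lemma rnk_zero : rnk N l k kk 0 = k + 1 + mm l := by unfold rnk; simp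

lemma bnd_pos {i : ℕ} (hi : 1 ≤ i) : 0 < bnd l k kk i := by
  have := bnd_strictMono (l := l) (k := k) (kk := kk) (show 0 < i by omega)
  rw [bnd_zero] at this; omega

lemma bnd_lt_N (H : Hyp N l k kk) {i : ℕ} (hi : i < mm l) : bnd l k kk i < N := by
  rw [← H.bnd_m]; exact bnd_strictMono hi

lemma rnk_bnd (H : Hyp N l k kk) {i : ℕ} (h1 : 1 ≤ i) (h2 : i ≤ mm l - 1) :
    rnk N l k kk (↑(bnd l k kk i)) = k + 1 + i := by
  have hN : 0 < N := by have := H.hN; omega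
  have hm2 := mm_ge2 (l := l)
  have hlt : bnd l k kk i < N := bnd_lt_N H (by omega)
  have hx0 : (↑(bnd l k kk i) : ZMod N) ≠ 0 := cast_ne_zero hN (bnd_pos h1) hlt
  have hval : (↑(bnd l k kk i) : ZMod N).val = bnd l k kk i := castval hlt
  have hidx : arcIdx l k kk (bnd l k kk i) = i :=
    arcIdx_eq H (by omega) le_rfl (bnd_strictMono (Nat.lt_succ_self i))
  unfold rnk
  rw [if_neg hx0, hval, hidx, if_pos rfl]

lemma rnk_int (H : Hyp N l k kk) {i n : ℕ} (hi : i < mm l)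
    (h1 : bnd l k kk i < n) (h2 : n < bnd l k kk (i + 1)) :
    rnk N l k kk (↑n) = padicValNat 2 (n - bnd l k kk i) ∧ rnk N l k kk (↑n) < k := by
  have hN : 0 < N := by have := H.hN; omega
  have hnN : n < N := by have := H.bnd_le_N (show i + 1 ≤ mm l by omega); omega
  have hn0 : 0 < n := by omega
  have hx0 : (↑n : ZMod N) ≠ 0 := cast_ne_zero hN hn0 hnN
  have hval : (↑n : ZMod N).val = n := castval hnN
  have hidx : arcIdx l k kk n = i := arcIdx_eq H hi (by omega) h2
  have heq : rnk N l k kk (↑n) = padicValNat 2 (n - bnd l k kk i) := by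
    unfold rnk
    rw [if_neg hx0, hval, hidx, if_neg (by omega)]
  refine ⟨heq, ?_⟩
  rw [heq]
  set d := n - bnd l k kk i with hd
  have hd0 : 0 < d := by omega
  have hdlt : d < 2 ^ EE l k kk (i + 1) := by
    rw [bnd_succ] at h2; omega
  have hdvd : 2 ^ padicValNat 2 d ∣ d := pow_padicValNat_dvd
  have hle : 2 ^ padicValNat 2 d ≤ d := Nat.le_of_dvd hd0 hdvd
  have h3 : 2 ^ padicValNat 2 d < 2 ^ EE l k kk (i + 1) := by omega
  have hlt : padicValNat 2 d < EE l k kk (i + 1) :=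
    (Nat.pow_lt_pow_iff_right (by norm_num)).mp h3
  have := H.EE_le (i + 1)
  omega

lemma classify (H : Hyp N l k kk) (x : ZMod N) (hx : x ≠ 0) :
    (∃ i, 1 ≤ i ∧ i ≤ mm l - 1 ∧ x.val = bnd l k kk i ∧ rnk N l k kk x = k + 1 + i)
  ∨ (∃ i, i < mm l ∧ bnd l k kk i < x.val ∧ x.val < bnd l k kk (i + 1)
      ∧ rnk N l k kk x = padicValNat 2 (x.val - bnd l k kk i) ∧ rnk N l k kk x < k) := by
  have hN : 0 < N := by have := H.hN; omega
  haveI : NeZero N := ⟨by omega⟩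
  have hm2 := mm_ge2 (l := l)
  have hvlt : x.val < N := ZMod.val_lt x
  have hv0 : 0 < x.val := by
    rcases Nat.eq_zero_or_pos x.val with h | h
    · exfalso; apply hx; rw [← cast_val_eq hN x, h]; simp
    · exact h
  obtain ⟨ha1, ha2, ha3⟩ := arc_spec H hvlt
  rcases eq_or_lt_of_le ha2 with heq | hlt
  · left
    have hi1 : 1 ≤ arcIdx l k kk x.val := by
      rcases Nat.eq_zero_or_pos (arcIdx l k kk x.val) with h | h
      · exfalso; rw [h, bnd_zero] at heq; omega
      · exact h
    have hxc : (↑(bnd l k kk (arcIdx l k kk x.val)) : ZMod N) = x := by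
      rw [heq]; exact cast_val_eq hN x
    refine ⟨arcIdx l k kk x.val, hi1, ha1, heq.symm, ?_⟩
    have hb := rnk_bnd H hi1 ha1
    rw [hxc] at hb
    exact hb
  · right
    have h5 := rnk_int H (i := arcIdx l k kk x.val) (by omega) hlt ha3
    rw [cast_val_eq hN x] at h5
    exact ⟨arcIdx l k kk x.val, by omega, hlt, ha3, h5.1, h5.2⟩

lemma rnk_lt_top (H : Hyp N l k kk) (x : ZMod N) (hx : x ≠ 0) :
    rnk N l k kk x < k + 1 + mm l := by
  rcases classify H x hx with ⟨i, h1, h2, h3, h4⟩ | ⟨i, h1, h2, h3, h4, h5⟩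
  · have := mm_ge2 (l := l); omega
  · have := mm_ge2 (l := l); omega

end CT2

namespace CT3
open CT CT2
variable {N l k : ℕ} {kk : ℕ → ℕ}

/-- edges of the triangulation, as pairs of naturals in `[0, N]` -/
def Rel (l k : ℕ) (kk : ℕ → ℕ) (a c : ℕ) : Prop :=
  (∃ i t j, 1 ≤ i ∧ i ≤ mm l ∧ t ≤ EE l k kk i ∧
      a = bnd l k kk (i - 1) + j * 2 ^ t ∧ c = a + 2 ^ t ∧ c ≤ bnd l k kk i)
  ∨ (a = 0 ∧ ∃ i, 1 ≤ i ∧ i ≤ mm l - 1 ∧ c = bnd l k kk i)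

/-- the chordal cover of the cycle -/
def Gam (N l k : ℕ) (kk : ℕ → ℕ) : SimpleGraph (ZMod N) where
  Adj x y := x ≠ y ∧ ∃ a c : ℕ, Rel l k kk a c ∧ ((↑a = x ∧ ↑c = y) ∨ (↑a = y ∧ ↑c = x))
  symm := ⟨by
    rintro x y ⟨h1, a, c, h2, h3⟩
    exact ⟨h1.symm, a, c, h2, h3.symm⟩⟩
  loopless := ⟨fun x h => h.1 rfl⟩

lemma rel_bounds (H : Hyp N l k kk) {a c : ℕ} (h : Rel l k kk a c) :
    a < c ∧ c ≤ N := by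
  rcases h with ⟨i, t, j, hi1, hi2, ht, ha, hc, hcb⟩ | ⟨ha, i, hi1, hi2, hc⟩
  · have h1 : 1 ≤ 2 ^ t := Nat.one_le_two_pow
    have h2 : bnd l k kk i ≤ N := H.bnd_le_N hi2
    omega
  · have h1 : 0 < bnd l k kk i := bnd_pos hi1
    have h2 : bnd l k kk i < N := bnd_lt_N H (by have := mm_ge2 (l := l); omega)
    omega

lemma adj_succ (H : Hyp N l k kk) (y : ZMod N) : (Gam N l k kk).Adj y (y + 1) := by
  have hN : 0 < N := by have := H.hN; omega
  haveI : NeZero N := ⟨by omega⟩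
  have hm2 := mm_ge2 (l := l)
  have hone : (1 : ZMod N) ≠ 0 := by
    have := cast_ne_zero (N := N) hN (n := 1) one_pos (by have := H.hN; omega)
    simpa using this
  have hne : y ≠ y + 1 := by
    intro h
    nth_rewrite 1 [← add_zero y] at h
    exact hone (add_left_cancel h).symm
  set n := y.val with hn
  have hvlt : n < N := ZMod.val_lt y
  obtain ⟨ha1, ha2, ha3⟩ := arc_spec H hvlt
  set i0 := arcIdx l k kk n with hi0
  refine ⟨hne, n, n + 1, Or.inl ⟨i0 + 1, 0, n - bnd l k kk i0, by omega,
    by have := mm_ge2 (l := l); omega, Nat.zero_le _, ?_, by ring, by omega⟩, Or.inl ⟨?_, ?_⟩⟩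
  · simp only [Nat.add_sub_cancel, pow_zero, mul_one]
    omega
  · rw [hn]; exact cast_val_eq hN y
  · push_cast
    rw [hn, cast_val_eq hN y]

lemma cycle_le (H : Hyp N l k kk) :
    (SimpleGraph.fromRel fun i j : ZMod N => i - j = 1) ≤ Gam N l k kk := by
  intro x y h
  obtain ⟨hne, h | h⟩ := h
  · have hx : x = y + 1 := by rw [← h]; ring
    rw [hx]
    exact ((adj_succ H y).symm)
  · have hy : y = x + 1 := by rw [← h]; ring
    rw [hy]
    exact adj_succ H x

lemma fan_adj (H : Hyp N l k kk) {i : ℕ} (h1 : 1 ≤ i) (h2 : i ≤ mm l - 1) :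
    (Gam N l k kk).Adj 0 ↑(bnd l k kk i) := by
  have hN : 0 < N := by have := H.hN; omega
  refine ⟨?_, 0, bnd l k kk i, Or.inr ⟨rfl, i, h1, h2, rfl⟩, Or.inl ⟨by simp, rfl⟩⟩
  exact (cast_ne_zero hN (bnd_pos h1) (bnd_lt_N H (by have := mm_ge2 (l := l); omega))).symm

lemma padic_mul_pow {j t : ℕ} (hj : j ≠ 0) :
    padicValNat 2 (j * 2 ^ t) = padicValNat 2 j + t := by
  rw [padicValNat.mul hj (pow_ne_zero _ two_ne_zero), padicValNat.prime_pow]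

lemma padic_odd_mul {j t : ℕ} (hj : ¬ 2 ∣ j) : padicValNat 2 (j * 2 ^ t) = t := by
  have hj0 : j ≠ 0 := by rintro rfl; exact hj ⟨0, rfl⟩
  rw [padic_mul_pow hj0, padicValNat.eq_zero_of_not_dvd hj]; omega

lemma padic_even_mul {j t : ℕ} (hj : j ≠ 0) (h2 : 2 ∣ j) :
    t + 1 ≤ padicValNat 2 (j * 2 ^ t) := by
  obtain ⟨j', rfl⟩ := h2
  have hj' : j' ≠ 0 := by rintro rfl; simp at hj
  have he : 2 * j' * 2 ^ t = j' * 2 ^ (t + 1) := by ring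
  rw [he, padic_mul_pow hj']
  omega

/-- decomposition of a positive number as odd times power of two, exponent its valuation -/
lemma padic_decomp {d : ℕ} (hd : d ≠ 0) :
    ∃ q, ¬ 2 ∣ q ∧ d = q * 2 ^ padicValNat 2 d := by
  refine ⟨d / 2 ^ padicValNat 2 d, ?_, ?_⟩
  · exact Nat.not_dvd_ordCompl Nat.prime_two hd
  · exact (Nat.div_mul_cancel pow_padicValNat_dvd).symm

end CT3

namespace CT4
open CT CT2 CT3
variable {N l k : ℕ} {kk : ℕ → ℕ}

lemma arc_unique {i i' n : ℕ} (h1 : bnd l k kk i ≤ n) (h2 : n < bnd l k kk (i + 1))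
    (h1' : bnd l k kk i' ≤ n) (h2' : n < bnd l k kk (i' + 1)) : i = i' := by
  by_contra hne
  rcases Nat.lt_or_ge i i' with h | h
  · have : bnd l k kk (i + 1) ≤ bnd l k kk i' := bnd_strictMono.monotone (by omega)
    omega
  · have : bnd l k kk (i' + 1) ≤ bnd l k kk i := bnd_strictMono.monotone (by omega)
    omega

lemma not_bnd_of_interior {i n j : ℕ} (h1 : bnd l k kk i < n)
    (h2 : n < bnd l k kk (i + 1)) (hq : bnd l k kk j = n) : False := by
  rcases Nat.lt_or_ge j (i + 1) with h | h
  · have : bnd l k kk j ≤ bnd l k kk i := bnd_strictMono.monotone (by omega)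
    omega
  · have : bnd l k kk (i + 1) ≤ bnd l k kk j := bnd_strictMono.monotone h
    omega

lemma decode (H : Hyp N l k kk) {x w : ZMod N} {a c : ℕ} (hx : x ≠ 0)
    (hrel : Rel l k kk a c)
    (hm : ((↑a : ZMod N) = x ∧ (↑c : ZMod N) = w) ∨
          ((↑a : ZMod N) = w ∧ (↑c : ZMod N) = x)) :
    (a = x.val ∧ (↑c : ZMod N) = w) ∨ (c = x.val ∧ c < N ∧ (↑a : ZMod N) = w) := by
  have hN : 0 < N := by have := H.hN; omega
  obtain ⟨hac, hcN⟩ := rel_bounds H hrel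
  rcases hm with ⟨h1, h2⟩ | ⟨h1, h2⟩
  · left
    refine ⟨?_, h2⟩
    have ha : a < N := by omega
    rw [← h1, castval ha]
  · right
    have hcN' : c < N := by
      rcases Nat.lt_or_ge c N with h | h
      · exact h
      · exfalso
        apply hx
        have : c = N := by omega
        rw [← h2, this]
        exact_mod_cast ZMod.natCast_self N
    refine ⟨?_, hcN', h1⟩
    rw [← h2, castval hcN']

/-- rank of the two endpoints of an edge differ -/
lemma rel_rnk_ne (H : Hyp N l k kk) {a c : ℕ} (hrel : Rel l k kk a c)
    (hne : (↑a : ZMod N) ≠ (↑c : ZMod N)) :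
    rnk N l k kk ↑a ≠ rnk N l k kk ↑c := by
  have hN : 0 < N := by have := H.hN; omega
  have hm2 := mm_ge2 (l := l)
  rcases hrel with ⟨i, t, j, hi1, hi2, ht, ha, hc, hcb⟩ | ⟨ha, i, hi1, hi2, hc⟩
  · -- chord in arc i
    have hpow : 1 ≤ 2 ^ t := Nat.one_le_two_pow
    have e1 : i - 1 + 1 = i := by omega
    -- rank of ↑a
    have hA : (j = 0 ∧ i - 1 = 0 ∧ rnk N l k kk ↑a = k + 1 + mm l) ∨
        (j = 0 ∧ 1 ≤ i - 1 ∧ rnk N l k kk ↑a = k + 1 + (i - 1)) ∨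
        (1 ≤ j ∧ rnk N l k kk ↑a = padicValNat 2 (j * 2 ^ t) ∧ rnk N l k kk ↑a < k) := by
      rcases Nat.eq_zero_or_pos j with hj | hj
      · rcases Nat.eq_zero_or_pos (i - 1) with hi0 | hi0
        · left
          refine ⟨hj, hi0, ?_⟩
          have : a = 0 := by rw [ha, hi0, bnd_zero, hj]; ring
          rw [this]
          exact_mod_cast rnk_zero
        · right; left
          refine ⟨hj, hi0, ?_⟩
          have : a = bnd l k kk (i - 1) := by rw [ha, hj]; ring
          rw [this]
          exact rnk_bnd H hi0 (by omega)
      · right; right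
        have hint1 : bnd l k kk (i - 1) < a := by
          have : 1 * 1 ≤ j * 2 ^ t := Nat.mul_le_mul hj hpow
          omega
        have hint2 : a < bnd l k kk (i - 1 + 1) := by rw [e1]; omega
        have := rnk_int H (i := i - 1) (by omega) hint1 hint2
        refine ⟨hj, ?_, this.2⟩
        rw [this.1, ha]
        congr 1
        omega
    -- rank of ↑c
    have hC : (c = bnd l k kk i ∧ i = mm l ∧ rnk N l k kk ↑c = k + 1 + mm l) ∨
        (c = bnd l k kk i ∧ i ≤ mm l - 1 ∧ rnk N l k kk ↑c = k + 1 + i) ∨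
        (c < bnd l k kk i ∧ rnk N l k kk ↑c = padicValNat 2 ((j + 1) * 2 ^ t) ∧
          rnk N l k kk ↑c < k) := by
      rcases eq_or_lt_of_le hcb with hce | hce
      · rcases Nat.lt_or_ge i (mm l) with him | him
        · right; left
          refine ⟨hce, by omega, ?_⟩
          rw [hce]
          exact rnk_bnd H hi1 (by omega)
        · left
          have : i = mm l := by omega
          refine ⟨hce, this, ?_⟩
          rw [hce, this, H.bnd_m]
          rw [show ((N : ℕ) : ZMod N) = 0 from ZMod.natCast_self N]
          exact_mod_cast rnk_zero
      · right; right
        have hint1 : bnd l k kk (i - 1) < c := by omega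
        have hint2 : c < bnd l k kk (i - 1 + 1) := by rw [e1]; omega
        have := rnk_int H (i := i - 1) (by omega) hint1 hint2
        refine ⟨hce, ?_, this.2⟩
        rw [this.1]
        congr 1
        have hr : (j + 1) * 2 ^ t = j * 2 ^ t + 2 ^ t := by ring
        omega
    rcases hA with ⟨hj, hi0, hra⟩ | ⟨hj, hi0, hra⟩ | ⟨hj, hra, hra'⟩ <;>
      rcases hC with ⟨hce, him, hrc⟩ | ⟨hce, him, hrc⟩ | ⟨hce, hrc, hrc'⟩
    · omega
    · omega
    · omega
    · omega
    · omega
    · omega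
    · omega
    · omega
    · -- both interior: parity
      rw [hra, hrc]
      rcases Nat.even_or_odd j with hpar | hpar
      · have h2 : 2 ∣ j := hpar.two_dvd
        have hodd : ¬ 2 ∣ (j + 1) := by omega
        have v1 := padic_even_mul (t := t) (by omega) h2
        have v2 := padic_odd_mul (t := t) hodd
        omega
      · have hodd : ¬ 2 ∣ j := by
          rcases hpar with ⟨r, hr⟩
          omega
        have h2 : 2 ∣ (j + 1) := by
          rcases hpar with ⟨r, hr⟩
          omega
        have v1 := padic_odd_mul (t := t) hodd
        have v2 := padic_even_mul (t := t) (show j + 1 ≠ 0 by omega) h2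
        omega
  · -- fan edge
    have h0 : ((0 : ℕ) : ZMod N) = 0 := by simp
    rw [ha, h0, hc]
    rw [rnk_zero, rnk_bnd H hi1 hi2]
    omega

/-- adjacent vertices have different ranks -/
lemma adj_rnk_ne (H : Hyp N l k kk) {x w : ZMod N} (hadj : (Gam N l k kk).Adj x w) :
    rnk N l k kk x ≠ rnk N l k kk w := by
  obtain ⟨hne, a, c, hrel, hm⟩ := hadj
  rcases hm with ⟨h1, h2⟩ | ⟨h1, h2⟩
  · rw [← h1, ← h2]
    exact rel_rnk_ne H hrel (by rw [h1, h2]; exact hne)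
  · rw [← h1, ← h2]
    exact (rel_rnk_ne H hrel (by rw [h1, h2]; exact hne.symm)).symm

end CT4

namespace CT5
open CT CT2 CT3 CT4
variable {N l k : ℕ} {kk : ℕ → ℕ}

lemma parent_adj (H : Hyp N l k kk) {i n : ℕ} (hi : i < mm l)
    (h1 : bnd l k kk i < n) (h2 : n < bnd l k kk (i + 1)) :
    2 ^ padicValNat 2 (n - bnd l k kk i) ≤ n - bnd l k kk i ∧
    (Gam N l k kk).Adj (↑(n - 2 ^ padicValNat 2 (n - bnd l k kk i)) : ZMod N)
      (↑(n + 2 ^ padicValNat 2 (n - bnd l k kk i))) := by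
  have hN : 0 < N := by have := H.hN; omega
  have hm2 := mm_ge2 (l := l)
  set B := bnd l k kk i with hB
  set d := n - B with hd
  set s := padicValNat 2 d with hs
  set e := EE l k kk (i + 1) with he
  have hd0 : d ≠ 0 := by omega
  obtain ⟨q, hqodd, hqd⟩ := padic_decomp hd0
  rw [← hs] at hqd
  have hq1 : 1 ≤ q := by
    rcases Nat.eq_zero_or_pos q with h | h
    · exfalso; rw [h] at hqd; simp at hqd; exact hd0 hqd
    · exact h
  have hps : 0 < 2 ^ s := Nat.pow_pos (by norm_num)
  have h2s : 2 ^ s ≤ d := by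
    have := Nat.mul_le_mul_right (2 ^ s) hq1
    omega
  have hdlt : d < 2 ^ e := by
    have hth := bnd_succ (l := l) (k := k) (kk := kk) (i := i)
    rw [← he, ← hB] at hth
    omega
  have hselt : s < e := by
    have h3 : 2 ^ s < 2 ^ e := by omega
    exact (Nat.pow_lt_pow_iff_right (by norm_num)).mp h3
  have hek : e ≤ k := H.EE_le (i + 1)
  obtain ⟨r, hr⟩ : ∃ r, q = 2 * r + 1 := ⟨q / 2, by omega⟩
  subst hr
  have hneq : n = B + (2 * r + 1) * 2 ^ s := by omega
  have hsplit : 2 ^ (e - s) * 2 ^ s = 2 ^ e := by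
    rw [← pow_add]
    congr 1
    omega
  have hqlt : 2 * r + 1 < 2 ^ (e - s) := by
    have h4 : (2 * r + 1) * 2 ^ s < 2 ^ (e - s) * 2 ^ s := by omega
    exact Nat.lt_of_mul_lt_mul_right h4
  have hq1le : (2 * r + 1 + 1) * 2 ^ s ≤ 2 ^ e := by
    calc (2 * r + 1 + 1) * 2 ^ s ≤ 2 ^ (e - s) * 2 ^ s := Nat.mul_le_mul_right _ (by omega)
      _ = 2 ^ e := hsplit
  have hrq : (2 * r + 1) * 2 ^ s = 2 * r * 2 ^ s + 2 ^ s := by ring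
  have hrr : r * 2 ^ (s + 1) = 2 * r * 2 ^ s := by ring
  have hq1e : (2 * r + 1 + 1) * 2 ^ s = (2 * r + 1) * 2 ^ s + 2 ^ s := by ring
  have h2s1 : 2 ^ (s + 1) = 2 ^ s + 2 ^ s := by ring
  have hbsucc : bnd l k kk (i + 1) = B + 2 ^ e := by
    rw [bnd_succ, hB, he]
  have hcle : n + 2 ^ s ≤ bnd l k kk (i + 1) := by omega
  have hrel : Rel l k kk (n - 2 ^ s) (n + 2 ^ s) := by
    left
    refine ⟨i + 1, s + 1, r, by omega, by omega, by omega, ?_, by omega, hcle⟩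
    simp only [Nat.add_sub_cancel]
    rw [← hB]
    omega
  have hsk : s + 1 ≤ k := by omega
  have hppow : 2 ^ (s + 1) ≤ 2 ^ k := Nat.pow_le_pow_right (by norm_num) hsk
  have hkN := H.hk
  refine ⟨h2s, ?_, n - 2 ^ s, n + 2 ^ s, hrel, Or.inl ⟨rfl, rfl⟩⟩
  apply cast_ne hN
  · omega
  · omega

lemma later_nbr_bnd (H : Hyp N l k kk) {i : ℕ} (hi1 : 1 ≤ i) (hi2 : i ≤ mm l - 1)
    {x w : ZMod N} (hxv : x.val = bnd l k kk i) (hadj : (Gam N l k kk).Adj x w)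
    (hr : rnk N l k kk x < rnk N l k kk w) :
    w = 0 ∨ w = ↑(bnd l k kk (i + 1)) := by
  have hN : 0 < N := by have := H.hN; omega
  have hm2 := mm_ge2 (l := l)
  have hbp : 0 < bnd l k kk i := bnd_pos hi1
  have hx0 : x ≠ 0 := by
    intro h
    haveI : NeZero N := ⟨by omega⟩
    rw [h, ZMod.val_zero] at hxv
    omega
  have hxc : (↑(bnd l k kk i) : ZMod N) = x := by rw [← hxv]; exact cast_val_eq hN x
  have hrx : rnk N l k kk x = k + 1 + i := by rw [← hxc]; exact rnk_bnd H hi1 hi2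
  obtain ⟨hne, a, c, hrel, hm⟩ := hadj
  rcases decode H hx0 hrel hm with ⟨hax, hcw⟩ | ⟨hcx, hcN, haw⟩
  · -- a = x.val = bnd i, w = ↑c
    rcases hrel with ⟨i', t, j, hi'1, hi'2, ht, ha, hc, hcb⟩ | ⟨ha0, i'', h1'', h2'', hc''⟩
    · have hpow : 1 ≤ 2 ^ t := Nat.one_le_two_pow
      have e1' : i' - 1 + 1 = i' := by omega
      rcases Nat.eq_zero_or_pos j with hj | hj
      · subst hj
        simp only [Nat.zero_mul, Nat.add_zero, zero_mul, add_zero] at ha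
        have hbb : bnd l k kk (i' - 1) = bnd l k kk i := by omega
        have hii : i' - 1 = i := bnd_strictMono.injective hbb
        have hi'e : i' = i + 1 := by omega
        rcases eq_or_lt_of_le hcb with hce | hce
        · right; rw [← hcw, hce, hi'e]
        · exfalso
          have hint1 : bnd l k kk (i' - 1) < c := by omega
          have hint2 : c < bnd l k kk (i' - 1 + 1) := by rw [e1']; exact hce
          have hq := rnk_int H (i := i' - 1) (by omega) hint1 hint2
          rw [hcw] at hq
          omega
      · exfalso
        have hmul : 1 * 1 ≤ j * 2 ^ t := Nat.mul_le_mul hj hpow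
        have hb1 : bnd l k kk (i' - 1) < bnd l k kk i := by omega
        have hb2 : bnd l k kk i < bnd l k kk i' := by omega
        have g1 : i' - 1 < i := bnd_strictMono.lt_iff_lt.mp hb1
        have g2 : i < i' := bnd_strictMono.lt_iff_lt.mp hb2
        omega
    · -- fan : a = 0 but a = bnd i > 0
      exfalso; omega
  · -- c = x.val = bnd i, w = ↑a
    rcases hrel with ⟨i', t, j, hi'1, hi'2, ht, ha, hc, hcb⟩ | ⟨ha0, i'', h1'', h2'', hc''⟩
    · have hpow : 1 ≤ 2 ^ t := Nat.one_le_two_pow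
      have e1' : i' - 1 + 1 = i' := by omega
      rcases Nat.eq_zero_or_pos j with hj | hj
      · subst hj
        simp only [Nat.zero_mul, Nat.add_zero, zero_mul, add_zero] at ha
        rcases Nat.eq_zero_or_pos (i' - 1) with h0 | h0
        · left
          rw [← haw, ha, h0, bnd_zero]
          simp
        · exfalso
          have hrw : rnk N l k kk w = k + 1 + (i' - 1) := by
            rw [← haw, ha]; exact rnk_bnd H h0 (by omega)
          have hlt : i + 1 ≤ i' - 1 := by omega
          have hm1 : bnd l k kk (i + 1) ≤ bnd l k kk (i' - 1) := bnd_strictMono.monotone hlt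
          have hm2' : bnd l k kk i < bnd l k kk (i + 1) := bnd_strictMono (by omega)
          omega
      · exfalso
        have hmul : 1 * 1 ≤ j * 2 ^ t := Nat.mul_le_mul hj hpow
        have hint1 : bnd l k kk (i' - 1) < a := by omega
        have hint2 : a < bnd l k kk (i' - 1 + 1) := by rw [e1']; omega
        have hq := rnk_int H (i := i' - 1) (by omega) hint1 hint2
        rw [haw] at hq
        omega
    · -- fan : w = ↑0 = 0
      left
      rw [← haw, ha0]
      simp

lemma later_nbr_int (H : Hyp N l k kk) {i : ℕ} (hi : i < mm l) {x w : ZMod N}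
    (h1 : bnd l k kk i < x.val) (h2 : x.val < bnd l k kk (i + 1))
    (hadj : (Gam N l k kk).Adj x w) (hr : rnk N l k kk x < rnk N l k kk w) :
    w = x - ↑(2 ^ rnk N l k kk x) ∨ w = x + ↑(2 ^ rnk N l k kk x) := by
  have hN : 0 < N := by have := H.hN; omega
  have hm2 := mm_ge2 (l := l)
  set n := x.val with hn
  have hx0 : x ≠ 0 := by
    intro h
    haveI : NeZero N := ⟨by omega⟩
    rw [hn, h, ZMod.val_zero] at h1  -- n = 0
    omega
  have hxc : (↑n : ZMod N) = x := cast_val_eq hN x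
  have hrx0 := rnk_int H hi h1 h2
  rw [hxc] at hrx0
  obtain ⟨hrx, hrxk⟩ := hrx0
  obtain ⟨hne, a, c, hrel, hm⟩ := hadj
  rcases decode H hx0 hrel hm with ⟨hax, hcw⟩ | ⟨hcx, hcN, haw⟩
  · -- a = n, w = ↑c
    rcases hrel with ⟨i', t, j, hi'1, hi'2, ht, ha, hc, hcb⟩ | ⟨ha0, i'', h1'', h2'', hc''⟩
    · have hpow : 1 ≤ 2 ^ t := Nat.one_le_two_pow
      have e1' : i' - 1 + 1 = i' := by omega
      have hj : 1 ≤ j := by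
        rcases Nat.eq_zero_or_pos j with hj0 | hj0
        · exfalso
          subst hj0
          simp only [Nat.zero_mul, Nat.add_zero, zero_mul, add_zero] at ha
          exact not_bnd_of_interior h1 h2 (show bnd l k kk (i' - 1) = n by omega)
        · exact hj0
      have hmul : 1 * 1 ≤ j * 2 ^ t := Nat.mul_le_mul hj hpow
      have harc : i = i' - 1 := by
        refine arc_unique (i' := i' - 1) (le_of_lt h1) h2 (n := n)
          (show bnd l k kk (i' - 1) ≤ n by omega) ?_
        rw [e1']
        omega
      have hdj : n - bnd l k kk i = j * 2 ^ t := by rw [harc]; omega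
      have hmulf : (j + 1) * 2 ^ t = j * 2 ^ t + 2 ^ t := by ring
      rcases Nat.even_or_odd j with hpar | hpar
      · -- j even  : contradiction
        exfalso
        have h2d : 2 ∣ j := hpar.two_dvd
        have hsge : t + 1 ≤ rnk N l k kk x := by
          rw [hrx, hdj]
          exact padic_even_mul (by omega) h2d
        rcases eq_or_lt_of_le hcb with hce | hce
        · -- c = bnd i' : forces j = 0
          have hbs : bnd l k kk i' = bnd l k kk (i' - 1) + 2 ^ EE l k kk i' := by
            conv_lhs => rw [← e1']
            rw [bnd_succ, e1']
          have hv2 : (j + 1) * 2 ^ t = 2 ^ EE l k kk i' := by omega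
          have hodd1 : ¬ 2 ∣ (j + 1) := by omega
          have hv3 : padicValNat 2 ((j + 1) * 2 ^ t) = t := padic_odd_mul hodd1
          rw [hv2, padicValNat.prime_pow] at hv3
          rw [← hv3] at hv2
          have : j + 1 = 1 := Nat.eq_of_mul_eq_mul_right (m := 2 ^ EE l k kk i')
            (pow_pos (by norm_num) _) (by omega)
          omega
        · -- c interior, rank t < rank x
          have hint1 : bnd l k kk (i' - 1) < c := by omega
          have hint2 : c < bnd l k kk (i' - 1 + 1) := by rw [e1']; exact hce
          have hq := rnk_int H (i := i' - 1) (by omega) hint1 hint2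
          rw [hcw] at hq
          have hcd : c - bnd l k kk (i' - 1) = (j + 1) * 2 ^ t := by omega
          rw [hcd] at hq
          have : padicValNat 2 ((j + 1) * 2 ^ t) = t := padic_odd_mul (by omega)
          omega
      · -- j odd : w = x + 2^s
        right
        have hodd : ¬ 2 ∣ j := by
          rcases hpar with ⟨r, hrr⟩; omega
        have hst : rnk N l k kk x = t := by
          rw [hrx, hdj]
          exact padic_odd_mul hodd
        rw [← hcw, hc, hax, ← hn, hst]
        push_cast
        rw [hxc]
    · -- fan : a = 0 = n, impossible
      exfalso; omega
  · -- c = n, w = ↑a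
    rcases hrel with ⟨i', t, j, hi'1, hi'2, ht, ha, hc, hcb⟩ | ⟨ha0, i'', h1'', h2'', hc''⟩
    · have hpow : 1 ≤ 2 ^ t := Nat.one_le_two_pow
      have e1' : i' - 1 + 1 = i' := by omega
      have hnlt : n < bnd l k kk i' := by
        rcases eq_or_lt_of_le hcb with hce | hce
        · exact absurd (by omega : bnd l k kk i' = n) (fun hq => not_bnd_of_interior h1 h2 hq)
        · omega
      have harc : i = i' - 1 := by
        refine arc_unique (i' := i' - 1) (le_of_lt h1) h2 (n := n)
          (show bnd l k kk (i' - 1) ≤ n by omega) ?_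
        rw [e1']
        exact hnlt
      have hmulf : (j + 1) * 2 ^ t = j * 2 ^ t + 2 ^ t := by ring
      have hdj : n - bnd l k kk i = (j + 1) * 2 ^ t := by rw [harc]; omega
      rcases Nat.even_or_odd j with hpar | hpar
      · -- j even : j+1 odd : w = x - 2^s
        left
        have hodd : ¬ 2 ∣ (j + 1) := by
          have := hpar.two_dvd; omega
        have hst : rnk N l k kk x = t := by
          rw [hrx, hdj]
          exact padic_odd_mul hodd
        have hsub : (↑(n - 2 ^ t) : ZMod N) = ↑n - ↑(2 ^ t : ℕ) := by
          have : 2 ^ t ≤ n := by omega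
          push_cast [Nat.cast_sub this]
          ring
        have hae : a = n - 2 ^ t := by omega
        rw [← haw, hae, hst, hsub, hxc]
        push_cast
        ring
      · -- j odd : a interior with rank t < rank x : contradiction
        exfalso
        have h2d : 2 ∣ (j + 1) := by
          rcases hpar with ⟨r, hrr⟩; omega
        have hj : 1 ≤ j := by
          rcases hpar with ⟨r, hrr⟩; omega
        have hmul : 1 * 1 ≤ j * 2 ^ t := Nat.mul_le_mul hj hpow
        have hsge : t + 1 ≤ rnk N l k kk x := by
          rw [hrx, hdj]
          exact padic_even_mul (by omega) h2d
        have hint1 : bnd l k kk (i' - 1) < a := by omega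
        have hint2 : a < bnd l k kk (i' - 1 + 1) := by rw [e1']; omega
        have hq := rnk_int H (i := i' - 1) (by omega) hint1 hint2
        rw [haw] at hq
        have had : a - bnd l k kk (i' - 1) = j * 2 ^ t := by omega
        rw [had] at hq
        have : padicValNat 2 (j * 2 ^ t) = t := padic_odd_mul (by omega)
        omega
    · -- fan : c = bnd i'' = n interior, impossible
      exact absurd (by omega : bnd l k kk i'' = n) (fun hq => not_bnd_of_interior h1 h2 hq)

end CT5

namespace CT6
open CT CT2 CT3 CT4 CT5
variable {N l k : ℕ} {kk : ℕ → ℕ}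

/-- the target set of frequencies -/
def TT (N l k : ℕ) (kk : ℕ → ℕ) : Finset (ZMod N) :=
  {(0 : ZMod N)} ∪
    (Finset.range k).image (fun i => (((2 : ℤ) ^ i : ℤ) : ZMod N)) ∪
    (Finset.range k).image (fun i => ((-((2 : ℤ) ^ i) : ℤ) : ZMod N)) ∪
    (Finset.Icc 1 (l - 2)).image
      (fun i => ((∑ j ∈ Finset.range i, 2 ^ kk j : ℕ) : ZMod N))

lemma TT_zero : (0 : ZMod N) ∈ TT N l k kk := by
  simp only [TT, Finset.mem_union]
  left; left; left
  exact Finset.mem_singleton_self 0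

lemma TT_pow {s : ℕ} (hs : s < k) : ((2 ^ s : ℕ) : ZMod N) ∈ TT N l k kk := by
  have he : ((2 ^ s : ℕ) : ZMod N) = (((2 : ℤ) ^ s : ℤ) : ZMod N) := by push_cast; ring
  rw [he]
  simp only [TT, Finset.mem_union]
  left; left; right
  exact Finset.mem_image.mpr ⟨s, Finset.mem_range.mpr hs, rfl⟩

lemma TT_neg {s : ℕ} (hs : s < k) : -((2 ^ s : ℕ) : ZMod N) ∈ TT N l k kk := by
  have he : -((2 ^ s : ℕ) : ZMod N) = ((-((2 : ℤ) ^ s) : ℤ) : ZMod N) := by push_cast; ring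
  rw [he]
  simp only [TT, Finset.mem_union]
  left; right
  exact Finset.mem_image.mpr ⟨s, Finset.mem_range.mpr hs, rfl⟩

lemma bnd_partial {i : ℕ} (hl : 2 ≤ l) (hi : i ≤ l - 2) :
    bnd l k kk i = ∑ j ∈ Finset.range i, 2 ^ kk j := by
  unfold bnd
  apply Finset.sum_congr rfl
  intro j hj
  simp only [Finset.mem_range] at hj
  congr 1
  unfold EE
  rw [if_neg (by omega), if_pos (by omega)]
  simp

lemma TT_partial {i : ℕ} (hi1 : 1 ≤ i) (hi2 : i ≤ l - 2) :
    ((bnd l k kk i : ℕ) : ZMod N) ∈ TT N l k kk := by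
  have hl : 2 ≤ l := by omega
  simp only [TT, Finset.mem_union]
  right
  exact Finset.mem_image.mpr ⟨i, Finset.mem_Icc.mpr ⟨hi1, hi2⟩, by rw [bnd_partial hl hi2]⟩

lemma TT_last (H : Hyp N l k kk) (hl : 2 ≤ l) :
    ((bnd l k kk (mm l - 1) : ℕ) : ZMod N) ∈ TT N l k kk := by
  have hm2 := mm_ge2 (l := l)
  obtain ⟨hEm, hEmk⟩ := H.EE_last hl
  have e1 : mm l - 1 + 1 = mm l := by omega
  have h1 : bnd l k kk (mm l - 1) + 2 ^ kk (l - 2) = N := by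
    have := bnd_succ (l := l) (k := k) (kk := kk) (i := mm l - 1)
    rw [e1, H.bnd_m, hEm] at this
    omega
  have hNe : ((N : ℕ) : ZMod N) = 0 := ZMod.natCast_self N
  have h2 : ((bnd l k kk (mm l - 1) : ℕ) : ZMod N) + ((2 ^ kk (l - 2) : ℕ) : ZMod N) = 0 := by
    rw [← Nat.cast_add, h1, hNe]
  have h3 : ((bnd l k kk (mm l - 1) : ℕ) : ZMod N) = -((2 ^ kk (l - 2) : ℕ) : ZMod N) :=
    eq_neg_of_add_eq_zero_left h2
  rw [h3]
  exact TT_neg hEmk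

lemma kk_ge (H : Hyp N l k kk) : ∀ j, j < l → j ≤ kk j := by
  intro j
  induction j with
  | zero => omega
  | succ n ih =>
    intro hj
    have h1 := H.hmono n (n + 1) (by omega) hj
    have h2 := ih (by omega)
    omega

lemma TT_card (H : Hyp N l k kk) : (TT N l k kk).card ≤ 3 * k := by
  have hc1 : (TT N l k kk).card ≤ 1 + k + k + (l - 2) := by
    unfold TT
    calc _ ≤ (({(0 : ZMod N)} : Finset (ZMod N)) ∪
          (Finset.range k).image (fun i => (((2 : ℤ) ^ i : ℤ) : ZMod N)) ∪
          (Finset.range k).image (fun i => ((-((2 : ℤ) ^ i) : ℤ) : ZMod N))).card +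
          ((Finset.Icc 1 (l - 2)).image
            (fun i => ((∑ j ∈ Finset.range i, 2 ^ kk j : ℕ) : ZMod N))).card :=
        Finset.card_union_le _ _
      _ ≤ (({(0 : ZMod N)} : Finset (ZMod N)) ∪
          (Finset.range k).image (fun i => (((2 : ℤ) ^ i : ℤ) : ZMod N))).card +
          ((Finset.range k).image (fun i => ((-((2 : ℤ) ^ i) : ℤ) : ZMod N))).card +
          ((Finset.Icc 1 (l - 2)).image
            (fun i => ((∑ j ∈ Finset.range i, 2 ^ kk j : ℕ) : ZMod N))).card := by
        have := Finset.card_union_le (({(0 : ZMod N)} : Finset (ZMod N)) ∪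
          (Finset.range k).image (fun i => (((2 : ℤ) ^ i : ℤ) : ZMod N)))
          ((Finset.range k).image (fun i => ((-((2 : ℤ) ^ i) : ℤ) : ZMod N)))
        omega
      _ ≤ 1 + k + k + (l - 2) := by
        have h1 := Finset.card_union_le ({(0 : ZMod N)} : Finset (ZMod N))
          ((Finset.range k).image (fun i => (((2 : ℤ) ^ i : ℤ) : ZMod N)))
        have h2 : (({(0 : ZMod N)} : Finset (ZMod N))).card = 1 := Finset.card_singleton _
        have h3 : ((Finset.range k).image (fun i => (((2 : ℤ) ^ i : ℤ) : ZMod N))).card ≤ k := by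
          have := Finset.card_image_le (s := Finset.range k)
            (f := fun i => (((2 : ℤ) ^ i : ℤ) : ZMod N))
          simpa using this
        have h4 : ((Finset.range k).image
            (fun i => ((-((2 : ℤ) ^ i) : ℤ) : ZMod N))).card ≤ k := by
          have := Finset.card_image_le (s := Finset.range k)
            (f := fun i => ((-((2 : ℤ) ^ i) : ℤ) : ZMod N))
          simpa using this
        have h5 : ((Finset.Icc 1 (l - 2)).image
            (fun i => ((∑ j ∈ Finset.range i, 2 ^ kk j : ℕ) : ZMod N))).card ≤ l - 2 := by
          have := Finset.card_image_le (s := Finset.Icc 1 (l - 2))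
            (f := fun i => ((∑ j ∈ Finset.range i, 2 ^ kk j : ℕ) : ZMod N))
          have hcc : (Finset.Icc 1 (l - 2)).card = l - 2 := by
            rw [Nat.card_Icc]
            omega
          omega
        omega
  have hk1 := H.k_pos
  rcases Nat.lt_or_ge l 3 with hl | hl
  · omega
  · have h6 : l - 1 ≤ kk (l - 1) := kk_ge H (l - 1) (by omega)
    have h7 := H.kk_top (by omega)
    omega

end CT6

namespace CT7
open CT CT2 CT3 CT4 CT5 CT6
variable {N l k : ℕ} {kk : ℕ → ℕ}

lemma bnd_succ_cast (H : Hyp N l k kk) {i : ℕ} (hi1 : 1 ≤ i) (hi2 : i ≤ mm l - 1) :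
    (↑(bnd l k kk (i + 1)) : ZMod N) = 0 ∨
    ((Gam N l k kk).Adj 0 ↑(bnd l k kk (i + 1))) := by
  have hm2 := mm_ge2 (l := l)
  rcases Nat.lt_or_ge (i + 1) (mm l) with h | h
  · right; exact fan_adj H (by omega) (by omega)
  · left
    have he : i + 1 = mm l := by omega
    rw [he, H.bnd_m]
    exact ZMod.natCast_self N

lemma clique_step (H : Hyp N l k kk) (v w1 w2 : ZMod N)
    (h1 : (Gam N l k kk).Adj v w1) (h2 : (Gam N l k kk).Adj v w2)
    (r1 : rnk N l k kk v < rnk N l k kk w1) (r2 : rnk N l k kk v < rnk N l k kk w2) :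
    w1 = w2 ∨ (Gam N l k kk).Adj w1 w2 := by
  have hN : 0 < N := by have := H.hN; omega
  have hm2 := mm_ge2 (l := l)
  by_cases hv : v = 0
  · exfalso
    subst hv
    have hw1 : w1 ≠ 0 := (SimpleGraph.Adj.ne h1).symm
    have := rnk_lt_top H w1 hw1
    rw [rnk_zero] at r1
    omega
  · rcases classify H v hv with ⟨i, hi1, hi2, hxv, hrv⟩ | ⟨i, hi, hb1, hb2, hrv, hrvk⟩
    · have g1 := later_nbr_bnd H hi1 hi2 hxv h1 r1
      have g2 := later_nbr_bnd H hi1 hi2 hxv h2 r2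
      rcases g1 with g1 | g1 <;> rcases g2 with g2 | g2
      · left; rw [g1, g2]
      · rcases bnd_succ_cast H hi1 hi2 with h | h
        · left; rw [g1, g2, h]
        · right; rw [g1, g2]; exact h
      · rcases bnd_succ_cast H hi1 hi2 with h | h
        · left; rw [g1, g2, h]
        · right; rw [g1, g2]; exact h.symm
      · left; rw [g1, g2]
    · have g1 := later_nbr_int H hi hb1 hb2 h1 r1
      have g2 := later_nbr_int H hi hb1 hb2 h2 r2
      have hxc : (↑(v.val) : ZMod N) = v := cast_val_eq hN v
      obtain ⟨h2s, hpa⟩ := parent_adj H hi hb1 hb2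
      rw [← hrv] at hpa h2s
      have hs1 : (↑(v.val - 2 ^ rnk N l k kk v) : ZMod N) = v - ↑(2 ^ rnk N l k kk v : ℕ) := by
        rw [Nat.cast_sub (by omega), hxc]
      have hs2 : (↑(v.val + 2 ^ rnk N l k kk v) : ZMod N) = v + ↑(2 ^ rnk N l k kk v : ℕ) := by
        push_cast
        rw [hxc]
      have hcast : ((2 ^ rnk N l k kk v : ℕ) : ZMod N) = (2 : ZMod N) ^ rnk N l k kk v := by
        push_cast; ring
      rw [hs1, hs2, hcast] at hpa
      rcases g1 with g1 | g1 <;> rcases g2 with g2 | g2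
      · left; rw [g1, g2]
      · right; rw [g1, g2]; exact hpa
      · right; rw [g1, g2]; exact hpa.symm
      · left; rw [g1, g2]

lemma clique_translate (H : Hyp N l k kk) (C : Set (ZMod N))
    (hC : (Gam N l k kk).IsClique C) :
    ∃ t : ZMod N, ∀ c ∈ C, t + c ∈ TT N l k kk := by
  have hN : 0 < N := by have := H.hN; omega
  have hm2 := mm_ge2 (l := l)
  haveI : NeZero N := ⟨by omega⟩
  rcases Set.eq_empty_or_nonempty C with hE | hne
  · exact ⟨0, by rw [hE]; simp⟩
  obtain ⟨v, hvC, hvmin⟩ := Set.exists_min_image C (rnk N l k kk) (Set.toFinite C) hne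
  have key : ∀ w ∈ C, w ≠ v → (Gam N l k kk).Adj v w ∧ rnk N l k kk v < rnk N l k kk w := by
    intro w hw hwv
    have hadj : (Gam N l k kk).Adj v w := hC hvC hw (Ne.symm hwv)
    refine ⟨hadj, lt_of_le_of_ne (hvmin w hw) (adj_rnk_ne H hadj)⟩
  by_cases hv0 : v = 0
  · refine ⟨0, ?_⟩
    intro c hc
    have hc0 : c = 0 := by
      by_contra hcn
      have hk := key c hc (by rw [hv0]; exact hcn)
      have := rnk_lt_top H c hcn
      rw [hv0, rnk_zero] at hk
      omega
    rw [hc0]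
    simpa using TT_zero
  · rcases classify H v hv0 with ⟨i, hi1, hi2, hxv, hrv⟩ | ⟨i, hi, hb1, hb2, hrv, hrvk⟩
    · -- v is a boundary vertex
      rcases Nat.lt_or_ge l 2 with hl | hl
      · -- l = 1 : the exceptional case, v = 2^k
        have hl1 : l = 1 := by have := H.l_pos; omega
        have hmm : mm l = 2 := by unfold mm; omega
        have hi' : i = 1 := by omega
        have hb1v : bnd l k kk 1 = 2 ^ k := by
          unfold bnd EE
          rw [Finset.sum_range_one, if_pos (by omega)]
        have hk1 := H.k_pos
        have hkk : (2 : ℕ) ^ k = 2 ^ (k - 1) + 2 ^ (k - 1) := by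
          have hp : 2 ^ (k - 1) * 2 = 2 ^ (k - 1 + 1) := (pow_succ 2 (k - 1)).symm
          have e : k - 1 + 1 = k := by omega
          rw [e] at hp
          omega
        refine ⟨-((2 ^ (k - 1) : ℕ) : ZMod N), ?_⟩
        intro c hc
        have hcv : c = v ∨ c = 0 := by
          by_cases hcv : c = v
          · left; exact hcv
          · right
            obtain ⟨hadj, hrk⟩ := key c hc hcv
            have := later_nbr_bnd H hi1 hi2 hxv hadj hrk
            rcases this with h | h
            · exact h
            · rw [hi', show (1 + 1 : ℕ) = 2 from by norm_num] at h
              rw [h]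
              have hb2N : bnd l k kk 2 = N := by
                have := H.bnd_m
                rwa [hmm] at this
              rw [hb2N]
              exact ZMod.natCast_self N
        rcases hcv with hcv | hcv
        · -- -2^(k-1) + v = 2^(k-1)
          have hvv : ((2 ^ k : ℕ) : ZMod N) = v := by
            have h9 := cast_val_eq hN v
            rwa [hxv, hi', hb1v] at h9
          rw [hcv, ← hvv]
          have h8 : -((2 ^ (k - 1) : ℕ) : ZMod N) + ((2 ^ k : ℕ) : ZMod N)
              = ((2 ^ (k - 1) : ℕ) : ZMod N) := by
            rw [hkk]
            push_cast
            ring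
          rw [h8]
          exact TT_pow (by omega)
        · rw [hcv, add_zero]
          exact TT_neg (by omega)
      · -- l ≥ 2
        have hml : mm l = l := by unfold mm; omega
        refine ⟨0, ?_⟩
        have hmem : ∀ j, 1 ≤ j → j ≤ mm l - 1 → ((bnd l k kk j : ℕ) : ZMod N) ∈ TT N l k kk := by
          intro j hj1 hj2
          rcases Nat.lt_or_ge j (mm l - 1) with hj | hj
          · exact TT_partial hj1 (by omega)
          · have : j = mm l - 1 := by omega
            rw [this]
            exact TT_last H hl
        intro c hc
        rw [zero_add]
        by_cases hcv : c = v
        · have hvx : ((bnd l k kk i : ℕ) : ZMod N) = v := by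
            have h9 := cast_val_eq hN v
            rwa [hxv] at h9
          rw [hcv, ← hvx]
          exact hmem i hi1 hi2
        · obtain ⟨hadj, hrk⟩ := key c hc hcv
          rcases later_nbr_bnd H hi1 hi2 hxv hadj hrk with h | h
          · rw [h]; exact TT_zero
          · rcases Nat.lt_or_ge (i + 1) (mm l) with hip | hip
            · rw [h]; exact hmem (i + 1) (by omega) (by omega)
            · have : i + 1 = mm l := by omega
              rw [h, this, H.bnd_m, ZMod.natCast_self]
              exact TT_zero
    · -- v is interior
      refine ⟨-v, ?_⟩
      intro c hc
      by_cases hcv : c = v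
      · rw [hcv, neg_add_cancel]  -- -v + v = 0
        exact TT_zero
      · obtain ⟨hadj, hrk⟩ := key c hc hcv
        rcases later_nbr_int H hi hb1 hb2 hadj hrk with h | h
        · rw [h]
          have h8 : -v + (v - (2 : ZMod N) ^ rnk N l k kk v)
              = -((2 ^ rnk N l k kk v : ℕ) : ZMod N) := by push_cast; ring
          rw [h8]
          exact TT_neg hrvk
        · rw [h]
          have h8 : -v + (v + (2 : ZMod N) ^ rnk N l k kk v)
              = ((2 ^ rnk N l k kk v : ℕ) : ZMod N) := by push_cast; ring
          rw [h8]
          exact TT_pow hrvk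

end CT7

/-- **Theorem 6: triangulation of the `N`-cycle with `≤ 3 log₂ N` frequencies.** Write
`N = Σ_{j=1}^l 2^{k_j}` with `k_1 < … < k_l` (binary expansion; here `kk j = k_{j+1}`)
and let `k` be the largest integer with `2^k < N`. Then the set `T`, the image mod `N`
of `{0} ∪ {±2^i : 0 ≤ i ≤ k−1} ∪ {Σ_{j=1}^i 2^{k_j} : 1 ≤ i ≤ l−2}`, has at most
`3 log₂ N` elements, and the cycle graph `C_N` has a chordal cover all of whose maximal
cliques have a translate contained in `T`. -/
theorem cycle_triangulation
    (N : ℕ) (hN : 2 < N)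
    (l : ℕ) (kk : ℕ → ℕ)
    (hmono : ∀ i j, i < j → j < l → kk i < kk j)
    (hsum : N = ∑ j ∈ Finset.range l, 2 ^ kk j)
    (k : ℕ) (hk : 2 ^ k < N) (hkmax : ∀ k', 2 ^ k' < N → k' ≤ k) :
    let T : Finset (ZMod N) :=
      {(0 : ZMod N)} ∪
        (Finset.range k).image (fun i => (((2 : ℤ) ^ i : ℤ) : ZMod N)) ∪
        (Finset.range k).image (fun i => ((-((2 : ℤ) ^ i) : ℤ) : ZMod N)) ∪
        (Finset.Icc 1 (l - 2)).image
          (fun i => ((∑ j ∈ Finset.range i, 2 ^ kk j : ℕ) : ZMod N))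
    (T.card : ℝ) ≤ 3 * Real.logb 2 (N : ℝ) ∧
    ∃ Γ : SimpleGraph (ZMod N),
      IsChordal Γ ∧
      (SimpleGraph.fromRel fun i j : ZMod N => i - j = 1) ≤ Γ ∧
      ∀ C : Set (ZMod N), Γ.IsClique C →
        (∀ C', Γ.IsClique C' → C ⊆ C' → C' = C) →
        ∃ t : ZMod N, (fun c => t + c) '' C ⊆ ↑T := by
  intro T
  have H : CT.Hyp N l k kk := ⟨hN, hmono, hsum, hk, hkmax⟩
  have hT : T = CT6.TT N l k kk := rfl
  constructor
  · -- cardinality bound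
    have h1 : (CT6.TT N l k kk).card ≤ 3 * k := CT6.TT_card H
    have h2 : (k : ℝ) ≤ Real.logb 2 (N : ℝ) := by
      have hK : ((2 : ℝ)) ^ k ≤ (N : ℝ) := by exact_mod_cast le_of_lt hk
      have h3 : Real.logb 2 ((2 : ℝ) ^ k) ≤ Real.logb 2 (N : ℝ) :=
        Real.logb_le_logb_of_le (by norm_num) (by positivity) hK
      rwa [Real.logb_pow, Real.logb_self_eq_one (by norm_num), mul_one] at h3
    have h4 : (T.card : ℝ) ≤ ((3 * k : ℕ) : ℝ) := by
      exact_mod_cast hT ▸ h1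
    push_cast at h4
    linarith
  · refine ⟨CT3.Gam N l k kk, ?_, CT3.cycle_le H, ?_⟩
    · exact peo_chordal _ (CT2.rnk N l k kk) (fun x y h => CT4.adj_rnk_ne H h)
        (CT7.clique_step H)
    · intro C hC _hmax
      obtain ⟨t, ht⟩ := CT7.clique_translate H C hC
      refine ⟨t, ?_⟩
      rintro z ⟨c, hc, rfl⟩
      exact ht c hc
end
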